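/- arXiv:2605.31484 — 7 statements merged into one kernel-verified Lean document; each statement's English description precedes it below -/
import Mathlib

section
/- Suppose gradient descent with step size γ > 0 on a twice continuously differentiable function f converges to a minimizer θ* at which the Hessian H has largest eigenvalue L and smallest nonzero eigenvalue μ > 0, and the iterates eventually stay in the affine subspace θ* + ker(H)^⊥ shifted appropriately. Then limsup_{t→∞} (f(θ_{t+1}) − f(θ*))/(f(θ_t) − f(θ*)) ≤ max((1 − γμ)², (1 − γL)²). -/
open Matrix Filter
open scoped RealInnerProductSpace

theorem grad_inner {D : ℕ} (f : EuclideanSpace ℝ (Fin D) → ℝ)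
    (x w : EuclideanSpace ℝ (Fin D)) : ⟪gradient f x, w⟫ = fderiv ℝ f x w := by
  rw [gradient]
  exact InnerProductSpace.toDual_symm_apply

theorem quad_bounds {D : ℕ} (T : EuclideanSpace ℝ (Fin D) →L[ℝ] EuclideanSpace ℝ (Fin D))
    (hsym : ∀ x y : EuclideanSpace ℝ (Fin D), ⟪T x, y⟫ = ⟪x, T y⟫)
    (μ L γ : ℝ) (hμpos : 0 < μ) (hγ : 0 < γ)
    (hev : ∀ c : ℝ, ∀ w, w ≠ 0 → T w = c • w → c = 0 ∨ (μ ≤ c ∧ c ≤ L)) :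
    (∀ v, 0 ≤ ⟪T v, v⟫) ∧
    (∀ v, (∀ w, T w = 0 → ⟪v, w⟫ = 0) → μ * ‖v‖^2 ≤ ⟪T v, v⟫) ∧
    (∀ v, ⟪T (v - γ • T v), v - γ • T v⟫
      ≤ max ((1-γ*μ)^2) ((1-γ*L)^2) * ⟪T v, v⟫) := by
  have hn : Module.finrank ℝ (EuclideanSpace ℝ (Fin D)) = D := finrank_euclideanSpace_fin
  have hsym' : (T : EuclideanSpace ℝ (Fin D) →ₗ[ℝ] EuclideanSpace ℝ (Fin D)).IsSymmetric :=
    fun x y => hsym x y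
  set b := hsym'.eigenvectorBasis hn with hb
  set lam := hsym'.eigenvalues hn with hlam
  have hTb : ∀ i, T (b i) = lam i • b i := fun i => hsym'.apply_eigenvectorBasis hn i
  have hlam01 : ∀ i, lam i = 0 ∨ (μ ≤ lam i ∧ lam i ≤ L) := by
    intro i
    exact hev (lam i) (b i) (b.toBasis.ne_zero i) (hTb i)
  have hTbi : ∀ (v : EuclideanSpace ℝ (Fin D)) i, ⟪T v, b i⟫ = lam i * ⟪b i, v⟫ := by
    intro v i
    rw [hsym v (b i), hTb i, real_inner_smul_right, real_inner_comm]
  have hq : ∀ v, ⟪T v, v⟫ = ∑ i, lam i * ⟪b i, v⟫ ^ 2 := by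
    intro v
    rw [← b.sum_inner_mul_inner (T v) v]
    refine Finset.sum_congr rfl fun i _ => ?_
    rw [hTbi v i]; ring
  have hnorm : ∀ v : EuclideanSpace ℝ (Fin D), ‖v‖^2 = ∑ i, ⟪b i, v⟫ ^ 2 := by
    intro v
    have := b.sum_inner_mul_inner v v
    rw [← real_inner_self_eq_norm_sq, ← this]
    refine Finset.sum_congr rfl fun i _ => ?_
    rw [real_inner_comm v (b i)]; ring
  refine ⟨?_, ?_, ?_⟩
  · intro v
    rw [hq v]
    refine Finset.sum_nonneg fun i _ => ?_
    rcases hlam01 i with h | h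
    · simp [h]
    · have := sq_nonneg (⟪b i, v⟫)
      nlinarith
  · intro v hv
    rw [hq v, hnorm v, Finset.mul_sum]
    refine Finset.sum_le_sum fun i _ => ?_
    rcases hlam01 i with h | h
    · have : ⟪b i, v⟫ = 0 := by
        rw [real_inner_comm]; exact hv (b i) (by rw [hTb i, h, zero_smul])
      simp [this]
    · nlinarith [sq_nonneg (⟪b i, v⟫)]
  · intro v
    have hbs : ∀ i, ⟪b i, v - γ • T v⟫ = (1 - γ * lam i) * ⟪b i, v⟫ := by
      intro i
      rw [inner_sub_right, real_inner_smul_right, ← real_inner_comm (b i) (T v), hTbi v i]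
      ring
    rw [hq, hq, Finset.mul_sum]
    refine Finset.sum_le_sum fun i _ => ?_
    rw [hbs i]
    rcases hlam01 i with h | h
    · simp [h]
    · have hgl : γ * lam i ≤ γ * L := mul_le_mul_of_nonneg_left h.2 hγ.le
      have hgm : γ * μ ≤ γ * lam i := mul_le_mul_of_nonneg_left h.1 hγ.le
      have hρ : (1 - γ * lam i)^2 ≤ max ((1-γ*μ)^2) ((1-γ*L)^2) := by
        rcases le_total (1 - γ * lam i) 0 with h0 | h0
        · refine le_max_of_le_right ?_
          nlinarith [mul_nonneg (sub_nonneg.2 hgl)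
            (by linarith : (0:ℝ) ≤ (γ * lam i - 1) + (γ * L - 1))]
        · refine le_max_of_le_left ?_
          nlinarith [mul_nonneg (sub_nonneg.2 hgm)
            (by linarith : (0:ℝ) ≤ (1 - γ * μ) + (1 - γ * lam i))]
      nlinarith [sq_nonneg (⟪b i, v⟫), hμpos.le, h.1,
        mul_nonneg (mul_nonneg (by linarith : (0:ℝ) ≤ lam i) (sq_nonneg (⟪b i, v⟫)))
          (sub_nonneg.2 hρ)]

theorem taylor2 {D : ℕ} (f : EuclideanSpace ℝ (Fin D) → ℝ) (hf : ContDiff ℝ 2 f)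
    (θs : EuclideanSpace ℝ (Fin D)) (T : EuclideanSpace ℝ (Fin D) →L[ℝ] EuclideanSpace ℝ (Fin D))
    (hT : HasFDerivAt (gradient f) T θs) (hg0 : gradient f θs = 0)
    (hsym : ∀ u v : EuclideanSpace ℝ (Fin D), ⟪T u, v⟫ = ⟪u, T v⟫) {ε : ℝ} (hε : 0 < ε) :
    ∀ᶠ v in nhds (0 : EuclideanSpace ℝ (Fin D)),
      |f (θs + v) - f θs - (1/2) * ⟪T v, v⟫| ≤ ε * ‖v‖^2 := by
  have hfd : Differentiable ℝ f := hf.differentiable (by norm_num)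
  -- the gradient error is little o
  have hlo : (fun v => gradient f (θs + v) - T v) =o[nhds 0] (fun v => v) := by
    have := hasFDerivAt_iff_isLittleO_nhds_zero.mp hT
    simpa [hg0] using this
  rw [Asymptotics.isLittleO_iff] at hlo
  have hball := Metric.eventually_nhds_iff.mp (hlo hε)
  obtain ⟨r, hr, hrb⟩ := hball
  rw [Metric.eventually_nhds_iff]
  refine ⟨r, hr, fun v hv => ?_⟩
  -- derivative of the auxiliary function
  set φ : EuclideanSpace ℝ (Fin D) → ℝ := fun u => f (θs + u) - (1/2) * ⟪T u, u⟫ with hφ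
  have hder : ∀ u : EuclideanSpace ℝ (Fin D),
      HasFDerivAt φ (innerSL ℝ (gradient f (θs + u) - T u)) u := by
    intro u
    have h1 : HasFDerivAt (fun w : EuclideanSpace ℝ (Fin D) => f (θs + w))
        (innerSL ℝ (gradient f (θs + u))) u := by
      have hcomp : HasFDerivAt (fun w : EuclideanSpace ℝ (Fin D) => f (θs + w))
          (fderiv ℝ f (θs + u)) u :=
        (hfd (θs + u)).hasFDerivAt.comp u ((hasFDerivAt_id u).const_add θs)
      have e : innerSL ℝ (gradient f (θs + u)) = fderiv ℝ f (θs + u) :=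
        ContinuousLinearMap.ext fun w => by rw [innerSL_apply_apply]; exact grad_inner f (θs + u) w
      rw [e]; exact hcomp
    have h2 : HasFDerivAt (fun w : EuclideanSpace ℝ (Fin D) => (1/2 : ℝ) * ⟪T w, w⟫)
        (innerSL ℝ (T u)) u := by
      have hq : HasFDerivAt (fun w : EuclideanSpace ℝ (Fin D) => ⟪T w, w⟫)
          ((innerSL ℝ (T u)) + ((innerSL ℝ u).comp T)) u := by
        have := (T.hasFDerivAt (x := u)).inner ℝ (hasFDerivAt_id u)
        refine this.congr_fderiv ?_
        refine ContinuousLinearMap.ext fun w => ?_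
        simp only [ContinuousLinearMap.add_apply, ContinuousLinearMap.coe_comp',
          Function.comp_apply, innerSL_apply_apply, ContinuousLinearMap.comp_apply,
          ContinuousLinearMap.prod_apply, fderivInnerCLM_apply, ContinuousLinearMap.coe_id',
          id_eq]
        linarith [hsym u w, real_inner_comm (T u) w, real_inner_comm u (T w)]
      have := hq.const_mul (1/2 : ℝ)
      refine this.congr_fderiv ?_
      refine ContinuousLinearMap.ext fun w => ?_
      simp only [ContinuousLinearMap.smul_apply, ContinuousLinearMap.add_apply,
        ContinuousLinearMap.coe_comp', Function.comp_apply, innerSL_apply_apply, smul_eq_mul]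
      rw [← hsym u w]
      ring
    have := h1.sub h2
    rw [map_sub]; exact this
  -- mean value on the closed ball
  have key : ‖φ v - φ 0‖ ≤ ε * ‖v‖ * ‖v - 0‖ := by
    refine Convex.norm_image_sub_le_of_norm_hasFDerivWithin_le
      (f := φ) (f' := fun u => innerSL ℝ (gradient f (θs + u) - T u))
      (fun x hx => (hder x).hasFDerivWithinAt) (fun x hx => ?_)
      (convex_closedBall (0 : EuclideanSpace ℝ (Fin D)) ‖v‖)
      (Metric.mem_closedBall_self (norm_nonneg v)) ?_ |>.trans_eq rfl
    · rw [innerSL_apply_norm]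
      have hx' : ‖x‖ ≤ ‖v‖ := by simpa [Metric.mem_closedBall] using hx
      have : dist x 0 < r := by
        rw [dist_zero_right]
        calc ‖x‖ ≤ ‖v‖ := hx'
        _ = dist v 0 := (dist_zero_right v).symm
        _ < r := hv
      have := hrb this
      calc ‖gradient f (θs + x) - T x‖ ≤ ε * ‖x‖ := by simpa using this
      _ ≤ ε * ‖v‖ := by nlinarith
    · simpa [Metric.mem_closedBall, dist_zero_right] using le_refl ‖v‖
  have hφ0 : φ 0 = f θs := by simp [hφ]
  rw [hφ0, sub_zero] at key
  calc |f (θs + v) - f θs - (1/2) * ⟪T v, v⟫| = ‖φ v - f θs‖ := by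
        rw [Real.norm_eq_abs]; congr 1; simp only [hφ]; ring
  _ ≤ ε * ‖v‖ * ‖v‖ := key
  _ = ε * ‖v‖^2 := by ring

set_option maxHeartbeats 2000000 in
/-- Gradient descent with step `γ` converging to a minimizer `θ*` with Hessian `H`
having largest eigenvalue `L` and smallest nonzero eigenvalue `μ > 0`, with iterates
eventually in `θ* + ker(H)ᗮ`: the asymptotic loss ratio is at most
`max((1-γμ)², (1-γL)²)`. -/
theorem stmt1 {D : ℕ} (f : EuclideanSpace ℝ (Fin D) → ℝ) (hf : ContDiff ℝ 2 f)
    (γ : ℝ) (hγ : 0 < γ) (θ : ℕ → EuclideanSpace ℝ (Fin D))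
    (hstep : ∀ t, θ (t + 1) = θ t - γ • gradient f (θ t))
    (θs : EuclideanSpace ℝ (Fin D))
    (hconv : Tendsto θ atTop (nhds θs))
    (hmin : ∀ x, f θs ≤ f x)
    (H : Matrix (Fin D) (Fin D) ℝ)
    (hHess : ∀ u v : EuclideanSpace ℝ (Fin D),
      fderiv ℝ (fun x => fderiv ℝ f x v) θs u
        = dotProduct (H.mulVec fun i => u i) (fun i => v i))
    (L μ : ℝ)
    (hL : IsGreatest {c : ℝ | ∃ w : Fin D → ℝ, w ≠ 0 ∧ H.mulVec w = c • w} L)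
    (hμ : IsLeast {c : ℝ | c ≠ 0 ∧ ∃ w : Fin D → ℝ, w ≠ 0 ∧ H.mulVec w = c • w} μ)
    (hμpos : 0 < μ)
    (hker : ∀ᶠ t in atTop, ∀ v : Fin D → ℝ, H.mulVec v = 0 →
      dotProduct (fun i => (θ t - θs) i) v = 0) :
    limsup (fun t => (f (θ (t + 1)) - f θs) / (f (θ t) - f θs)) atTop
      ≤ max ((1 - γ * μ) ^ 2) ((1 - γ * L) ^ 2) := by
  have hfd : Differentiable ℝ f := hf.differentiable (by norm_num)
  have hf1 : ContDiff ℝ 1 (fderiv ℝ f) := hf.fderiv_right (by norm_num)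
  have hg1 : ContDiff ℝ 1 (gradient f) := by
    have : gradient f = fun x =>
        (InnerProductSpace.toDual ℝ (EuclideanSpace ℝ (Fin D))).symm (fderiv ℝ f x) :=
      funext fun x => by rw [gradient]
    rw [this]
    exact (InnerProductSpace.toDual ℝ (EuclideanSpace ℝ (Fin D))).symm.contDiff.comp hf1
  have hgd : DifferentiableAt ℝ (gradient f) θs := (hg1.differentiable one_ne_zero) θs
  set T := fderiv ℝ (gradient f) θs with hTdef
  have hgT : HasFDerivAt (gradient f) T θs := hgd.hasFDerivAt
  -- identify T with H
  have hTH : ∀ u v : EuclideanSpace ℝ (Fin D),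
      ⟪T u, v⟫ = dotProduct (H.mulVec fun i => u i) (fun i => v i) := by
    intro u v
    have h1 : (fun x => fderiv ℝ f x v) = fun x => ⟪gradient f x, v⟫ :=
      funext fun x => (grad_inner f x v).symm
    calc ⟪T u, v⟫ = fderiv ℝ (fun x => ⟪gradient f x, v⟫) θs u := by
          rw [fderiv_inner_apply ℝ hgd (differentiableAt_const v) u]
          simp [hTdef]
    _ = _ := by rw [← h1]; exact hHess u v
  have hTH' : ∀ u : EuclideanSpace ℝ (Fin D), ∀ i,
      T u i = H.mulVec (fun j => u j) i := by
    intro u i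
    have h := hTH u (EuclideanSpace.single i 1)
    rw [EuclideanSpace.inner_single_right] at h
    simp only [_root_.map_one, one_mul, RCLike.star_def, conj_trivial] at h
    rw [h]
    simp [dotProduct, EuclideanSpace.single_apply, mul_ite, mul_comm]
  -- symmetry
  have hsymH : ∀ u v : EuclideanSpace ℝ (Fin D), ⟪T u, v⟫ = ⟪u, T v⟫ := by
    have hs := (hf.contDiffAt (x := θs)).isSymmSndFDerivAt (by simp)
    have e : ∀ a b : EuclideanSpace ℝ (Fin D),
        fderiv ℝ (fun x => fderiv ℝ f x b) θs a = fderiv ℝ (fderiv ℝ f) θs a b := by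
      intro a b
      rw [fderiv_clm_apply ((hf1.differentiable one_ne_zero) θs) (differentiableAt_const b)]
      simp
    intro u v
    calc ⟪T u, v⟫ = fderiv ℝ (fun x => fderiv ℝ f x v) θs u := by rw [hTH u v, ← hHess u v]
    _ = fderiv ℝ (fun x => fderiv ℝ f x u) θs v := by rw [e u v, e v u]; exact hs u v
    _ = ⟪T v, u⟫ := by rw [hHess v u, ← hTH v u]
    _ = ⟪u, T v⟫ := real_inner_comm _ _
  -- gradient vanishes at minima
  have hgrad0 : ∀ x, f x = f θs → gradient f x = 0 := by
    intro x hx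
    have hloc : IsLocalMin f x :=
      Filter.Eventually.of_forall (fun y => by rw [hx]; exact hmin y)
    rw [gradient, hloc.fderiv_eq_zero, map_zero]
  have hg0 : gradient f θs = 0 := hgrad0 θs rfl
  -- eigenvalue bounds for T
  have hev : ∀ c : ℝ, ∀ w : EuclideanSpace ℝ (Fin D), w ≠ 0 → T w = c • w →
      c = 0 ∨ (μ ≤ c ∧ c ≤ L) := by
    intro c w hw hTw
    have hmul : H.mulVec (fun i => w i) = c • (fun i => w i) := by
      funext i
      rw [← hTH' w i, hTw]; rfl
    have hw' : (fun i => w i) ≠ 0 := fun h => hw (by ext i; exact congrFun h i)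
    by_cases hc : c = 0
    · exact Or.inl hc
    · exact Or.inr ⟨hμ.2 ⟨hc, _, hw', hmul⟩, hL.2 ⟨_, hw', hmul⟩⟩
  obtain ⟨hq0, hq1, hq2⟩ := quad_bounds T hsymH μ L γ hμpos hγ hev
  have hker' : ∀ᶠ t in atTop, ∀ w : EuclideanSpace ℝ (Fin D), T w = 0 → ⟪θ t - θs, w⟫ = 0 := by
    filter_upwards [hker] with t ht
    intro w hw
    have h0 : H.mulVec (fun i => w i) = 0 := by
      funext i
      rw [← hTH' w i, hw]; rfl
    have h2 := ht (fun i => w i) h0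
    simpa [PiLp.inner_apply, RCLike.inner_apply, conj_trivial, dotProduct, mul_comm] using h2
  set ρ2 := max ((1 - γ * μ) ^ 2) ((1 - γ * L) ^ 2) with hρ2def
  clear_value ρ2
  have hρ2nn : (0:ℝ) ≤ ρ2 := by rw [hρ2def]; exact le_max_of_le_left (sq_nonneg _)
  have hratio_nn : ∀ t, 0 ≤ (f (θ (t + 1)) - f θs) / (f (θ t) - f θs) := fun t =>
    div_nonneg (by linarith [hmin (θ (t + 1))]) (by linarith [hmin (θ t)])
  refine le_of_forall_pos_le_add fun ε hε => ?_
  refine limsup_le_of_le (isCoboundedUnder_le_of_le atTop (x := 0) hratio_nn) ?_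
  set A := ‖T‖ with hA
  clear_value A
  have hA0 : (0:ℝ) ≤ A := hA ▸ norm_nonneg T
  set C := 1 + γ * A + γ with hC
  clear_value C
  have hC1 : (1:ℝ) ≤ C := by rw [hC]; linarith [mul_nonneg hγ.le hA0, hγ]
  have hC0 : (0:ℝ) < C := by linarith
  set c1 := 2 * A * γ * (1 + γ * A) + A * γ ^ 2 with hc1
  clear_value c1
  have hc1nn : (0:ℝ) ≤ c1 := by
    rw [hc1]
    have h1 : 0 ≤ A * γ := mul_nonneg hA0 hγ.le
    linarith [mul_nonneg h1 (mul_nonneg hγ.le hA0), mul_nonneg hA0 (sq_nonneg γ)]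
  set c2 := c1 / 2 + C ^ 2 with hc2
  clear_value c2
  have hc2pos : (0:ℝ) < c2 := by rw [hc2]; linarith [hc1nn, hC1, sq_nonneg (C - 1)]
  have hden : (0:ℝ) < c2 + ρ2 + ε := by linarith
  set ε' := min (min 1 (μ / 4)) (ε * μ / (2 * (c2 + ρ2 + ε))) with hε'def
  clear_value ε'
  have hquot : (0:ℝ) < ε * μ / (2 * (c2 + ρ2 + ε)) :=
    div_pos (mul_pos hε hμpos) (by linarith)
  have hε'pos : 0 < ε' := by rw [hε'def]; exact lt_min (lt_min one_pos (by linarith)) hquot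
  have hε'1 : ε' ≤ 1 := by rw [hε'def]; exact le_trans (min_le_left _ _) (min_le_left _ _)
  have hε'μ : ε' ≤ μ / 4 := by rw [hε'def]; exact le_trans (min_le_left _ _) (min_le_right _ _)
  have hle' : ε' ≤ ε * μ / (2 * (c2 + ρ2 + ε)) := by rw [hε'def]; exact min_le_right _ _
  have hkey : ε' * (c2 + ρ2 + ε) ≤ ε * μ / 2 := by
    calc ε' * (c2 + ρ2 + ε) ≤ (ε * μ / (2 * (c2 + ρ2 + ε))) * (c2 + ρ2 + ε) :=
          mul_le_mul_of_nonneg_right hle' (by linarith)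
    _ = ε * μ / 2 := by field_simp
  have htay := taylor2 f hf θs T hgT hg0 hsymH hε'pos
  obtain ⟨r1, hr1, htay'⟩ := Metric.eventually_nhds_iff.mp htay
  have hlo : (fun v => gradient f (θs + v) - T v)
      =o[nhds 0] (fun v : EuclideanSpace ℝ (Fin D) => v) := by
    have := hasFDerivAt_iff_isLittleO_nhds_zero.mp hgT
    simpa [hg0] using this
  obtain ⟨r2, hr2, hglo⟩ :=
    Metric.eventually_nhds_iff.mp ((Asymptotics.isLittleO_iff.mp hlo) hε'pos)
  set r := min (min r1 r2) (r1 / C) with hrdef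
  clear_value r
  have hrpos : 0 < r := by rw [hrdef]; exact lt_min (lt_min hr1 hr2) (div_pos hr1 hC0)
  have hvsmall : ∀ᶠ t in atTop, ‖θ t - θs‖ < r := by
    have h0 : Tendsto (fun t => θ t - θs) atTop (nhds 0) := by
      simpa using hconv.sub (tendsto_const_nhds (x := θs))
    filter_upwards [Metric.tendsto_nhds.mp h0 r hrpos] with t ht
    simpa [dist_zero_right] using ht
  filter_upwards [hvsmall, hker'] with t hts htk
  by_cases hzero : f (θ t) = f θs
  · have hsame : θ (t + 1) = θ t := by
      rw [hstep t, hgrad0 (θ t) hzero, smul_zero, sub_zero]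
    rw [hsame, hzero, sub_self, div_zero]
    linarith
  · have hDpos : 0 < f (θ t) - f θs :=
      lt_of_le_of_ne (by linarith [hmin (θ t)]) (fun h => hzero (by linarith))
    set v := θ t - θs with hvdef
    clear_value v
    have hθt : θs + v = θ t := by rw [hvdef]; exact add_sub_cancel θs (θ t)
    set n := ‖v‖ with hndef
    clear_value n
    have hn0 : (0:ℝ) ≤ n := by rw [hndef]; exact norm_nonneg v
    have hvr : n < r := hts
    rw [hrdef] at hvr
    have hvr1 : n < r1 := hvr.trans_le ((min_le_left _ _).trans (min_le_left _ _))
    have hvr2 : n < r2 := hvr.trans_le ((min_le_left _ _).trans (min_le_right _ _))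
    have hvrC : n < r1 / C := hvr.trans_le (min_le_right _ _)
    set q := (⟪T v, v⟫ : ℝ) with hqdef
    clear_value q
    have hperp : ∀ w, T w = 0 → ⟪v, w⟫ = 0 := htk
    have hμq : μ * n ^ 2 ≤ q := by rw [hqdef, hndef]; exact hq1 v hperp
    have hq0' : (0:ℝ) ≤ q := by rw [hqdef]; exact hq0 v
    have ht2 : |f (θs + v) - f θs - 1 / 2 * q| ≤ ε' * n ^ 2 := by
      rw [hqdef, hndef]
      exact htay' (by rw [dist_zero_right, ← hndef]; exact hvr1)
    have hgv : ‖gradient f (θs + v) - T v‖ ≤ ε' * n := by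
      rw [hndef]
      exact hglo (by rw [dist_zero_right, ← hndef]; exact hvr2)
    set v' := v - γ • gradient f (θs + v) with hv'def
    clear_value v'
    have hθ1 : θ (t + 1) = θs + v' := by
      rw [hstep t, ← hθt, hv'def]
      exact add_sub_assoc θs v (γ • gradient f (θs + v))
    set w := v - γ • T v with hwdef
    clear_value w
    set e := v' - w with hedef
    clear_value e
    have he : e = -(γ • (gradient f (θs + v) - T v)) := by
      rw [hedef, hv'def, hwdef, smul_sub]; abel
    have hne : ‖e‖ ≤ γ * ε' * n := by
      rw [he, norm_neg, norm_smul, Real.norm_eq_abs, abs_of_pos hγ]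
      calc γ * ‖gradient f (θs + v) - T v‖ ≤ γ * (ε' * n) :=
            mul_le_mul_of_nonneg_left hgv hγ.le
      _ = γ * ε' * n := by ring
    have hne0 : (0:ℝ) ≤ ‖e‖ := norm_nonneg e
    have hTv : ‖T v‖ ≤ A * n := by rw [hA, hndef]; exact T.le_opNorm v
    have hTwA : ‖T w‖ ≤ A * ‖w‖ := by rw [hA]; exact T.le_opNorm w
    have hTeA : ‖T e‖ ≤ A * ‖e‖ := by rw [hA]; exact T.le_opNorm e
    have hnw : ‖w‖ ≤ (1 + γ * A) * n := by
      rw [hwdef]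
      calc ‖v - γ • T v‖ ≤ ‖v‖ + ‖γ • T v‖ := norm_sub_le _ _
      _ = n + γ * ‖T v‖ := by
            rw [norm_smul, Real.norm_eq_abs, abs_of_pos hγ, hndef]
      _ ≤ n + γ * (A * n) := by linarith [mul_le_mul_of_nonneg_left hTv hγ.le]
      _ = (1 + γ * A) * n := by ring
    have hnv' : ‖v'‖ ≤ C * n := by
      have hv'we : v' = w + e := by rw [hedef]; exact (add_sub_cancel w v').symm
      rw [hv'we]
      calc ‖w + e‖ ≤ ‖w‖ + ‖e‖ := norm_add_le _ _
      _ ≤ (1 + γ * A) * n + γ * ε' * n := by linarith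
      _ ≤ C * n := by
            rw [hC]
            have h := mul_le_mul_of_nonneg_right hε'1 (mul_nonneg hγ.le hn0)
            linarith [h]
    have hv'r1 : ‖v'‖ < r1 := by
      calc ‖v'‖ ≤ C * n := hnv'
      _ < C * (r1 / C) := mul_lt_mul_of_pos_left hvrC hC0
      _ = r1 := by rw [mul_comm]; exact div_mul_cancel₀ r1 (ne_of_gt hC0)
    have ht3 : |f (θs + v') - f θs - 1 / 2 * ⟪T v', v'⟫| ≤ ε' * ‖v'‖ ^ 2 :=
      htay' (by rw [dist_zero_right]; exact hv'r1)
    have hqw : ⟪T w, w⟫ ≤ ρ2 * q := by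
      rw [hqdef, hwdef]
      exact hq2 v
    have hsplit : (⟪T v', v'⟫ : ℝ) = ⟪T w, w⟫ + 2 * ⟪T w, e⟫ + ⟪T e, e⟫ := by
      have hv'we : v' = w + e := by rw [hedef]; exact (add_sub_cancel w v').symm
      rw [hv'we, map_add, inner_add_left, inner_add_right, inner_add_right]
      linear_combination hsymH e w - real_inner_comm e (T w)
    have hTwn : ‖T w‖ ≤ A * ((1 + γ * A) * n) := by
      calc ‖T w‖ ≤ A * ‖w‖ := hTwA
      _ ≤ A * ((1 + γ * A) * n) := mul_le_mul_of_nonneg_left hnw hA0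
    have hcross : |(⟪T w, e⟫ : ℝ)| ≤ (A * ((1 + γ * A) * n)) * (γ * ε' * n) := by
      calc |(⟪T w, e⟫ : ℝ)| ≤ ‖T w‖ * ‖e‖ := abs_real_inner_le_norm _ _
      _ ≤ _ := by
            have h1γA : (0:ℝ) ≤ 1 + γ * A := by linarith [mul_nonneg hγ.le hA0]
            exact mul_le_mul hTwn hne hne0 (mul_nonneg hA0 (mul_nonneg h1γA hn0))
    have h1 : (γ * ε' * n) ^ 2 ≤ γ ^ 2 * ε' * n ^ 2 := by
      have h := mul_le_mul_of_nonneg_left hε'1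
        (mul_nonneg (mul_nonneg (sq_nonneg γ) (sq_nonneg n)) hε'pos.le)
      linarith [h]
    have hqe : (⟪T e, e⟫ : ℝ) ≤ A * (γ ^ 2 * ε' * n ^ 2) := by
      calc (⟪T e, e⟫ : ℝ) ≤ |(⟪T e, e⟫ : ℝ)| := le_abs_self _
      _ ≤ ‖T e‖ * ‖e‖ := abs_real_inner_le_norm _ _
      _ ≤ A * ‖e‖ * ‖e‖ := mul_le_mul_of_nonneg_right hTeA hne0
      _ ≤ A * (γ * ε' * n) ^ 2 := by
            have h := mul_le_mul_of_nonneg_left (mul_self_le_mul_self hne0 hne) hA0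
            linarith [h]
      _ ≤ A * (γ ^ 2 * ε' * n ^ 2) := mul_le_mul_of_nonneg_left h1 hA0
    have hqv' : (⟪T v', v'⟫ : ℝ) ≤ ρ2 * q + c1 * ε' * n ^ 2 := by
      rw [hsplit, hc1]
      have habs1 := le_abs_self (⟪T w, e⟫ : ℝ)
      have habs2 := neg_abs_le (⟪T w, e⟫ : ℝ)
      linarith [hcross, hqw, hqe, habs1, habs2]
    have hNum : f (θs + v') - f θs ≤ 1 / 2 * (ρ2 * q) + c2 * ε' * n ^ 2 := by
      have hub := (abs_le.mp ht3).2
      have h2 : ‖v'‖ ^ 2 ≤ C ^ 2 * n ^ 2 := by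
        have h := mul_self_le_mul_self (norm_nonneg v') hnv'
        linarith [h]
      rw [hc2]
      linarith [hqv', mul_le_mul_of_nonneg_left h2 hε'pos.le]
    have hDen : 1 / 2 * q - ε' * n ^ 2 ≤ f (θs + v) - f θs := by
      have := (abs_le.mp ht2).1
      linarith
    have hfin : 1 / 2 * (ρ2 * q) + c2 * ε' * n ^ 2 ≤ (ρ2 + ε) * (1 / 2 * q - ε' * n ^ 2) := by
      linarith [mul_le_mul_of_nonneg_right hkey (sq_nonneg n),
        mul_le_mul_of_nonneg_left hμq (le_of_lt (half_pos hε))]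
    have hDpos' : 0 < f (θs + v) - f θs := by rw [hθt]; exact hDpos
    rw [hθ1, ← hθt, div_le_iff₀ hDpos']
    calc f (θs + v') - f θs ≤ 1 / 2 * (ρ2 * q) + c2 * ε' * n ^ 2 := hNum
    _ ≤ (ρ2 + ε) * (1 / 2 * q - ε' * n ^ 2) := hfin
    _ ≤ (ρ2 + ε) * (f (θs + v) - f θs) := mul_le_mul_of_nonneg_left hDen (by linarith)
end

section
/- Let A ∈ ℝ^{a×r}, B ∈ ℝ^{r×b} both of rank r, and M = [B ⊗ I_a; I_b ⊗ Aᵀ] ∈ ℝ^{r(a+b)×ab}. Then the kernel of Mᵀ equals { vec(AR, −RB) : R ∈ ℝ^{r×r} } and has dimension r². -/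
open Matrix Kronecker

/-- Vectorization of a pair `(D, E) ∈ ℝ^{a×r} × ℝ^{r×b}`, in the convention under which
`Mᵀ vec(D,E)` corresponds to `DB + AE` for `M = [B⊗I_a; I_b⊗Aᵀ]`. -/
def vecp {a b r : ℕ} (D : Matrix (Fin a) (Fin r) ℝ) (E : Matrix (Fin r) (Fin b) ℝ) :
    (Fin r × Fin a) ⊕ (Fin b × Fin r) → ℝ :=
  Sum.elim (fun p => D p.2 p.1) (fun q => E q.2 q.1)

lemma isUnit_of_rank_eq {r : ℕ} (N : Matrix (Fin r) (Fin r) ℝ) (h : N.rank = r) : IsUnit N := by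
  rw [← Matrix.mulVec_surjective_iff_isUnit]
  have : LinearMap.range N.mulVecLin = ⊤ := by
    apply Submodule.eq_top_of_finrank_eq
    rw [← Matrix.rank, h, Module.finrank_pi]
    simp
  exact LinearMap.range_eq_top.mp this

lemma key_mulVec {a b r : ℕ}
    (A : Matrix (Fin a) (Fin r) ℝ) (B : Matrix (Fin r) (Fin b) ℝ)
    (D : Matrix (Fin a) (Fin r) ℝ) (E : Matrix (Fin r) (Fin b) ℝ) :
    (Matrix.fromRows (B ⊗ₖ (1 : Matrix (Fin a) (Fin a) ℝ))
          ((1 : Matrix (Fin b) (Fin b) ℝ) ⊗ₖ Aᵀ))ᵀ.mulVec (vecp D E)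
      = fun ji => (D * B + A * E) ji.2 ji.1 := by
  funext ⟨j, i⟩
  simp [Matrix.mulVec, dotProduct, Fintype.sum_sum_type, Fintype.sum_prod_type,
    vecp, Matrix.kroneckerMap, Matrix.one_apply, Matrix.mul_apply,
    Finset.sum_ite_eq, Finset.sum_ite_eq', mul_comm, mul_ite, ite_mul, Finset.mul_sum]

/-- For full-rank `A, B`, the kernel of `Mᵀ` (for `M = [B⊗I_a; I_b⊗Aᵀ]`) is exactly
`{vec(AR, -RB) : R ∈ ℝ^{r×r}}` and has dimension `r²`. -/
theorem stmt4 {a b r : ℕ}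
    (A : Matrix (Fin a) (Fin r) ℝ) (B : Matrix (Fin r) (Fin b) ℝ)
    (hA : A.rank = r) (hB : B.rank = r) :
    (∀ v : (Fin r × Fin a) ⊕ (Fin b × Fin r) → ℝ,
      (Matrix.fromRows (B ⊗ₖ (1 : Matrix (Fin a) (Fin a) ℝ))
          ((1 : Matrix (Fin b) (Fin b) ℝ) ⊗ₖ Aᵀ))ᵀ.mulVec v = 0
        ↔ ∃ R : Matrix (Fin r) (Fin r) ℝ, v = vecp (A * R) (-(R * B))) ∧
    Module.finrank ℝ
        (LinearMap.ker (Matrix.mulVecLin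
          (Matrix.fromRows (B ⊗ₖ (1 : Matrix (Fin a) (Fin a) ℝ))
            ((1 : Matrix (Fin b) (Fin b) ℝ) ⊗ₖ Aᵀ))ᵀ))
      = r ^ 2 := by
  have hAu : IsUnit (Aᵀ * A) :=
    isUnit_of_rank_eq _ (by rw [Matrix.rank_transpose_mul_self, hA])
  have hBu : IsUnit (B * Bᵀ) :=
    isUnit_of_rank_eq _ (by rw [Matrix.rank_self_mul_transpose, hB])
  set Ainv : Matrix (Fin r) (Fin a) ℝ := (Aᵀ * A)⁻¹ * Aᵀ with hAinvdef
  have hAl : Ainv * A = 1 := by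
    rw [hAinvdef, Matrix.mul_assoc,
      Matrix.nonsing_inv_mul _ ((Matrix.isUnit_iff_isUnit_det _).mp hAu)]
  set Binv : Matrix (Fin b) (Fin r) ℝ := Bᵀ * (B * Bᵀ)⁻¹ with hBinvdef
  have hBr : B * Binv = 1 := by
    rw [hBinvdef, ← Matrix.mul_assoc,
      Matrix.mul_nonsing_inv _ ((Matrix.isUnit_iff_isUnit_det _).mp hBu)]
  have hAinj : ∀ {n : ℕ} (X Y : Matrix (Fin r) (Fin n) ℝ), A * X = A * Y → X = Y := by
    intro n X Y h
    have h2 := congrArg (fun M => Ainv * M) h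
    simpa [← Matrix.mul_assoc, hAl] using h2
  have hiff : ∀ (D : Matrix (Fin a) (Fin r) ℝ) (E : Matrix (Fin r) (Fin b) ℝ),
      (Matrix.fromRows (B ⊗ₖ (1 : Matrix (Fin a) (Fin a) ℝ))
          ((1 : Matrix (Fin b) (Fin b) ℝ) ⊗ₖ Aᵀ))ᵀ.mulVec (vecp D E) = 0
        ↔ D * B + A * E = 0 := by
    intro D E
    rw [key_mulVec A B D E]
    constructor
    · intro h
      ext i j
      simpa using congrFun h (j, i)
    · intro h
      funext ji
      simpa using congrFun (congrFun h ji.2) ji.1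
  have main : ∀ v : (Fin r × Fin a) ⊕ (Fin b × Fin r) → ℝ,
      (Matrix.fromRows (B ⊗ₖ (1 : Matrix (Fin a) (Fin a) ℝ))
          ((1 : Matrix (Fin b) (Fin b) ℝ) ⊗ₖ Aᵀ))ᵀ.mulVec v = 0
        ↔ ∃ R : Matrix (Fin r) (Fin r) ℝ, v = vecp (A * R) (-(R * B)) := by
    intro v
    set D : Matrix (Fin a) (Fin r) ℝ := Matrix.of fun i k => v (Sum.inl (k, i)) with hD
    set E : Matrix (Fin r) (Fin b) ℝ := Matrix.of fun k j => v (Sum.inr (j, k)) with hE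
    have hv : v = vecp D E := by
      funext s
      rcases s with ⟨k, i⟩ | ⟨j, k⟩ <;> rfl
    rw [hv, hiff D E]
    constructor
    · intro hDE
      have h1 : D * B = -(A * E) := eq_neg_of_add_eq_zero_left hDE
      refine ⟨-(E * Binv), ?_⟩
      have hDeq : D = A * -(E * Binv) := by
        have : D = D * B * Binv := by rw [Matrix.mul_assoc, hBr, Matrix.mul_one]
        rw [this, h1]
        simp [Matrix.neg_mul, Matrix.mul_neg, Matrix.mul_assoc]
      have hEeq : E = -(-(E * Binv) * B) := by
        have h2 : A * (E + -(E * Binv) * B) = 0 := by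
          rw [Matrix.mul_add, ← Matrix.mul_assoc, ← hDeq, add_comm]
          exact hDE
        have h3 : E + -(E * Binv) * B = 0 := by
          have := hAinj _ 0 (by simpa using h2)
          simpa using this
        exact eq_neg_of_add_eq_zero_left h3
      rw [← hDeq, ← hEeq]
    · rintro ⟨R, hR⟩
      have hDR : D = A * R := by
        ext i k
        exact congrFun hR (Sum.inl (k, i))
      have hER : E = -(R * B) := by
        ext k j
        exact congrFun hR (Sum.inr (j, k))
      rw [hDR, hER]
      simp [Matrix.mul_neg, Matrix.mul_assoc]
  refine ⟨main, ?_⟩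
  let φ : Matrix (Fin r) (Fin r) ℝ →ₗ[ℝ] ((Fin r × Fin a) ⊕ (Fin b × Fin r) → ℝ) :=
    { toFun := fun R => vecp (A * R) (-(R * B))
      map_add' := by
        intro R S
        funext s
        rcases s with ⟨k, i⟩ | ⟨j, k⟩ <;>
          simp [vecp, Matrix.mul_add, Matrix.add_mul] <;> ring
      map_smul' := by
        intro c R
        funext s
        rcases s with ⟨k, i⟩ | ⟨j, k⟩ <;>
          simp [vecp, Matrix.mul_smul, Matrix.smul_mul] }
  have hrange : LinearMap.range φ
      = LinearMap.ker (Matrix.mulVecLin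
          (Matrix.fromRows (B ⊗ₖ (1 : Matrix (Fin a) (Fin a) ℝ))
            ((1 : Matrix (Fin b) (Fin b) ℝ) ⊗ₖ Aᵀ))ᵀ) := by
    ext v
    rw [LinearMap.mem_ker, Matrix.mulVecLin_apply, LinearMap.mem_range]
    rw [show (Matrix.fromRows (B ⊗ₖ (1 : Matrix (Fin a) (Fin a) ℝ))
            ((1 : Matrix (Fin b) (Fin b) ℝ) ⊗ₖ Aᵀ))ᵀ *ᵥ v
        = (Matrix.fromRows (B ⊗ₖ (1 : Matrix (Fin a) (Fin a) ℝ))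
            ((1 : Matrix (Fin b) (Fin b) ℝ) ⊗ₖ Aᵀ))ᵀ.mulVec v from rfl, main v]
    constructor
    · rintro ⟨R, hR⟩
      exact ⟨R, hR.symm⟩
    · rintro ⟨R, hR⟩
      exact ⟨R, hR.symm⟩
  have hinj : Function.Injective φ := by
    intro R S h
    apply hAinj
    ext i k
    exact congrFun h (Sum.inl (k, i))
  rw [← hrange, LinearMap.finrank_range_of_inj hinj, Module.finrank_matrix]
  simp [pow_two]
end

section
/- Let Z ∈ ℝ^{a×b} have rank r and (A,B) a global minimizer of f(A,B) = (1/2)‖Z − AB‖_F² satisfying the balance condition AᵀA = BBᵀ. Then σ_i(A)² = σ_i(B)² = σ_i(Z) for all 1 ≤ i ≤ r, and the condition number (σ_1(A)² + σ_1(B)²)/min(σ_r(A)², σ_r(B)²) equals 2σ_1(Z)/σ_r(Z). -/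
open Matrix

/-- The `i`-th largest singular value (0-indexed) of a real matrix `M`: the square root of
the `i`-th largest eigenvalue of `MᴴM`. -/
noncomputable def sv {m n : ℕ} (M : Matrix (Fin m) (Fin n) ℝ) (i : Fin n) : ℝ :=
  Real.sqrt
    (((Matrix.isHermitian_conjTranspose_mul_self M).eigenvalues ∘
      ⇑(Tuple.sort (Matrix.isHermitian_conjTranspose_mul_self M).eigenvalues)) i.rev)

/-- LoRA loss `f(A,B) = (1/2) ‖Z - AB‖_F²`. -/
noncomputable def floss {a b r : ℕ} (Z : Matrix (Fin a) (Fin b) ℝ)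
    (A : Matrix (Fin a) (Fin r) ℝ) (B : Matrix (Fin r) (Fin b) ℝ) : ℝ :=
  (1 / 2) * ∑ i, ∑ j, (Z i j - (A * B) i j) ^ 2

section Aux

open Polynomial

private lemma myroots_prod (n : ℕ) (μ : Fin n → ℝ) :
    (∏ i, (X - C (μ i))).roots = ↑(List.ofFn μ) := by
  have : ∏ i, (X - C (μ i)) = ((↑(List.ofFn μ) : Multiset ℝ).map fun a => X - C a).prod := by
    simp [Multiset.map_coe, Multiset.prod_coe, List.map_ofFn, List.prod_ofFn, Function.comp]
  rw [this, roots_multiset_prod_X_sub_C]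

private lemma eval_prod' (n : ℕ) (μ : Fin n → ℝ) (x : ℝ) :
    eval x (∏ i, (X - C (μ i))) = ∏ i, (x - μ i) := by rw [eval_prod]; simp

private lemma monic_prod' (n : ℕ) (μ : Fin n → ℝ) : (∏ i, (X - C (μ i))).Monic :=
  monic_prod_of_monic _ _ fun i _ => monic_X_sub_C (μ i)

private lemma multiset_of_eval {n : ℕ} (μ ν : Fin n → ℝ)
    (h : ∀ x : ℝ, ∏ i, (x - μ i) = ∏ i, (x - ν i)) :
    (↑(List.ofFn μ) : Multiset ℝ) = ↑(List.ofFn ν) := by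
  rw [← myroots_prod n μ, ← myroots_prod n ν]
  congr 1
  exact Polynomial.funext fun x => by rw [eval_prod', eval_prod']; exact h x

private lemma multiset_pad {b r : ℕ} (μ : Fin b → ℝ) (ν : Fin r → ℝ)
    (h : ∀ x : ℝ, x ≠ 0 → ∏ i, (x - μ i) = x ^ (b - r) * ∏ i, (x - ν i)) :
    (↑(List.ofFn μ) : Multiset ℝ) = Multiset.replicate (b - r) 0 + (↑(List.ofFn ν) : Multiset ℝ) := by
  have hp : ∏ i, (X - C (μ i)) = X ^ (b - r) * ∏ i, (X - C (ν i)) := by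
    apply eq_of_infinite_eval_eq
    exact Set.Infinite.mono (fun x hx => by
      simp only [Set.mem_setOf_eq, eval_mul, eval_pow, eval_X, eval_prod', eval_prod']
      exact h x hx) ((Set.finite_singleton (0:ℝ)).infinite_compl)
  have h2 := congrArg roots hp
  rw [myroots_prod, Polynomial.roots_mul, roots_pow, roots_X, myroots_prod] at h2
  · simpa [Multiset.nsmul_singleton] using h2
  · exact mul_ne_zero (pow_ne_zero _ X_ne_zero) (monic_prod' r ν).ne_zero

private lemma ofFn_comp_cast {α : Type*} {m n : ℕ} (h : n = m) (f : Fin m → α) :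
    List.ofFn (f ∘ Fin.cast h) = List.ofFn f := by subst h; rfl

private lemma sort_eq_self_of_monotone {n : ℕ} {ρ : Fin n → ℝ} (h : Monotone ρ) :
    ρ ∘ Tuple.sort ρ = ρ := by
  have := (Tuple.comp_sort_eq_comp_iff_monotone (f := ρ) (σ := Equiv.refl _)).mpr
    (by simpa using h)
  simpa using this.symm

private lemma mono_eq_of_perm {n : ℕ} {μ ν : Fin n → ℝ} (hμ : Monotone μ) (hν : Monotone ν)
    (h : (↑(List.ofFn μ) : Multiset ℝ) = ↑(List.ofFn ν)) : μ = ν :=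
  List.ofFn_injective ((Multiset.coe_eq_coe.mp h).eq_of_sortedLE
    hμ.sortedLE_ofFn hν.sortedLE_ofFn)

private lemma sort_perm {n : ℕ} (μ : Fin n → ℝ) :
    (↑(List.ofFn (μ ∘ Tuple.sort μ)) : Multiset ℝ) = ↑(List.ofFn μ) :=
  Multiset.coe_eq_coe.mpr ((Tuple.sort μ).ofFn_comp_perm μ)

private lemma sort_eq_of_perm {n : ℕ} {μ ν : Fin n → ℝ}
    (h : (↑(List.ofFn μ) : Multiset ℝ) = ↑(List.ofFn ν)) :
    μ ∘ Tuple.sort μ = ν ∘ Tuple.sort ν :=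
  mono_eq_of_perm (Tuple.monotone_sort μ) (Tuple.monotone_sort ν)
    (by rw [sort_perm, sort_perm, h])

private lemma sort_sq {n : ℕ} {μ : Fin n → ℝ} (hμ : ∀ i, 0 ≤ μ i) :
    (fun i => μ i ^ 2) ∘ Tuple.sort (fun i => μ i ^ 2)
      = fun i => ((μ ∘ Tuple.sort μ) i) ^ 2 := by
  have h1 : Monotone ((fun i => μ i ^ 2) ∘ Tuple.sort (fun i => μ i ^ 2)) :=
    Tuple.monotone_sort _
  have h2 : Monotone ((fun i => μ i ^ 2) ∘ Tuple.sort μ) := by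
    intro i j hij
    have := Tuple.monotone_sort μ hij
    simp only [Function.comp_apply]
    exact pow_le_pow_left₀ (hμ _) this 2
  have := Tuple.unique_monotone (f := fun i => μ i ^ 2)
    (σ := Tuple.sort (fun i => μ i ^ 2)) (τ := Tuple.sort μ) h1 h2
  rw [this]; rfl

private lemma sort_pad {b r : ℕ} (hrb : r ≤ b) {μ : Fin b → ℝ} {ν : Fin r → ℝ}
    (hν : ∀ k, 0 < ν k)
    (h : (↑(List.ofFn μ) : Multiset ℝ) = Multiset.replicate (b - r) 0 + (↑(List.ofFn ν) : Multiset ℝ))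
    (k : Fin r) (j : Fin b) (hj : (j : ℕ) = b - r + (k : ℕ)) :
    (μ ∘ Tuple.sort μ) j = (ν ∘ Tuple.sort ν) k := by
  have hb : b = (b - r) + r := by omega
  set sν := ν ∘ Tuple.sort ν with hsν
  have hsνpos : ∀ k, 0 < sν k := fun k => hν _
  have hsνmono : Monotone sν := Tuple.monotone_sort ν
  set ρ : Fin b → ℝ := (Fin.append (fun _ : Fin (b - r) => (0:ℝ)) sν) ∘ Fin.cast hb with hρ
  have hval0 : ∀ (i : Fin b), (i:ℕ) < b - r → ρ i = 0 := by
    intro i hi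
    have he : Fin.cast hb i = Fin.castAdd r ⟨i, hi⟩ := by ext; simp
    rw [hρ, Function.comp_apply, he, Fin.append_left]
  have hval1 : ∀ (i : Fin b) (h : b - r ≤ (i:ℕ)), ρ i = sν ⟨i - (b-r), by omega⟩ := by
    intro i hi
    have he : Fin.cast hb i = Fin.natAdd (b-r) ⟨i - (b-r), by omega⟩ := by
      ext; simp; omega
    rw [hρ, Function.comp_apply, he, Fin.append_right]
  have hρm : Monotone ρ := by
    intro i i' hii
    have hii' : (i:ℕ) ≤ (i':ℕ) := hii
    rcases lt_or_ge ((i : ℕ)) (b - r) with hi | hi <;>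
      rcases lt_or_ge ((i' : ℕ)) (b - r) with hi' | hi'
    · rw [hval0 i hi, hval0 i' hi']
    · rw [hval0 i hi, hval1 i' hi']; exact le_of_lt (hsνpos _)
    · omega
    · rw [hval1 i hi, hval1 i' hi']
      exact hsνmono (by simp only [Fin.mk_le_mk]; omega)
  have hρperm : (↑(List.ofFn ρ) : Multiset ℝ) = ↑(List.ofFn μ) := by
    rw [hρ, ofFn_comp_cast, List.ofFn_add, h]
    have hcl : ∀ i : Fin (b - r), Fin.append (fun _ : Fin (b - r) => (0:ℝ)) sν
        (Fin.castLE (Nat.le_add_right (b - r) r) i) = 0 := fun i => Fin.append_left _ _ i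
    simp only [hcl, Fin.append_left, Fin.append_right, List.ofFn_const]
    rw [← Multiset.coe_add, Multiset.coe_replicate]
    congr 1
    exact sort_perm ν
  have hμρ : μ ∘ Tuple.sort μ = ρ := by
    rw [sort_eq_of_perm hρperm.symm, sort_eq_self_of_monotone hρm]
  rw [hμρ, hval1 j (by omega)]
  congr 1
  ext
  simp
  omega

private lemma det_conj_diag {n : ℕ} (U : Matrix.unitaryGroup (Fin n) ℝ) (e : Fin n → ℝ) (x : ℝ) :
    det (x • (1 : Matrix (Fin n) (Fin n) ℝ) - (U : Matrix (Fin n) (Fin n) ℝ) * diagonal e * star (U : Matrix (Fin n) (Fin n) ℝ)) = ∏ i, (x - e i) := by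
  have hU1 : (U : Matrix (Fin n) (Fin n) ℝ) * star (U : Matrix (Fin n) (Fin n) ℝ) = 1 :=
    Unitary.mul_star_self_of_mem U.2
  have key : x • (1 : Matrix (Fin n) (Fin n) ℝ) - (U : Matrix (Fin n) (Fin n) ℝ) * diagonal e * star (U : Matrix (Fin n) (Fin n) ℝ)
      = (U : Matrix (Fin n) (Fin n) ℝ) * (diagonal (fun i => x - e i)) * star (U : Matrix (Fin n) (Fin n) ℝ) := by
    have hd : diagonal (fun i => x - e i) = x • (1 : Matrix (Fin n) (Fin n) ℝ) - diagonal e := by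
      ext i j
      rcases eq_or_ne i j with h | h <;>
        simp [Matrix.diagonal_apply, Matrix.one_apply, h]
    have hs : (U : Matrix (Fin n) (Fin n) ℝ) * (x • (1 : Matrix (Fin n) (Fin n) ℝ)) * star (U : Matrix (Fin n) (Fin n) ℝ) = x • (1 : Matrix (Fin n) (Fin n) ℝ) := by
      rw [Matrix.mul_smul, Matrix.smul_mul, Matrix.mul_one, hU1]
    rw [hd, Matrix.mul_sub, Matrix.sub_mul, hs]
  have hdet : det (U : Matrix (Fin n) (Fin n) ℝ) * det (star (U : Matrix (Fin n) (Fin n) ℝ)) = 1 := by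
    rw [← det_mul, hU1, det_one]
  rw [key, det_mul, det_mul]
  calc det (U : Matrix (Fin n) (Fin n) ℝ) * det (diagonal fun i => x - e i) * det (star (U : Matrix (Fin n) (Fin n) ℝ))
      = det (diagonal fun i => x - e i) * (det (U : Matrix (Fin n) (Fin n) ℝ) * det (star (U : Matrix (Fin n) (Fin n) ℝ))) := by ring
    _ = ∏ i, (x - e i) := by rw [hdet, mul_one, det_diagonal]

private lemma spec {n : ℕ} {M : Matrix (Fin n) (Fin n) ℝ} (hM : M.IsHermitian) :
    M = (hM.eigenvectorUnitary : Matrix (Fin n) (Fin n) ℝ) * diagonal hM.eigenvalues * star (hM.eigenvectorUnitary : Matrix (Fin n) (Fin n) ℝ) := by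
  have := hM.spectral_theorem
  simpa using this

private lemma det_spec {n : ℕ} {M : Matrix (Fin n) (Fin n) ℝ} (hM : M.IsHermitian) (x : ℝ) :
    det (x • (1 : Matrix (Fin n) (Fin n) ℝ) - M) = ∏ i, (x - hM.eigenvalues i) := by
  conv_lhs => rw [spec hM]
  exact det_conj_diag _ _ x

private lemma det_spec_sq {n : ℕ} {M : Matrix (Fin n) (Fin n) ℝ} (hM : M.IsHermitian) (x : ℝ) :
    det (x • (1 : Matrix (Fin n) (Fin n) ℝ) - M * M) = ∏ i, (x - hM.eigenvalues i ^ 2) := by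
  have hU2 : star (hM.eigenvectorUnitary : Matrix (Fin n) (Fin n) ℝ) * (hM.eigenvectorUnitary : Matrix (Fin n) (Fin n) ℝ) = 1 :=
    Unitary.star_mul_self_of_mem hM.eigenvectorUnitary.2
  set Uc := (hM.eigenvectorUnitary : Matrix (Fin n) (Fin n) ℝ) with hUc
  have hsq : M * M = Uc * diagonal (fun i => hM.eigenvalues i ^ 2) * star Uc := by
    conv_lhs => rw [spec hM]
    simp only [Matrix.mul_assoc]
    rw [← Matrix.mul_assoc (star Uc) Uc, hU2, Matrix.one_mul,
      ← Matrix.mul_assoc (diagonal hM.eigenvalues) (diagonal hM.eigenvalues),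
      diagonal_mul_diagonal]
    congr 2
    funext i
    ring_nf
  rw [hsq]
  exact det_conj_diag _ _ x

private lemma WA {r b : ℕ} (hrb : r ≤ b) (B : Matrix (Fin r) (Fin b) ℝ) (x : ℝ) (hx : x ≠ 0) :
    det (x • (1 : Matrix (Fin b) (Fin b) ℝ) - Bᵀ * B)
      = x ^ (b - r) * det (x • (1 : Matrix (Fin r) (Fin r) ℝ) - B * Bᵀ) := by
  have key : ∀ (m : ℕ) (M : Matrix (Fin m) (Fin m) ℝ),
      x • (1 : Matrix (Fin m) (Fin m) ℝ) - M = x • ((1 : Matrix (Fin m) (Fin m) ℝ) - x⁻¹ • M) := by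
    intro m M
    rw [smul_sub, smul_smul, mul_inv_cancel₀ hx, one_smul]
  rw [key b (Bᵀ * B), key r (B * Bᵀ), det_smul, det_smul]
  have h1 : (1 : Matrix (Fin b) (Fin b) ℝ) - x⁻¹ • (Bᵀ * B)
      = 1 - (x⁻¹ • Bᵀ) * B := by rw [Matrix.smul_mul]
  have h2 : (1 : Matrix (Fin r) (Fin r) ℝ) - x⁻¹ • (B * Bᵀ)
      = 1 - B * (x⁻¹ • Bᵀ) := by rw [Matrix.mul_smul]
  rw [h1, h2, det_one_sub_mul_comm]
  rw [Fintype.card_fin, Fintype.card_fin, ← mul_assoc, ← pow_add]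
  congr 2
  omega

private lemma exists_factor {a b r : ℕ} (Z : Matrix (Fin a) (Fin b) ℝ) (hZ : Z.rank = r) :
    ∃ (A : Matrix (Fin a) (Fin r) ℝ) (B : Matrix (Fin r) (Fin b) ℝ), A * B = Z := by
  have hfin : Module.finrank ℝ (LinearMap.range Z.mulVecLin) = r := hZ
  let e : Module.Basis (Fin r) ℝ (LinearMap.range Z.mulVecLin) := Module.finBasisOfFinrankEq ℝ _ hfin
  have hmem : ∀ j, (fun i => Z i j) ∈ LinearMap.range Z.mulVecLin := by
    intro j
    refine ⟨Pi.single j 1, ?_⟩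
    simp [Matrix.mulVecLin_apply, Matrix.mulVec_single]; rfl
  refine ⟨Matrix.of (fun i k => ((e k : (Fin a → ℝ))) i),
    Matrix.of (fun k j => (e.repr ⟨fun i => Z i j, hmem j⟩) k), ?_⟩
  ext i j
  have hsum := e.sum_repr ⟨fun i => Z i j, hmem j⟩
  have := congrArg (fun v : LinearMap.range Z.mulVecLin => (v : Fin a → ℝ) i) hsum
  simp only [Submodule.coe_sum, Submodule.coe_smul, Finset.sum_apply, Pi.smul_apply,
    smul_eq_mul] at this
  simpa [Matrix.mul_apply, mul_comm] using this

private lemma minimizer_eq {a b r : ℕ} (Z : Matrix (Fin a) (Fin b) ℝ) (hZ : Z.rank = r)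
    (A : Matrix (Fin a) (Fin r) ℝ) (B : Matrix (Fin r) (Fin b) ℝ)
    (hmin : ∀ (A' : Matrix (Fin a) (Fin r) ℝ) (B' : Matrix (Fin r) (Fin b) ℝ),
      floss Z A B ≤ floss Z A' B') : A * B = Z := by
  obtain ⟨A', B', hAB⟩ := exists_factor Z hZ
  have h0 : floss Z A' B' = 0 := by simp [floss, hAB]
  have h3 : ∑ i, ∑ j, (Z i j - (A * B) i j) ^ 2 = 0 := by
    have : floss Z A B = (1/2) * ∑ i, ∑ j, (Z i j - (A * B) i j) ^ 2 := rfl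
    have h2 : (0:ℝ) ≤ ∑ i, ∑ j, (Z i j - (A * B) i j) ^ 2 :=
      Finset.sum_nonneg fun i _ => Finset.sum_nonneg fun j _ => sq_nonneg _
    nlinarith [hmin A' B', h0]
  ext i j
  have h4 := (Finset.sum_eq_zero_iff_of_nonneg
    (fun i _ => Finset.sum_nonneg fun j _ => sq_nonneg (Z i j - (A * B) i j))).mp h3 i
    (Finset.mem_univ i)
  have h5 := (Finset.sum_eq_zero_iff_of_nonneg (fun j _ => sq_nonneg _)).mp h4 j
    (Finset.mem_univ j)
  have := pow_eq_zero_iff (n := 2) (by norm_num) |>.mp h5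
  linarith [this]

end Aux

/-- At a balanced global minimizer `(A,B)` of `f` with `rk Z = r`:
`σ_i(A)² = σ_i(B)² = σ_i(Z)` for all `i`, and the condition number
`(σ_1(A)² + σ_1(B)²)/min(σ_r(A)², σ_r(B)²)` equals `2σ_1(Z)/σ_r(Z)`. -/
theorem stmt7 {a b r : ℕ} (hr : 0 < r) (hra : r ≤ a) (hrb : r ≤ b)
    (Z : Matrix (Fin a) (Fin b) ℝ) (hZ : Z.rank = r)
    (A : Matrix (Fin a) (Fin r) ℝ) (B : Matrix (Fin r) (Fin b) ℝ)
    (hmin : ∀ (A' : Matrix (Fin a) (Fin r) ℝ) (B' : Matrix (Fin r) (Fin b) ℝ),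
      floss Z A B ≤ floss Z A' B')
    (hbal : Aᵀ * A = B * Bᵀ) :
    (∀ i : Fin r,
      sv A i ^ 2 = sv Z ⟨i, lt_of_lt_of_le i.2 hrb⟩ ∧
      sv B ⟨i, lt_of_lt_of_le i.2 hrb⟩ ^ 2 = sv Z ⟨i, lt_of_lt_of_le i.2 hrb⟩) ∧
    (sv A ⟨0, hr⟩ ^ 2 + sv B ⟨0, lt_of_lt_of_le hr hrb⟩ ^ 2) /
        min (sv A ⟨r - 1, Nat.sub_lt hr one_pos⟩ ^ 2)
          (sv B ⟨r - 1, lt_of_lt_of_le (Nat.sub_lt hr one_pos) hrb⟩ ^ 2)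
      = 2 * sv Z ⟨0, lt_of_lt_of_le hr hrb⟩ /
          sv Z ⟨r - 1, lt_of_lt_of_le (Nat.sub_lt hr one_pos) hrb⟩ := by
  have hABZ : A * B = Z := minimizer_eq Z hZ A B hmin
  set μA := (Matrix.isHermitian_conjTranspose_mul_self A).eigenvalues with hμA
  set μB := (Matrix.isHermitian_conjTranspose_mul_self B).eigenvalues with hμB
  set μZ := (Matrix.isHermitian_conjTranspose_mul_self Z).eigenvalues with hμZ
  have hμAnn : ∀ i, 0 ≤ μA i := Matrix.eigenvalues_conjTranspose_mul_self_nonneg A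
  have hμBnn : ∀ i, 0 ≤ μB i := Matrix.eigenvalues_conjTranspose_mul_self_nonneg B
  -- rank facts
  have hrB : B.rank = r := le_antisymm (Matrix.rank_le_height B) (by
    calc r = Z.rank := hZ.symm
      _ = (A * B).rank := by rw [hABZ]
      _ ≤ B.rank := Matrix.rank_mul_le_right A B)
  have hct : ∀ {m n : ℕ} (M : Matrix (Fin m) (Fin n) ℝ), Mᴴ = Mᵀ := fun M =>
    Matrix.conjTranspose_eq_transpose_of_trivial M
  have hrank : (Aᴴ * A).rank = r := by
    rw [hct A, hbal, Matrix.rank_self_mul_transpose, hrB]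
  have hμApos : ∀ i, 0 < μA i := by
    have hcard : Fintype.card {j // μA j ≠ 0} = r := by
      rw [← (Matrix.isHermitian_conjTranspose_mul_self A).rank_eq_card_non_zero_eigs, hrank]
    have hfil : (Finset.univ.filter fun j => μA j ≠ 0) = Finset.univ := by
      apply Finset.eq_univ_of_card
      rw [← Fintype.card_subtype, hcard, Fintype.card_fin]
    intro i
    have : i ∈ Finset.univ.filter fun j => μA j ≠ 0 := hfil.symm ▸ Finset.mem_univ i
    exact lt_of_le_of_ne (hμAnn i) (Ne.symm (Finset.mem_filter.mp this).2)
  -- det identities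
  have F1 : ∀ x : ℝ, x ≠ 0 → ∏ i, (x - μB i) = x ^ (b - r) * ∏ i, (x - μA i) := by
    intro x hx
    have h1 := det_spec (Matrix.isHermitian_conjTranspose_mul_self B) x
    have h2 := det_spec (Matrix.isHermitian_conjTranspose_mul_self A) x
    have h3 := WA hrb B x hx
    rw [← hbal] at h3
    rw [← h1, ← h2, hct A, hct B, h3]
  have M1 : (↑(List.ofFn μB) : Multiset ℝ)
      = Multiset.replicate (b - r) 0 + (↑(List.ofFn μA) : Multiset ℝ) :=
    multiset_pad μB μA F1
  have hZtZ : Zᵀ * Z = (Bᵀ * B) * (Bᵀ * B) := by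
    rw [← hABZ, Matrix.transpose_mul, Matrix.mul_assoc, ← Matrix.mul_assoc Aᵀ A B, hbal,
      Matrix.mul_assoc, ← Matrix.mul_assoc Bᵀ B]
  have F2 : ∀ x : ℝ, ∏ i, (x - μZ i) = ∏ i, (x - μB i ^ 2) := by
    intro x
    have h1 := det_spec (Matrix.isHermitian_conjTranspose_mul_self Z) x
    have h2 := det_spec_sq (Matrix.isHermitian_conjTranspose_mul_self B) x
    rw [← h1, ← h2, hct Z, hct B, hZtZ]
  have M2 : (↑(List.ofFn μZ) : Multiset ℝ) = ↑(List.ofFn (fun i => μB i ^ 2)) :=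
    multiset_of_eval μZ (fun i => μB i ^ 2) F2
  set sA := μA ∘ Tuple.sort μA with hsA
  set sB := μB ∘ Tuple.sort μB with hsB
  set sZ := μZ ∘ Tuple.sort μZ with hsZdef
  have hsBnn : ∀ j, 0 ≤ sB j := fun j => hμBnn _
  have hsAnn : ∀ i, 0 ≤ sA i := fun i => hμAnn _
  have hsZ : sZ = fun i => (sB i) ^ 2 := by
    rw [hsZdef, sort_eq_of_perm M2, sort_sq hμBnn]
  have hpad : ∀ (k : Fin r) (j : Fin b), (j : ℕ) = b - r + (k : ℕ) → sB j = sA k :=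
    fun k j hj => sort_pad hrb hμApos M1 k j hj
  have hsvA : ∀ i : Fin r, sv A i = Real.sqrt (sA i.rev) := fun i => rfl
  have hsvB : ∀ j : Fin b, sv B j = Real.sqrt (sB j.rev) := fun j => rfl
  have hsvZ : ∀ j : Fin b, sv Z j = Real.sqrt (sZ j.rev) := fun j => rfl
  have keyZ : ∀ j : Fin b, sv Z j = sB j.rev := by
    intro j
    rw [hsvZ j, hsZ]
    exact Real.sqrt_sq (hsBnn _)
  have keyB : ∀ j : Fin b, sv B j ^ 2 = sB j.rev := by
    intro j
    rw [hsvB j]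
    exact Real.sq_sqrt (hsBnn _)
  have keyA : ∀ i : Fin r, sv A i ^ 2 = sA i.rev := by
    intro i
    rw [hsvA i]
    exact Real.sq_sqrt (hsAnn _)
  have keyAZ : ∀ (i : Fin r) (hi : (i : ℕ) < b), sv A i ^ 2 = sv Z ⟨i, hi⟩ := by
    intro i hi
    rw [keyA i, keyZ ⟨i, hi⟩]
    refine (hpad i.rev (⟨i, hi⟩ : Fin b).rev ?_).symm
    have h1 : ((⟨i, hi⟩ : Fin b).rev : ℕ) = b - 1 - i := by simp [Fin.val_rev]; omega
    have h2 : ((i.rev : Fin r) : ℕ) = r - 1 - i := by simp [Fin.val_rev]; omega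
    rw [h1, h2]
    have := i.2
    omega
  constructor
  · intro i
    refine ⟨keyAZ i _, ?_⟩
    rw [keyB, keyZ]
  · have e1 : sv A ⟨0, hr⟩ ^ 2 = sv Z ⟨0, lt_of_lt_of_le hr hrb⟩ := keyAZ ⟨0, hr⟩ _
    have e2 : sv B ⟨0, lt_of_lt_of_le hr hrb⟩ ^ 2 = sv Z ⟨0, lt_of_lt_of_le hr hrb⟩ := by
      rw [keyB, keyZ]
    have e3 : sv A ⟨r - 1, Nat.sub_lt hr one_pos⟩ ^ 2
        = sv Z ⟨r - 1, lt_of_lt_of_le (Nat.sub_lt hr one_pos) hrb⟩ :=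
      keyAZ ⟨r - 1, Nat.sub_lt hr one_pos⟩ _
    have e4 : sv B ⟨r - 1, lt_of_lt_of_le (Nat.sub_lt hr one_pos) hrb⟩ ^ 2
        = sv Z ⟨r - 1, lt_of_lt_of_le (Nat.sub_lt hr one_pos) hrb⟩ := by
      rw [keyB, keyZ]
    rw [e1, e2, e3, e4, min_self, ← two_mul]
end

section
/- Let Z ∈ ℝ^{a×b} have rank r. Among all factorizations Z = AB with A ∈ ℝ^{a×r}, B ∈ ℝ^{r×b}, the quantity (σ_1(A)² + σ_1(B)²)/min(σ_r(A)², σ_r(B)²) is minimized by balanced factorizations (those with AᵀA = BBᵀ), and the minimum value is 2σ_1(Z)/σ_r(Z). -/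
open Matrix

namespace SV8

variable {n m : ℕ}

theorem sum_dot (f : Fin m → (Fin n → ℝ)) (y : Fin n → ℝ) :
    (∑ i, f i) ⬝ᵥ y = ∑ i, f i ⬝ᵥ y := by
  simp only [dotProduct, Finset.sum_apply, Finset.sum_mul]
  exact Finset.sum_comm

theorem dot_sum (y : Fin n → ℝ) (f : Fin m → (Fin n → ℝ)) :
    y ⬝ᵥ (∑ i, f i) = ∑ i, y ⬝ᵥ f i := by
  simp only [dotProduct, Finset.sum_apply, Finset.mul_sum]
  exact Finset.sum_comm

theorem dot_expand {u : Fin n → (Fin n → ℝ)}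
    (ho : ∀ i j, u i ⬝ᵥ u j = if i = j then (1:ℝ) else 0)
    (c d : Fin n → ℝ) :
    (∑ i, c i • u i) ⬝ᵥ (∑ j, d j • u j) = ∑ i, c i * d i := by
  rw [sum_dot]
  have h1 : ∀ i, (c i • u i) ⬝ᵥ (∑ j, d j • u j) = c i * d i := by
    intro i
    rw [smul_dotProduct, dot_sum]
    simp only [dotProduct_smul, ho, smul_eq_mul, mul_ite, mul_one, mul_zero,
      Finset.sum_ite_eq, Finset.mem_univ, if_true]
  simp [h1]

theorem dot_self_pos {x : Fin n → ℝ} (hx : x ≠ 0) : 0 < x ⬝ᵥ x := by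
  have h1 : x ⬝ᵥ x = ∑ i, x i ^ 2 := by
    simp [dotProduct, sq]
  rw [h1]
  obtain ⟨j, hj⟩ := Function.ne_iff.mp hx
  exact Finset.sum_pos' (fun i _ => sq_nonneg _)
    ⟨j, Finset.mem_univ j, by
      have := sq_nonneg (x j)
      rcases this.lt_or_eq with h' | h'
      · exact h'
      · exact absurd (pow_eq_zero_iff (n := 2) (by norm_num) |>.mp h'.symm) hj⟩

theorem dot_self_nonneg (x : Fin n → ℝ) : 0 ≤ x ⬝ᵥ x := by
  have h1 : x ⬝ᵥ x = ∑ i, x i ^ 2 := by simp [dotProduct, sq]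
  rw [h1]
  positivity

/-- An orthonormal eigenbasis presented with plain vectors. -/
structure ONEig (M : Matrix (Fin n) (Fin n) ℝ) (u : Fin n → (Fin n → ℝ)) (ν : Fin n → ℝ) :
    Prop where
  ortho : ∀ i j, u i ⬝ᵥ u j = if i = j then (1:ℝ) else 0
  complete : ∀ x : Fin n → ℝ, x = ∑ i, (u i ⬝ᵥ x) • u i
  eig : ∀ i, M *ᵥ u i = ν i • u i

namespace ONEig

variable {M : Matrix (Fin n) (Fin n) ℝ} {u : Fin n → (Fin n → ℝ)} {ν : Fin n → ℝ}
  (h : ONEig M u ν)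
include h

theorem q_eq (x : Fin n → ℝ) :
    x ⬝ᵥ (M *ᵥ x) = ∑ i, ν i * (u i ⬝ᵥ x)^2 := by
  set c : Fin n → ℝ := fun i => u i ⬝ᵥ x with hc
  have hx : x = ∑ i, c i • u i := h.complete x
  have hMx : M *ᵥ x = ∑ i, (ν i * c i) • u i := by
    conv_lhs => rw [hx]
    rw [show ∀ v : Fin n → ℝ, M *ᵥ v = M.mulVecLin v from fun _ => rfl, map_sum]
    congr 1; ext i
    rw [_root_.map_smul, Matrix.mulVecLin_apply, h.eig i, smul_smul, mul_comm]
  rw [hMx]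
  conv_lhs => rw [hx]
  rw [dot_expand h.ortho]
  congr 1; ext i; ring

theorem normsq_eq (x : Fin n → ℝ) :
    x ⬝ᵥ x = ∑ i, (u i ⬝ᵥ x)^2 := by
  conv_lhs => rw [h.complete x]
  rw [dot_expand h.ortho]
  congr 1; ext i; ring

theorem basis_ne_zero (i : Fin n) : u i ≠ 0 := by
  intro h0
  have := h.ortho i i
  rw [h0] at this
  simp at this

theorem dot_eq_zero_of_mem_span {S : Finset (Fin n)} {x : Fin n → ℝ}
    (hx : x ∈ Submodule.span ℝ (u '' S)) {j : Fin n} (hj : j ∉ S) :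
    u j ⬝ᵥ x = 0 := by
  induction hx using Submodule.span_induction with
  | mem y hy =>
      obtain ⟨i, hiS, rfl⟩ := hy
      rw [h.ortho]
      simp only [ite_eq_right_iff]
      intro hji; exact absurd (hji ▸ hiS) hj
  | zero => simp
  | add y z _ _ hy hz => rw [dotProduct_add, hy, hz, add_zero]
  | smul a y _ hy => rw [dotProduct_smul, hy, smul_zero]

theorem q_le_of_mem_span {S : Finset (Fin n)} {x : Fin n → ℝ} {cb : ℝ}
    (hx : x ∈ Submodule.span ℝ (u '' S)) (hcb : ∀ i ∈ S, ν i ≤ cb) :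
    x ⬝ᵥ (M *ᵥ x) ≤ cb * (x ⬝ᵥ x) := by
  rw [h.q_eq, h.normsq_eq, Finset.mul_sum]
  apply Finset.sum_le_sum
  intro i _
  by_cases hiS : i ∈ S
  · exact mul_le_mul_of_nonneg_right (hcb i hiS) (sq_nonneg _)
  · rw [h.dot_eq_zero_of_mem_span hx hiS]
    simp

theorem le_q_of_mem_span {S : Finset (Fin n)} {x : Fin n → ℝ} {cb : ℝ}
    (hx : x ∈ Submodule.span ℝ (u '' S)) (hcb : ∀ i ∈ S, cb ≤ ν i) :
    cb * (x ⬝ᵥ x) ≤ x ⬝ᵥ (M *ᵥ x) := by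
  rw [h.q_eq, h.normsq_eq, Finset.mul_sum]
  apply Finset.sum_le_sum
  intro i _
  by_cases hiS : i ∈ S
  · exact mul_le_mul_of_nonneg_right (hcb i hiS) (sq_nonneg _)
  · rw [h.dot_eq_zero_of_mem_span hx hiS]
    simp

theorem linearIndependent : LinearIndependent ℝ u := by
  rw [linearIndependent_iff']
  intro s g hg i hi
  have hdot := congrArg (fun y => u i ⬝ᵥ y) hg
  simp only [dotProduct_zero] at hdot
  have h2 : u i ⬝ᵥ (∑ j ∈ s, g j • u j) = g i := by
    classical
    rw [show u i ⬝ᵥ (∑ j ∈ s, g j • u j) = ∑ j ∈ s, g j * (u i ⬝ᵥ u j) by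
      simp only [dotProduct, Finset.sum_apply, Finset.mul_sum, Pi.smul_apply, smul_eq_mul]
      rw [Finset.sum_comm]; congr 1; ext j; ring_nf
      congr 1; ext k; ring]
    simp only [h.ortho, mul_ite, mul_one, mul_zero]
    rw [Finset.sum_ite_eq s i (fun j => g j)]
    simp [hi]
  rw [h2] at hdot
  exact hdot

theorem finrank_span (S : Finset (Fin n)) :
    Module.finrank ℝ (Submodule.span ℝ (u '' S)) = S.card := by
  classical
  have hli : LinearIndependent ℝ (fun i : S => u i) :=
    h.linearIndependent.comp _ Subtype.val_injective
  have himg : (u '' S : Set (Fin n → ℝ)) = Set.range (fun i : S => u i) := by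
    ext y; simp [Set.mem_image]
  rw [himg, finrank_span_eq_card hli]
  simp

/-- A vector equation `M *ᵥ x = μ • x` with `x ≠ 0` forces `μ` to occur among `ν`,
provided `M` is symmetric. -/
theorem mem_of_eigenvector (hsymm : Mᵀ = M) {x : Fin n → ℝ} {μ : ℝ}
    (hx : x ≠ 0) (he : M *ᵥ x = μ • x) : ∃ i, ν i = μ := by
  by_contra hc
  push_neg at hc
  apply hx
  have hco : ∀ i, u i ⬝ᵥ x = 0 := by
    intro i
    have h1 : u i ⬝ᵥ (M *ᵥ x) = μ * (u i ⬝ᵥ x) := by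
      rw [he, dotProduct_smul, smul_eq_mul]
    have h2 : u i ⬝ᵥ (M *ᵥ x) = ν i * (u i ⬝ᵥ x) := by
      rw [Matrix.dotProduct_mulVec]
      conv_lhs => rw [← hsymm, Matrix.vecMul_transpose]
      rw [h.eig i, smul_dotProduct, smul_eq_mul]
    have h3 := h1.symm.trans h2
    rcases mul_eq_mul_right_iff.mp h3.symm with h4 | h4
    · exact absurd h4 (hc i)
    · exact h4
  rw [h.complete x]
  simp only [hco]
  simp

end ONEig

theorem exists_ne_zero_mem_inf {V W : Submodule ℝ (Fin n → ℝ)}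
    (hdim : n < Module.finrank ℝ V + Module.finrank ℝ W) :
    ∃ x : Fin n → ℝ, x ≠ 0 ∧ x ∈ V ∧ x ∈ W := by
  have hfin : Module.finrank ℝ (Fin n → ℝ) = n := by simp
  have h1 : Module.finrank ℝ ↥(V ⊔ W) + Module.finrank ℝ ↥(V ⊓ W)
      = Module.finrank ℝ V + Module.finrank ℝ W :=
    Submodule.finrank_sup_add_finrank_inf_eq V W
  have h2 : Module.finrank ℝ ↥(V ⊔ W) ≤ n := by
    have := Submodule.finrank_le (V ⊔ W)
    rwa [hfin] at this
  have h3 : 0 < Module.finrank ℝ ↥(V ⊓ W) := by omega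
  obtain ⟨⟨x, hx⟩, hx0⟩ := Module.finrank_pos_iff_exists_ne_zero.mp h3
  refine ⟨x, ?_, hx.1, hx.2⟩
  intro hx'
  apply hx0
  ext
  simp [hx']

end SV8

namespace SV8

variable {n : ℕ} {M : Matrix (Fin n) (Fin n) ℝ}

/-- sorted (ascending) eigenvalues of a hermitian matrix -/
noncomputable def es (hM : M.IsHermitian) : Fin n → ℝ :=
  hM.eigenvalues ∘ ⇑(Tuple.sort hM.eigenvalues)

theorem es_monotone (hM : M.IsHermitian) : Monotone (es hM) :=
  Tuple.monotone_sort _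

theorem es_congr {N : Matrix (Fin n) (Fin n) ℝ} (hMN : M = N) (hM : M.IsHermitian)
    (hN : N.IsHermitian) : es hM = es hN := by
  subst hMN; rfl

theorem es_nonneg (hM : M.PosSemidef) (k : Fin n) : 0 ≤ es hM.1 k :=
  hM.eigenvalues_nonneg _

/-- sorted orthonormal eigenbasis -/
noncomputable def sbasis (hM : M.IsHermitian) : Fin n → (Fin n → ℝ) :=
  fun k => ⇑(hM.eigenvectorBasis (Tuple.sort hM.eigenvalues k))

theorem oe (hM : M.IsHermitian) : ONEig M (sbasis hM) (es hM) := by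
  constructor
  · intro i j
    have hb := orthonormal_iff_ite.mp hM.eigenvectorBasis.orthonormal
      (Tuple.sort hM.eigenvalues i) (Tuple.sort hM.eigenvalues j)
    rw [EuclideanSpace.inner_eq_star_dotProduct] at hb
    simp only [star_trivial, RCLike.star_def] at hb
    simp only [sbasis]
    rw [dotProduct_comm, hb]
    simp [Equiv.apply_eq_iff_eq]
  · intro x
    have hs := hM.eigenvectorBasis.sum_repr' (WithLp.toLp 2 x : EuclideanSpace ℝ (Fin n))
    have hco : ∀ i, (inner ℝ (hM.eigenvectorBasis i) (WithLp.toLp 2 x : EuclideanSpace ℝ (Fin n)) : ℝ)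
        = ⇑(hM.eigenvectorBasis i) ⬝ᵥ x := by
      intro i
      rw [EuclideanSpace.inner_eq_star_dotProduct, dotProduct_comm]
      simp
    have hx : ∑ i, (⇑(hM.eigenvectorBasis i) ⬝ᵥ x) • ⇑(hM.eigenvectorBasis i) = x := by
      conv_rhs => rw [← WithLp.ofLp_toLp 2 x, ← hs]
      simp only [hco, WithLp.ofLp_sum, WithLp.ofLp_smul]
    rw [← Equiv.sum_comp (Tuple.sort hM.eigenvalues)
      (fun i => (⇑(hM.eigenvectorBasis i) ⬝ᵥ x) • ⇑(hM.eigenvectorBasis i))] at hx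
    exact hx.symm
  · intro k
    exact hM.mulVec_eigenvectorBasis _

/-- exists a vector in any large enough subspace whose Rayleigh quotient is at least `es k` -/
theorem exists_big (hM : M.IsHermitian) (k : Fin n) (V : Submodule ℝ (Fin n → ℝ))
    (hV : k.1 + 1 ≤ Module.finrank ℝ V) :
    ∃ x : Fin n → ℝ, x ≠ 0 ∧ x ∈ V ∧ es hM k * (x ⬝ᵥ x) ≤ x ⬝ᵥ (M *ᵥ x) := by
  classical
  set W := Submodule.span ℝ (sbasis hM '' (Finset.Ici k)) with hW
  have hWrk : Module.finrank ℝ W = n - k.1 := by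
    rw [(oe hM).finrank_span, Fin.card_Ici]
  obtain ⟨x, hx0, hxV, hxW⟩ := exists_ne_zero_mem_inf (V := V) (W := W)
    (by rw [hWrk]; have := k.2; omega)
  refine ⟨x, hx0, hxV, ?_⟩
  exact (oe hM).le_q_of_mem_span hxW (fun i hi => es_monotone hM (Finset.mem_Ici.mp hi))

theorem exists_small (hM : M.IsHermitian) (k : Fin n) (V : Submodule ℝ (Fin n → ℝ))
    (hV : n - k.1 ≤ Module.finrank ℝ V) :
    ∃ x : Fin n → ℝ, x ≠ 0 ∧ x ∈ V ∧ x ⬝ᵥ (M *ᵥ x) ≤ es hM k * (x ⬝ᵥ x) := by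
  classical
  set W := Submodule.span ℝ (sbasis hM '' (Finset.Iic k)) with hW
  have hWrk : Module.finrank ℝ W = k.1 + 1 := by
    rw [(oe hM).finrank_span, Fin.card_Iic]
  obtain ⟨x, hx0, hxV, hxW⟩ := exists_ne_zero_mem_inf (V := V) (W := W)
    (by rw [hWrk]; have := k.2; omega)
  refine ⟨x, hx0, hxV, ?_⟩
  exact (oe hM).q_le_of_mem_span hxW (fun i hi => es_monotone hM (Finset.mem_Iic.mp hi))

/-- sorted eigenvalues are determined by any monotone orthonormal eigenbasis -/
theorem es_uniq (hM : M.IsHermitian) {u : Fin n → (Fin n → ℝ)} {ν : Fin n → ℝ}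
    (h : ONEig M u ν) (hmono : Monotone ν) (k : Fin n) : es hM k = ν k := by
  classical
  apply le_antisymm
  · set V := Submodule.span ℝ (u '' (Finset.Iic k)) with hV
    have hVrk : Module.finrank ℝ V = k.1 + 1 := by rw [h.finrank_span, Fin.card_Iic]
    obtain ⟨x, hx0, hxV, hxq⟩ := exists_big hM k V (by omega)
    have h2 : x ⬝ᵥ (M *ᵥ x) ≤ ν k * (x ⬝ᵥ x) :=
      h.q_le_of_mem_span hxV (fun i hi => hmono (Finset.mem_Iic.mp hi))
    have hxx := dot_self_pos hx0
    nlinarith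
  · set V := Submodule.span ℝ (u '' (Finset.Ici k)) with hV
    have hVrk : Module.finrank ℝ V = n - k.1 := by rw [h.finrank_span, Fin.card_Ici]
    obtain ⟨x, hx0, hxV, hxq⟩ := exists_small hM k V (by omega)
    have h2 : ν k * (x ⬝ᵥ x) ≤ x ⬝ᵥ (M *ᵥ x) :=
      h.le_q_of_mem_span hxV (fun i hi => hmono (Finset.mem_Ici.mp hi))
    have hxx := dot_self_pos hx0
    nlinarith

/-- eigenvalue comparison from quadratic-form domination -/
theorem es_comp {N : Matrix (Fin n) (Fin n) ℝ} (hM : M.IsHermitian) (hN : N.IsHermitian)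
    {c : ℝ} (hc : 0 ≤ c) (hq : ∀ x : Fin n → ℝ, x ⬝ᵥ (M *ᵥ x) ≤ c * (x ⬝ᵥ (N *ᵥ x)))
    (k : Fin n) : es hM k ≤ c * es hN k := by
  classical
  set V := Submodule.span ℝ (sbasis hN '' (Finset.Iic k)) with hV
  have hVrk : Module.finrank ℝ V = k.1 + 1 := by rw [(oe hN).finrank_span, Fin.card_Iic]
  obtain ⟨x, hx0, hxV, hxq⟩ := exists_big hM k V (by omega)
  have h2 : x ⬝ᵥ (N *ᵥ x) ≤ es hN k * (x ⬝ᵥ x) :=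
    (oe hN).q_le_of_mem_span hxV (fun i hi => es_monotone hN (Finset.mem_Iic.mp hi))
  have h3 := hq x
  have hxx := dot_self_pos hx0
  have h4 : c * (x ⬝ᵥ (N *ᵥ x)) ≤ c * (es hN k * (x ⬝ᵥ x)) := by
    exact mul_le_mul_of_nonneg_left h2 hc
  nlinarith

theorem card_es_ne_zero (hM : M.IsHermitian) {ρ : ℕ} (hrk : M.rank = ρ) :
    (Finset.univ.filter (fun i => es hM i ≠ 0)).card = ρ := by
  classical
  have h1 := hM.rank_eq_card_non_zero_eigs
  rw [hrk, Fintype.card_subtype] at h1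
  rw [h1]
  apply Finset.card_bij (fun i _ => Tuple.sort hM.eigenvalues i)
  · intro i hi
    simp only [Finset.mem_filter, Finset.mem_univ, true_and] at hi ⊢
    exact hi
  · intro i hi j hj hij
    exact (Tuple.sort hM.eigenvalues).injective hij
  · intro j hj
    refine ⟨(Tuple.sort hM.eigenvalues).symm j, ?_, by simp⟩
    simp only [Finset.mem_filter, Finset.mem_univ, true_and] at hj ⊢
    simpa [es] using hj

theorem es_pos_of_rank (hM : M.PosSemidef) {ρ : ℕ} (hrk : M.rank = ρ) (hρ : 0 < ρ)
    (h : n - ρ < n) : 0 < es hM.1 ⟨n - ρ, h⟩ := by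
  classical
  have hρn : ρ ≤ n := by rw [← hrk]; exact M.rank_le_width
  rcases (es_nonneg hM ⟨n - ρ, h⟩).lt_or_eq with h' | h'
  · exact h'
  · exfalso
    have hsub : Finset.univ.filter (fun i => es hM.1 i ≠ 0) ⊆ Finset.Ioi ⟨n - ρ, h⟩ := by
      intro i hi
      simp only [Finset.mem_filter, Finset.mem_univ, true_and] at hi
      rw [Finset.mem_Ioi]
      by_contra hle
      push_neg at hle
      have := es_monotone hM.1 hle
      have := es_nonneg hM i
      apply hi
      linarith
    have hc := Finset.card_le_card hsub
    rw [card_es_ne_zero hM.1 hrk, Fin.card_Ioi] at hc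
    simp only at hc
    omega

theorem es_le_of_pos (hM : M.PosSemidef) {ρ : ℕ} (hrk : M.rank = ρ)
    (h : n - ρ < n) (k : Fin n) (hk : 0 < es hM.1 k) : es hM.1 ⟨n - ρ, h⟩ ≤ es hM.1 k := by
  classical
  have hρn : ρ ≤ n := by rw [← hrk]; exact M.rank_le_width
  by_contra hlt
  push_neg at hlt
  have hklt : k < (⟨n - ρ, h⟩ : Fin n) := by
    by_contra hge
    push_neg at hge
    exact absurd (es_monotone hM.1 hge) (not_le.mpr hlt)
  have hsub : Finset.Ici k ⊆ Finset.univ.filter (fun i => es hM.1 i ≠ 0) := by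
    intro j hj
    simp only [Finset.mem_filter, Finset.mem_univ, true_and]
    have := es_monotone hM.1 (Finset.mem_Ici.mp hj)
    intro h0
    rw [h0] at this
    linarith
  have hc := Finset.card_le_card hsub
  rw [card_es_ne_zero hM.1 hrk, Fin.card_Ici] at hc
  have := Fin.lt_iff_val_lt_val.mp hklt
  simp only at this
  omega

end SV8

namespace SV8
variable {n m : ℕ}

theorem q_tm (M : Matrix (Fin m) (Fin n) ℝ) (x : Fin n → ℝ) :
    x ⬝ᵥ ((Mᴴ * M) *ᵥ x) = (M *ᵥ x) ⬝ᵥ (M *ᵥ x) := by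
  rw [← Matrix.mulVec_mulVec, Matrix.dotProduct_mulVec,
    Matrix.conjTranspose_eq_transpose_of_trivial, Matrix.vecMul_transpose]

theorem mem_span_univ {M : Matrix (Fin n) (Fin n) ℝ} {u : Fin n → (Fin n → ℝ)} {ν : Fin n → ℝ}
    (h : ONEig M u ν) (x : Fin n → ℝ) :
    x ∈ Submodule.span ℝ (u '' (Finset.univ : Finset (Fin n))) := by
  rw [h.complete x]
  exact Submodule.sum_mem _ (fun i _ =>
    Submodule.smul_mem _ _ (Submodule.subset_span ⟨i, by simp, rfl⟩))

theorem q_le_top {M : Matrix (Fin n) (Fin n) ℝ} (hM : M.IsHermitian) (k : Fin n)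
    (hk : ∀ i, es hM i ≤ es hM k) (x : Fin n → ℝ) :
    x ⬝ᵥ (M *ᵥ x) ≤ es hM k * (x ⬝ᵥ x) :=
  (oe hM).q_le_of_mem_span (mem_span_univ (oe hM) x) (fun i _ => hk i)

theorem bot_le_q {M : Matrix (Fin n) (Fin n) ℝ} (hM : M.IsHermitian) (k : Fin n)
    (hk : ∀ i, es hM k ≤ es hM i) (x : Fin n → ℝ) :
    es hM k * (x ⬝ᵥ x) ≤ x ⬝ᵥ (M *ᵥ x) :=
  (oe hM).le_q_of_mem_span (mem_span_univ (oe hM) x) (fun i _ => hk i)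

theorem eig_transfer {p q : ℕ} (C : Matrix (Fin p) (Fin q) ℝ) {x : Fin q → ℝ} {μ : ℝ}
    (hx : x ≠ 0) (hμ : μ ≠ 0) (he : (Cᵀ * C) *ᵥ x = μ • x) :
    C *ᵥ x ≠ 0 ∧ (C * Cᵀ) *ᵥ (C *ᵥ x) = μ • (C *ᵥ x) := by
  constructor
  · intro h0
    apply hx
    have h1 : (Cᵀ * C) *ᵥ x = 0 := by
      rw [← Matrix.mulVec_mulVec, h0, Matrix.mulVec_zero]
    rw [he] at h1
    exact (smul_eq_zero.mp h1).resolve_left hμ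
  · rw [← Matrix.mulVec_mulVec, Matrix.mulVec_mulVec (M := Cᵀ), he, Matrix.mulVec_smul]
end SV8

namespace SV8

set_option maxHeartbeats 2000000 in
theorem key1 {a b r : ℕ} (hr : 0 < r) (hrb : r ≤ b)
    (Z : Matrix (Fin a) (Fin b) ℝ) (hZ : Z.rank = r)
    (A : Matrix (Fin a) (Fin r) ℝ) (B : Matrix (Fin r) (Fin b) ℝ) (hAB : A * B = Z)
    (hb1 : b - 1 < b) (hbr : b - r < b) (hr1 : r - 1 < r) :
    2 * Real.sqrt (es (Matrix.isHermitian_conjTranspose_mul_self Z) ⟨b-1, hb1⟩) /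
        Real.sqrt (es (Matrix.isHermitian_conjTranspose_mul_self Z) ⟨b-r, hbr⟩)
      ≤ (es (Matrix.isHermitian_conjTranspose_mul_self A) ⟨r-1, hr1⟩ +
          es (Matrix.isHermitian_conjTranspose_mul_self B) ⟨b-1, hb1⟩) /
        min (es (Matrix.isHermitian_conjTranspose_mul_self A) ⟨0, hr⟩)
          (es (Matrix.isHermitian_conjTranspose_mul_self B) ⟨b-r, hbr⟩) := by
  have hAh := Matrix.isHermitian_conjTranspose_mul_self A
  have hBh := Matrix.isHermitian_conjTranspose_mul_self B
  have hZh := Matrix.isHermitian_conjTranspose_mul_self Z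
  have hPA := Matrix.posSemidef_conjTranspose_mul_self A
  have hPB := Matrix.posSemidef_conjTranspose_mul_self B
  have hPZ := Matrix.posSemidef_conjTranspose_mul_self Z
  -- ranks
  have hAr : A.rank = r := le_antisymm A.rank_le_width (by
    calc r = Z.rank := hZ.symm
      _ = (A * B).rank := by rw [hAB]
      _ ≤ A.rank := Matrix.rank_mul_le_left A B)
  have hBr : B.rank = r := le_antisymm (B.rank_le_card_height.trans (by simp)) (by
    calc r = Z.rank := hZ.symm
      _ = (A * B).rank := by rw [hAB]
      _ ≤ B.rank := Matrix.rank_mul_le_right A B)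
  have hArk : (Aᴴ * A).rank = r := by rw [Matrix.rank_conjTranspose_mul_self]; exact hAr
  have hBrk : (Bᴴ * B).rank = r := by rw [Matrix.rank_conjTranspose_mul_self]; exact hBr
  have hZrk : (Zᴴ * Z).rank = r := by rw [Matrix.rank_conjTranspose_mul_self]; exact hZ
  -- positivity of the minimal relevant eigenvalues
  have hidxA : (⟨r - r, by omega⟩ : Fin r) = ⟨0, hr⟩ := by ext; simp
  have eAmin_pos : 0 < es hAh ⟨0, hr⟩ := by
    have := es_pos_of_rank hPA hArk hr (by omega)
    rwa [hidxA] at this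
  have eBmin_pos : 0 < es hBh ⟨b - r, hbr⟩ := es_pos_of_rank hPB hBrk hr hbr
  have eZmin_pos : 0 < es hZh ⟨b - r, hbr⟩ := es_pos_of_rank hPZ hZrk hr hbr
  -- nonnegativity
  have eAtop_nn : (0:ℝ) ≤ es hAh ⟨r-1, hr1⟩ := es_nonneg hPA _
  have eBtop_nn : (0:ℝ) ≤ es hBh ⟨b-1, hb1⟩ := es_nonneg hPB _
  have eZtop_nn : (0:ℝ) ≤ es hZh ⟨b-1, hb1⟩ := es_nonneg hPZ _
  have eAmin_nn : (0:ℝ) ≤ es hAh ⟨0, hr⟩ := le_of_lt eAmin_pos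
  -- top bound for A
  have hAtop : ∀ i, es hAh i ≤ es hAh ⟨r-1, hr1⟩ := fun i =>
    es_monotone hAh (by rw [Fin.le_def]; simp; omega)
  have hAbot : ∀ i, es hAh ⟨0, hr⟩ ≤ es hAh i := fun i =>
    es_monotone hAh (by rw [Fin.le_def]; simp)
  have hZx : ∀ x : Fin b → ℝ, Z *ᵥ x = A *ᵥ (B *ᵥ x) := fun x => by
    rw [← hAB, ← Matrix.mulVec_mulVec]
  -- comparison 1 : es (ZᵀZ) ≤ eAtop * es (BᵀB)
  have hcomp1 : es hZh ⟨b-1, hb1⟩ ≤ es hAh ⟨r-1, hr1⟩ * es hBh ⟨b-1, hb1⟩ := by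
    refine es_comp hZh hBh (le_trans (es_nonneg hPA ⟨0, hr⟩) (hAtop _)) (fun x => ?_) _
    rw [q_tm, q_tm, hZx x, ← q_tm A (B *ᵥ x)]
    exact q_le_top hAh ⟨r-1, hr1⟩ hAtop (B *ᵥ x)
  -- comparison 2 : eAmin * es (BᵀB) ≤ es (ZᵀZ)
  have hcomp2 : es hAh ⟨0, hr⟩ * es hBh ⟨b-r, hbr⟩ ≤ es hZh ⟨b-r, hbr⟩ := by
    have h6 : es hBh ⟨b-r, hbr⟩ ≤ (es hAh ⟨0, hr⟩)⁻¹ * es hZh ⟨b-r, hbr⟩ := by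
      refine es_comp hBh hZh (by positivity) (fun x => ?_) _
      have h1 : es hAh ⟨0, hr⟩ * (x ⬝ᵥ ((Bᴴ * B) *ᵥ x)) ≤ x ⬝ᵥ ((Zᴴ * Z) *ᵥ x) := by
        rw [q_tm, q_tm, hZx x, ← q_tm A (B *ᵥ x)]
        exact bot_le_q hAh ⟨0, hr⟩ hAbot (B *ᵥ x)
      calc x ⬝ᵥ ((Bᴴ * B) *ᵥ x)
          = (es hAh ⟨0, hr⟩)⁻¹ * (es hAh ⟨0, hr⟩ * (x ⬝ᵥ ((Bᴴ * B) *ᵥ x))) := by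
            field_simp
        _ ≤ (es hAh ⟨0, hr⟩)⁻¹ * (x ⬝ᵥ ((Zᴴ * Z) *ᵥ x)) :=
            mul_le_mul_of_nonneg_left h1 (by positivity)
    have := mul_le_mul_of_nonneg_left h6 eAmin_nn
    calc es hAh ⟨0, hr⟩ * es hBh ⟨b-r, hbr⟩
        ≤ es hAh ⟨0, hr⟩ * ((es hAh ⟨0, hr⟩)⁻¹ * es hZh ⟨b-r, hbr⟩) := this
      _ = es hZh ⟨b-r, hbr⟩ := by field_simp
  -- final numeric manipulation
  set p1 := Real.sqrt (es hZh ⟨b-1, hb1⟩) with hp1def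
  set p2 := Real.sqrt (es hZh ⟨b-r, hbr⟩) with hp2def
  set sa := Real.sqrt (es hAh ⟨r-1, hr1⟩) with hsadef
  set sb := Real.sqrt (es hBh ⟨b-1, hb1⟩) with hsbdef
  have hsa2 : sa^2 = es hAh ⟨r-1, hr1⟩ := Real.sq_sqrt eAtop_nn
  have hsb2 : sb^2 = es hBh ⟨b-1, hb1⟩ := Real.sq_sqrt eBtop_nn
  have hp2pos : 0 < p2 := Real.sqrt_pos.mpr eZmin_pos
  have hminpos : 0 < min (es hAh ⟨0, hr⟩) (es hBh ⟨b-r, hbr⟩) := lt_min eAmin_pos eBmin_pos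
  rw [div_le_div_iff₀ hp2pos hminpos]
  -- p1 ≤ sa * sb
  have hp1le : p1 ≤ sa * sb := by
    rw [hp1def, hsadef, hsbdef, ← Real.sqrt_mul eAtop_nn]
    exact Real.sqrt_le_sqrt hcomp1
  -- min ≤ p2
  have hminle : min (es hAh ⟨0, hr⟩) (es hBh ⟨b-r, hbr⟩) ≤ p2 := by
    have hmin2 : (min (es hAh ⟨0, hr⟩) (es hBh ⟨b-r, hbr⟩))^2
        ≤ es hAh ⟨0, hr⟩ * es hBh ⟨b-r, hbr⟩ := by
      rcases le_total (es hAh ⟨0, hr⟩) (es hBh ⟨b-r, hbr⟩) with h | h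
      · rw [min_eq_left h]; nlinarith
      · rw [min_eq_right h]; nlinarith
    rw [← Real.sqrt_sq (le_of_lt hminpos)]
    exact Real.sqrt_le_sqrt (le_trans hmin2 hcomp2)
  have h2ab : 2 * (sa * sb) ≤ sa^2 + sb^2 := by nlinarith [sq_nonneg (sa - sb)]
  have hp1nn : 0 ≤ p1 := Real.sqrt_nonneg _
  have hsann : 0 ≤ sa := Real.sqrt_nonneg _
  have hsbnn : 0 ≤ sb := Real.sqrt_nonneg _
  calc 2 * p1 * min (es hAh ⟨0, hr⟩) (es hBh ⟨b-r, hbr⟩)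
      ≤ 2 * (sa * sb) * min (es hAh ⟨0, hr⟩) (es hBh ⟨b-r, hbr⟩) := by
        apply mul_le_mul_of_nonneg_right _ (le_of_lt hminpos)
        nlinarith
    _ ≤ (sa^2 + sb^2) * min (es hAh ⟨0, hr⟩) (es hBh ⟨b-r, hbr⟩) :=
        mul_le_mul_of_nonneg_right h2ab (le_of_lt hminpos)
    _ ≤ (sa^2 + sb^2) * p2 := by
        apply mul_le_mul_of_nonneg_left hminle
        nlinarith
    _ = (es hAh ⟨r-1, hr1⟩ + es hBh ⟨b-1, hb1⟩) * p2 := by rw [hsa2, hsb2]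

end SV8

namespace SV8

set_option maxHeartbeats 2000000 in
theorem key2 {a b r : ℕ} (hr : 0 < r) (hrb : r ≤ b)
    (Z : Matrix (Fin a) (Fin b) ℝ) (hZ : Z.rank = r)
    (A : Matrix (Fin a) (Fin r) ℝ) (B : Matrix (Fin r) (Fin b) ℝ) (hAB : A * B = Z)
    (hbal : Aᵀ * A = B * Bᵀ)
    (hb1 : b - 1 < b) (hbr : b - r < b) (hr1 : r - 1 < r) :
    es (Matrix.isHermitian_conjTranspose_mul_self A) ⟨r-1, hr1⟩ =
      es (Matrix.isHermitian_conjTranspose_mul_self B) ⟨b-1, hb1⟩ ∧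
    es (Matrix.isHermitian_conjTranspose_mul_self A) ⟨0, hr⟩ =
      es (Matrix.isHermitian_conjTranspose_mul_self B) ⟨b-r, hbr⟩ ∧
    es (Matrix.isHermitian_conjTranspose_mul_self Z) ⟨b-1, hb1⟩ =
      (es (Matrix.isHermitian_conjTranspose_mul_self B) ⟨b-1, hb1⟩)^2 ∧
    es (Matrix.isHermitian_conjTranspose_mul_self Z) ⟨b-r, hbr⟩ =
      (es (Matrix.isHermitian_conjTranspose_mul_self B) ⟨b-r, hbr⟩)^2 := by
  have hAh := Matrix.isHermitian_conjTranspose_mul_self A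
  have hBh := Matrix.isHermitian_conjTranspose_mul_self B
  have hZh := Matrix.isHermitian_conjTranspose_mul_self Z
  have hBr : B.rank = r := le_antisymm (B.rank_le_card_height.trans (by simp)) (by
    calc r = Z.rank := hZ.symm
      _ = (A * B).rank := by rw [hAB]
      _ ≤ B.rank := Matrix.rank_mul_le_right A B)
  have hTt : Bᴴ * B = Bᵀ * B := by rw [Matrix.conjTranspose_eq_transpose_of_trivial]
  have hT : (Bᵀ * B).IsHermitian := hTt ▸ hBh
  have esBT : ∀ k, es hBh k = es hT k := congrFun (es_congr hTt hBh hT)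
  have hGmat : Aᴴ * A = B * Bᵀ := by
    rw [Matrix.conjTranspose_eq_transpose_of_trivial, hbal]
  have hG : (B * Bᵀ).IsHermitian := hGmat ▸ hAh
  have esAG : ∀ k, es hAh k = es hG k := congrFun (es_congr hGmat hAh hG)
  have hPT : (Bᵀ * B).PosSemidef := hTt ▸ Matrix.posSemidef_conjTranspose_mul_self B
  have hPG : (B * Bᵀ).PosSemidef := by
    have h0 : B * Bᴴ = B * Bᵀ := by rw [Matrix.conjTranspose_eq_transpose_of_trivial]
    exact h0 ▸ Matrix.posSemidef_self_mul_conjTranspose B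
  have hTrk : (Bᵀ * B).rank = r := by rw [Matrix.rank_transpose_mul_self]; exact hBr
  have hGrk : (B * Bᵀ).rank = r := by rw [Matrix.rank_self_mul_transpose]; exact hBr
  have eTmin_pos : 0 < es hT ⟨b-r, hbr⟩ := es_pos_of_rank hPT hTrk hr hbr
  have hidxG : (⟨r - r, by omega⟩ : Fin r) = ⟨0, hr⟩ := by ext; simp
  have eGmin_pos : 0 < es hG ⟨0, hr⟩ := by
    have := es_pos_of_rank hPG hGrk hr (by omega)
    rwa [hidxG] at this
  have eTtop_pos : 0 < es hT ⟨b-1, hb1⟩ :=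
    lt_of_lt_of_le eTmin_pos (es_monotone hT (by rw [Fin.le_def]; simp; omega))
  have eGtop_pos : 0 < es hG ⟨r-1, hr1⟩ :=
    lt_of_lt_of_le eGmin_pos (es_monotone hG (by rw [Fin.le_def]; simp))
  have hsymT : (Bᵀ * B)ᵀ = Bᵀ * B := by
    rw [Matrix.transpose_mul, Matrix.transpose_transpose]
  have hsymG : (B * Bᵀ)ᵀ = B * Bᵀ := by
    rw [Matrix.transpose_mul, Matrix.transpose_transpose]
  have htrans1 : ∀ k, 0 < es hT k → ∃ i, es hG i = es hT k := by
    intro k hk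
    obtain ⟨hy, heG⟩ := eig_transfer B ((oe hT).basis_ne_zero k) (ne_of_gt hk) ((oe hT).eig k)
    exact (oe hG).mem_of_eigenvector hsymG hy heG
  have htrans2 : ∀ i, 0 < es hG i → ∃ k, es hT k = es hG i := by
    intro i hi
    have he' : ((Bᵀ)ᵀ * (Bᵀ)) *ᵥ (sbasis hG i) = es hG i • sbasis hG i := by
      rw [Matrix.transpose_transpose]; exact (oe hG).eig i
    obtain ⟨hx, heT⟩ := eig_transfer Bᵀ ((oe hG).basis_ne_zero i) (ne_of_gt hi) he'
    rw [Matrix.transpose_transpose] at heT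
    exact (oe hT).mem_of_eigenvector hsymT hx heT
  have eq_top : es hT ⟨b-1, hb1⟩ = es hG ⟨r-1, hr1⟩ := by
    apply le_antisymm
    · obtain ⟨i, hi⟩ := htrans1 ⟨b-1, hb1⟩ eTtop_pos
      rw [← hi]
      exact es_monotone hG (by rw [Fin.le_def]; simp; omega)
    · obtain ⟨k, hk⟩ := htrans2 ⟨r-1, hr1⟩ eGtop_pos
      rw [← hk]
      exact es_monotone hT (by rw [Fin.le_def]; simp; omega)
  have eq_min : es hT ⟨b-r, hbr⟩ = es hG ⟨0, hr⟩ := by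
    apply le_antisymm
    · obtain ⟨k, hk⟩ := htrans2 ⟨0, hr⟩ eGmin_pos
      rw [← hk]
      exact es_le_of_pos hPT hTrk hbr k (by rw [hk]; exact eGmin_pos)
    · obtain ⟨i, hi⟩ := htrans1 ⟨b-r, hbr⟩ eTmin_pos
      rw [← hi]
      exact es_monotone hG (by rw [Fin.le_def]; simp)
  have h5 : Aᵀ * (A * B) = B * (Bᵀ * B) := by
    rw [← Matrix.mul_assoc, hbal, Matrix.mul_assoc]
  have hZmat : Zᴴ * Z = (Bᵀ * B) * (Bᵀ * B) := by
    calc Zᴴ * Z = (A * B)ᴴ * (A * B) := by rw [hAB]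
      _ = (Bᵀ * B) * (Bᵀ * B) := by
          simp only [Matrix.conjTranspose_eq_transpose_of_trivial,
            Matrix.transpose_mul, Matrix.mul_assoc]
          rw [h5]
  have hZ' : ((Bᵀ * B) * (Bᵀ * B)).IsHermitian := hZmat ▸ hZh
  have esZZ : ∀ k, es hZh k = es hZ' k := congrFun (es_congr hZmat hZh hZ')
  have hON : ONEig ((Bᵀ * B) * (Bᵀ * B)) (sbasis hT) (fun k => es hT k ^ 2) := by
    refine ⟨(oe hT).ortho, (oe hT).complete, fun k => ?_⟩
    rw [← Matrix.mulVec_mulVec, (oe hT).eig k, Matrix.mulVec_smul, (oe hT).eig k,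
      smul_smul, ← sq]
  have hmono2 : Monotone (fun k => es hT k ^ 2) := by
    intro i j hij
    have h1 := es_nonneg hPT i
    have h2 := es_monotone hT hij
    simp only
    nlinarith
  have esq : ∀ k, es hZ' k = es hT k ^ 2 := fun k => es_uniq hZ' hON hmono2 k
  refine ⟨?_, ?_, ?_, ?_⟩
  · rw [esAG, esBT]; exact eq_top.symm
  · rw [esAG, esBT]; exact eq_min.symm
  · rw [esZZ, esq, esBT]
  · rw [esZZ, esq, esBT]

end SV8

theorem sv_es {m n : ℕ} (M : Matrix (Fin m) (Fin n) ℝ) (i : Fin n) (j : Fin n)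
    (hij : i.rev = j) :
    sv M i = Real.sqrt (SV8.es (Matrix.isHermitian_conjTranspose_mul_self M) j) := by
  subst hij; rfl

/-- Among all factorizations `Z = AB` of a rank-`r` matrix `Z`, the quantity
`(σ_1(A)² + σ_1(B)²)/min(σ_r(A)², σ_r(B)²)` is at least `2σ_1(Z)/σ_r(Z)`, and this
minimum value is attained by every balanced factorization (`AᵀA = BBᵀ`). -/
theorem stmt8 {a b r : ℕ} (hr : 0 < r) (hra : r ≤ a) (hrb : r ≤ b)
    (Z : Matrix (Fin a) (Fin b) ℝ) (hZ : Z.rank = r) :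
    (∀ (A : Matrix (Fin a) (Fin r) ℝ) (B : Matrix (Fin r) (Fin b) ℝ), A * B = Z →
      2 * sv Z ⟨0, lt_of_lt_of_le hr hrb⟩ /
          sv Z ⟨r - 1, lt_of_lt_of_le (Nat.sub_lt hr one_pos) hrb⟩
        ≤ (sv A ⟨0, hr⟩ ^ 2 + sv B ⟨0, lt_of_lt_of_le hr hrb⟩ ^ 2) /
            min (sv A ⟨r - 1, Nat.sub_lt hr one_pos⟩ ^ 2)
              (sv B ⟨r - 1, lt_of_lt_of_le (Nat.sub_lt hr one_pos) hrb⟩ ^ 2)) ∧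
    (∀ (A : Matrix (Fin a) (Fin r) ℝ) (B : Matrix (Fin r) (Fin b) ℝ), A * B = Z →
      Aᵀ * A = B * Bᵀ →
      (sv A ⟨0, hr⟩ ^ 2 + sv B ⟨0, lt_of_lt_of_le hr hrb⟩ ^ 2) /
          min (sv A ⟨r - 1, Nat.sub_lt hr one_pos⟩ ^ 2)
            (sv B ⟨r - 1, lt_of_lt_of_le (Nat.sub_lt hr one_pos) hrb⟩ ^ 2)
        = 2 * sv Z ⟨0, lt_of_lt_of_le hr hrb⟩ /
            sv Z ⟨r - 1, lt_of_lt_of_le (Nat.sub_lt hr one_pos) hrb⟩) := by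
  have hb0 : 0 < b := lt_of_lt_of_le hr hrb
  have hb1 : b - 1 < b := by omega
  have hbr : b - r < b := by omega
  have hr1 : r - 1 < r := by omega
  have hrevZ0 : (⟨0, lt_of_lt_of_le hr hrb⟩ : Fin b).rev = ⟨b-1, hb1⟩ := by
    ext; simp [Fin.val_rev]
  have hrevZr : (⟨r - 1, lt_of_lt_of_le (Nat.sub_lt hr one_pos) hrb⟩ : Fin b).rev
      = ⟨b-r, hbr⟩ := by
    ext; simp only [Fin.val_rev]; omega
  have hrevA0 : (⟨0, hr⟩ : Fin r).rev = ⟨r-1, hr1⟩ := by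
    ext; simp [Fin.val_rev]
  have hrevAr : (⟨r - 1, Nat.sub_lt hr one_pos⟩ : Fin r).rev = ⟨0, hr⟩ := by
    ext; simp only [Fin.val_rev]; omega
  constructor
  · intro A B hAB
    rw [sv_es Z _ _ hrevZ0, sv_es Z _ _ hrevZr, sv_es A _ _ hrevA0, sv_es A _ _ hrevAr,
      sv_es B _ _ hrevZ0, sv_es B _ _ hrevZr,
      Real.sq_sqrt (SV8.es_nonneg (Matrix.posSemidef_conjTranspose_mul_self A) _),
      Real.sq_sqrt (SV8.es_nonneg (Matrix.posSemidef_conjTranspose_mul_self A) _),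
      Real.sq_sqrt (SV8.es_nonneg (Matrix.posSemidef_conjTranspose_mul_self B) _),
      Real.sq_sqrt (SV8.es_nonneg (Matrix.posSemidef_conjTranspose_mul_self B) _)]
    exact SV8.key1 hr hrb Z hZ A B hAB hb1 hbr hr1
  · intro A B hAB hbal
    rw [sv_es Z _ _ hrevZ0, sv_es Z _ _ hrevZr, sv_es A _ _ hrevA0, sv_es A _ _ hrevAr,
      sv_es B _ _ hrevZ0, sv_es B _ _ hrevZr,
      Real.sq_sqrt (SV8.es_nonneg (Matrix.posSemidef_conjTranspose_mul_self A) _),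
      Real.sq_sqrt (SV8.es_nonneg (Matrix.posSemidef_conjTranspose_mul_self A) _),
      Real.sq_sqrt (SV8.es_nonneg (Matrix.posSemidef_conjTranspose_mul_self B) _),
      Real.sq_sqrt (SV8.es_nonneg (Matrix.posSemidef_conjTranspose_mul_self B) _)]
    obtain ⟨o1, o2, o3, o4⟩ := SV8.key2 hr hrb Z hZ A B hAB hbal hb1 hbr hr1
    rw [o1, o2, o3, o4, min_self,
      Real.sqrt_sq (SV8.es_nonneg (Matrix.posSemidef_conjTranspose_mul_self B) _),
      Real.sqrt_sq (SV8.es_nonneg (Matrix.posSemidef_conjTranspose_mul_self B) _),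
      two_mul]
end

section
/- Let (A,B) be a global minimizer of f(A,B) = (1/2)‖Z − AB‖_F² with rk(Z) ≥ r, so that AB is the best rank-r approximation of Z. Then the largest eigenvalue of the Hessian of f at (A,B) equals σ_1(A)² + σ_1(B)². -/
open Matrix Kronecker

open Matrix

/-- The commutation matrix `K_{k,ℓ}` satisfying `vec(Xᵀ) = K_{k,ℓ} vec(X)` for
`X ∈ ℝ^{k×ℓ}`, in index form. -/
def commM (k l : ℕ) : Matrix (Fin k × Fin l) (Fin l × Fin k) ℝ :=
  Matrix.of fun p q => if p.1 = q.2 ∧ p.2 = q.1 then 1 else 0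

namespace Lora9

/-! ### Scalar polynomial lemmas -/

lemma linear_coeff_zero {c d : ℝ} (hd : 0 ≤ d) (h : ∀ t : ℝ, 0 ≤ c * t + d * t ^ 2) :
    c = 0 := by
  by_contra hc
  have hd1 : (0:ℝ) < d + 1 := by linarith
  set t : ℝ := -c / (d + 1) with ht
  have h2 : (d + 1) ^ 2 * (c * t + d * t ^ 2) = -(c ^ 2) * (d + 1) + d * c ^ 2 := by
    have e : t * (d + 1) = -c := by rw [ht, div_mul_cancel₀ _ (ne_of_gt hd1)]
    linear_combination ((d + 1) * c + d * (t * (d + 1) - c)) * e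
  have h3 : 0 ≤ (d + 1) ^ 2 * (c * t + d * t ^ 2) :=
    mul_nonneg (by positivity) (h t)
  have hc2 : 0 < c ^ 2 := by positivity
  nlinarith

lemma quad_coeff_nonneg {c2 c3 c4 : ℝ} (h4 : 0 ≤ c4)
    (h : ∀ t : ℝ, 0 ≤ c2 * t ^ 2 + c3 * t ^ 3 + c4 * t ^ 4) : 0 ≤ c2 := by
  by_contra hc
  push_neg at hc
  set D : ℝ := |c3| + c4 + 1 with hD
  have hD0 : 0 < D := by positivity
  set t : ℝ := min 1 (-c2 / D) with htdef
  have ht0 : 0 < t := lt_min one_pos (div_pos (by linarith) hD0)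
  have ht1 : t ≤ 1 := min_le_left _ _
  have htD : t * D ≤ -c2 := by
    have ht2 : t ≤ -c2 / D := min_le_right _ _
    calc t * D ≤ (-c2 / D) * D := mul_le_mul_of_nonneg_right ht2 hD0.le
      _ = -c2 := by field_simp
  have s1 : c3 * t ≤ |c3| * t := mul_le_mul_of_nonneg_right (le_abs_self c3) ht0.le
  have s2 : c4 * t ^ 2 ≤ c4 * t := by
    have h5 : 0 ≤ c4 * (t * (1 - t)) := mul_nonneg h4 (mul_nonneg ht0.le (by linarith))
    nlinarith [h5]
  have s3 : c2 + c3 * t + c4 * t ^ 2 < 0 := by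
    have hlt : (|c3| + c4) * t < D * t := by
      apply mul_lt_mul_of_pos_right _ ht0
      rw [hD]; linarith
    have hDt : D * t ≤ -c2 := by linarith [htD, mul_comm t D]
    nlinarith
  have s4 : c2 * t ^ 2 + c3 * t ^ 3 + c4 * t ^ 4 = (c2 + c3 * t + c4 * t ^ 2) * t ^ 2 := by ring
  have s5 : (c2 + c3 * t + c4 * t ^ 2) * t ^ 2 < 0 := mul_neg_of_neg_of_pos s3 (by positivity)
  have := h t
  rw [s4] at this
  linarith

/-! ### Frobenius inner product via trace -/

variable {m n p q : Type*} [Fintype m] [Fintype n] [Fintype p] [Fintype q]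

/-- Frobenius inner product. -/
noncomputable def IP (M N : Matrix m n ℝ) : ℝ := Matrix.trace (M * Nᵀ)

/-- Squared Frobenius norm. -/
noncomputable def F2 (M : Matrix m n ℝ) : ℝ := IP M M

lemma IP_sum (M N : Matrix m n ℝ) : IP M N = ∑ i, ∑ j, M i j * N i j := by
  simp [IP, Matrix.trace, Matrix.diag, Matrix.mul_apply]

lemma F2_sum (M : Matrix m n ℝ) : F2 M = ∑ i, ∑ j, (M i j) ^ 2 := by
  rw [F2, IP_sum]
  refine Finset.sum_congr rfl fun i _ => Finset.sum_congr rfl fun j _ => (sq (M i j)).symm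

lemma F2_nonneg (M : Matrix m n ℝ) : 0 ≤ F2 M := by
  rw [F2_sum]
  exact Finset.sum_nonneg fun i _ => Finset.sum_nonneg fun j _ => sq_nonneg _

lemma IP_comm (M N : Matrix m n ℝ) : IP M N = IP N M := by
  rw [IP, IP, ← Matrix.trace_transpose (M * Nᵀ), Matrix.transpose_mul, Matrix.transpose_transpose]

lemma IP_add_right (M N P : Matrix m n ℝ) : IP M (N + P) = IP M N + IP M P := by
  simp [IP, Matrix.transpose_add, Matrix.mul_add]

lemma IP_add_left (M N P : Matrix m n ℝ) : IP (M + N) P = IP M P + IP N P := by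
  simp [IP, Matrix.add_mul]

lemma IP_smul_right (c : ℝ) (M N : Matrix m n ℝ) : IP M (c • N) = c * IP M N := by
  simp [IP, Matrix.transpose_smul, Matrix.mul_smul]

lemma IP_smul_left (c : ℝ) (M N : Matrix m n ℝ) : IP (c • M) N = c * IP M N := by
  simp [IP, Matrix.smul_mul]

lemma F2_add (M N : Matrix m n ℝ) : F2 (M + N) = F2 M + 2 * IP M N + F2 N := by
  have h : IP N M = IP M N := IP_comm N M
  simp only [F2, IP_add_left, IP_add_right, h]
  ring

lemma F2_smul (c : ℝ) (M : Matrix m n ℝ) : F2 (c • M) = c ^ 2 * F2 M := by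
  rw [F2, IP_smul_left, IP_smul_right, F2]
  ring

/-! ### trace-shuffling identities -/

lemma I1 (X : Matrix m n ℝ) (B : Matrix n p ℝ) : IP X (X * (B * Bᵀ)) = F2 (X * B) := by
  simp only [IP, F2, Matrix.transpose_mul, Matrix.transpose_transpose, Matrix.mul_assoc]

lemma I2 (X : Matrix m n ℝ) (A : Matrix m q ℝ) (Y : Matrix q p ℝ) (B : Matrix n p ℝ) :
    IP X (A * Y * Bᵀ) = IP (A * Y) (X * B) := by
  rw [IP, ← Matrix.trace_transpose, IP]
  simp only [Matrix.transpose_mul, Matrix.transpose_transpose, Matrix.mul_assoc]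

lemma I3 (X : Matrix m n ℝ) (E : Matrix m p ℝ) (Y : Matrix n p ℝ) :
    IP X (E * Yᵀ) = IP E (X * Y) := by
  rw [IP, ← Matrix.trace_transpose, IP]
  simp only [Matrix.transpose_mul, Matrix.transpose_transpose, Matrix.mul_assoc]

lemma I4 (Y : Matrix n p ℝ) (A : Matrix m n ℝ) : IP Y ((Aᵀ * A) * Y) = F2 (A * Y) := by
  rw [IP, F2, IP]
  simp only [Matrix.transpose_mul, Matrix.transpose_transpose]
  rw [Matrix.trace_mul_comm (A * Y), Matrix.trace_mul_comm Y]
  simp only [Matrix.mul_assoc]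

lemma I5 (Y : Matrix n p ℝ) (A : Matrix m n ℝ) (X : Matrix m q ℝ) (B : Matrix q p ℝ) :
    IP Y (Aᵀ * X * B) = IP (A * Y) (X * B) := by
  rw [IP, IP]
  simp only [Matrix.transpose_mul, Matrix.transpose_transpose]
  rw [Matrix.trace_mul_comm (A * Y), Matrix.trace_mul_comm Y]
  simp only [Matrix.mul_assoc]

lemma I6 (Y : Matrix n p ℝ) (X : Matrix m n ℝ) (E : Matrix m p ℝ) :
    IP Y (Xᵀ * E) = IP E (X * Y) := by
  rw [IP, ← Matrix.trace_transpose, IP]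
  simp only [Matrix.transpose_mul, Matrix.transpose_transpose]
  simp only [Matrix.mul_assoc]
  rw [Matrix.trace_mul_comm Xᵀ (E * Yᵀ)]
  simp only [Matrix.mul_assoc]

/-! ### Rayleigh quotient bounds -/

lemma rayleigh_le {n : ℕ} {M : Matrix (Fin n) (Fin n) ℝ} (hM : M.IsHermitian) {μ : ℝ}
    (hμ : ∀ i, hM.eigenvalues i ≤ μ) (x : Fin n → ℝ) :
    x ⬝ᵥ (M *ᵥ x) ≤ μ * (x ⬝ᵥ x) := by
  classical
  set U : Matrix (Fin n) (Fin n) ℝ := (hM.eigenvectorUnitary : Matrix (Fin n) (Fin n) ℝ) with hU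
  have hstar : star U = Uᵀ := by
    ext i j
    simp [Matrix.star_apply]
  have hUU : U * Uᵀ = 1 := by
    rw [← hstar]
    exact (Matrix.mem_unitaryGroup_iff).mp hM.eigenvectorUnitary.2
  have hspec := hM.spectral_theorem
  rw [Unitary.conjStarAlgAut_apply, ← hU, hstar] at hspec
  set y : Fin n → ℝ := Uᵀ *ᵥ x with hy
  have hyU : x ᵥ* U = y := by rw [hy, Matrix.mulVec_transpose]
  have hyy : y ⬝ᵥ y = x ⬝ᵥ x := by
    calc y ⬝ᵥ y = y ⬝ᵥ (Uᵀ *ᵥ x) := by rw [← hy]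
      _ = (y ᵥ* Uᵀ) ⬝ᵥ x := Matrix.dotProduct_mulVec _ _ _
      _ = (U *ᵥ y) ⬝ᵥ x := by rw [Matrix.vecMul_transpose]
      _ = ((U * Uᵀ) *ᵥ x) ⬝ᵥ x := by rw [hy, Matrix.mulVec_mulVec]
      _ = x ⬝ᵥ x := by rw [hUU, Matrix.one_mulVec]
  have hxMx : x ⬝ᵥ (M *ᵥ x) = ∑ i, hM.eigenvalues i * (y i) ^ 2 := by
    conv_lhs => rw [hspec]
    rw [← Matrix.mulVec_mulVec, ← Matrix.mulVec_mulVec, Matrix.dotProduct_mulVec x U, hyU]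
    simp [Matrix.mulVec_diagonal, dotProduct, ← hy]
    exact Finset.sum_congr rfl fun i _ => by ring
  rw [hxMx, ← hyy]
  have h2 : μ * (y ⬝ᵥ y) = ∑ i, μ * (y i) ^ 2 := by
    simp [dotProduct, Finset.mul_sum, sq]
  rw [h2]
  exact Finset.sum_le_sum fun i _ => mul_le_mul_of_nonneg_right (hμ i) (sq_nonneg _)

lemma dot_mulVec_self {m n : Type*} [Fintype m] [Fintype n] (A : Matrix m n ℝ) (u : n → ℝ) :
    (A *ᵥ u) ⬝ᵥ (A *ᵥ u) = u ⬝ᵥ ((Aᵀ * A) *ᵥ u) := by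
  rw [Matrix.dotProduct_mulVec, ← Matrix.mulVec_mulVec, Matrix.mulVec_transpose,
    dotProduct_comm]

lemma top_eig {n : ℕ} (hn : 0 < n) (f : Fin n → ℝ) (j : Fin n) :
    f j ≤ (f ∘ ⇑(Tuple.sort f)) (Fin.rev ⟨0, hn⟩) := by
  have hj : (Tuple.sort f).symm j ≤ Fin.rev ⟨0, hn⟩ := by
    rw [Fin.le_def, Fin.val_rev]
    simp only [Fin.val_mk]
    have := ((Tuple.sort f).symm j).isLt
    omega
  calc f j = (f ∘ ⇑(Tuple.sort f)) ((Tuple.sort f).symm j) := by simp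
    _ ≤ (f ∘ ⇑(Tuple.sort f)) (Fin.rev ⟨0, hn⟩) := Tuple.monotone_sort f hj

lemma F2_mul_le_left {a r c : ℕ} (A : Matrix (Fin a) (Fin r) ℝ) (μ : ℝ)
    (hray : ∀ u : Fin r → ℝ, (A *ᵥ u) ⬝ᵥ (A *ᵥ u) ≤ μ * (u ⬝ᵥ u))
    (Y : Matrix (Fin r) (Fin c) ℝ) : F2 (A * Y) ≤ μ * F2 Y := by
  have h1 : F2 (A * Y) = ∑ l, (A *ᵥ (fun k => Y k l)) ⬝ᵥ (A *ᵥ (fun k => Y k l)) := by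
    rw [F2_sum, Finset.sum_comm]
    refine Finset.sum_congr rfl fun l _ => Finset.sum_congr rfl fun i _ => ?_
    simp [Matrix.mulVec, dotProduct, Matrix.mul_apply, sq]
  have h2 : μ * F2 Y = ∑ l, μ * ((fun k => Y k l) ⬝ᵥ (fun k => Y k l)) := by
    rw [F2_sum, Finset.sum_comm, Finset.mul_sum]
    refine Finset.sum_congr rfl fun l _ => ?_
    simp [dotProduct, sq]
  rw [h1, h2]
  exact Finset.sum_le_sum fun l _ => hray _

lemma F2_mul_le_right {r c a : ℕ} (B : Matrix (Fin r) (Fin c) ℝ) (μ : ℝ)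
    (hray : ∀ u : Fin r → ℝ, (Bᵀ *ᵥ u) ⬝ᵥ (Bᵀ *ᵥ u) ≤ μ * (u ⬝ᵥ u))
    (X : Matrix (Fin a) (Fin r) ℝ) : F2 (X * B) ≤ μ * F2 X := by
  have h1 : F2 (X * B) = ∑ i, (Bᵀ *ᵥ (fun j => X i j)) ⬝ᵥ (Bᵀ *ᵥ (fun j => X i j)) := by
    rw [F2_sum]
    refine Finset.sum_congr rfl fun i _ => Finset.sum_congr rfl fun l _ => ?_
    simp only [Matrix.mulVec, dotProduct, Matrix.mul_apply, Matrix.transpose_apply, sq]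
    congr 1 <;> exact Finset.sum_congr rfl fun j _ => mul_comm _ _
  have h2 : μ * F2 X = ∑ i, μ * ((fun j => X i j) ⬝ᵥ (fun j => X i j)) := by
    rw [F2_sum, Finset.mul_sum]
    refine Finset.sum_congr rfl fun i _ => ?_
    simp [dotProduct, sq]
  rw [h1, h2]
  exact Finset.sum_le_sum fun i _ => hray _

lemma ray_transpose {r c : ℕ} (B : Matrix (Fin r) (Fin c) ℝ) (μ : ℝ) (hμ0 : 0 ≤ μ)
    (hray : ∀ u : Fin c → ℝ, (B *ᵥ u) ⬝ᵥ (B *ᵥ u) ≤ μ * (u ⬝ᵥ u)) :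
    ∀ w : Fin r → ℝ, (Bᵀ *ᵥ w) ⬝ᵥ (Bᵀ *ᵥ w) ≤ μ * (w ⬝ᵥ w) := by
  intro w
  set u : Fin c → ℝ := Bᵀ *ᵥ w with hu
  have h1 : u ⬝ᵥ u = w ⬝ᵥ (B *ᵥ u) :=
    calc u ⬝ᵥ u = u ⬝ᵥ (Bᵀ *ᵥ w) := by rw [← hu]
      _ = (u ᵥ* Bᵀ) ⬝ᵥ w := Matrix.dotProduct_mulVec _ _ _
      _ = (B *ᵥ u) ⬝ᵥ w := by rw [Matrix.vecMul_transpose]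
      _ = w ⬝ᵥ (B *ᵥ u) := dotProduct_comm _ _
  have hcs : (w ⬝ᵥ (B *ᵥ u)) ^ 2 ≤ (w ⬝ᵥ w) * ((B *ᵥ u) ⬝ᵥ (B *ᵥ u)) := by
    have := Finset.sum_mul_sq_le_sq_mul_sq Finset.univ w (B *ᵥ u)
    simpa [dotProduct, sq] using this
  have h2 : (B *ᵥ u) ⬝ᵥ (B *ᵥ u) ≤ μ * (u ⬝ᵥ u) := hray u
  have hu0 : 0 ≤ u ⬝ᵥ u := Finset.sum_nonneg fun i _ => mul_self_nonneg _
  have hw0 : 0 ≤ w ⬝ᵥ w := Finset.sum_nonneg fun i _ => mul_self_nonneg _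
  rcases eq_or_lt_of_le hu0 with h0 | h0
  · rw [← h0]
    positivity
  · nlinarith [mul_le_mul_of_nonneg_left h2 hw0]

/-! ### entries of the Hessian -/

def Xof {a b r : ℕ} (v : (Fin r × Fin a) ⊕ (Fin b × Fin r) → ℝ) :
    Matrix (Fin a) (Fin r) ℝ := Matrix.of fun i j => v (Sum.inl (j, i))
def Yof {a b r : ℕ} (v : (Fin r × Fin a) ⊕ (Fin b × Fin r) → ℝ) :
    Matrix (Fin r) (Fin b) ℝ := Matrix.of fun k l => v (Sum.inr (l, k))

lemma kcomm1 {a b r : ℕ} (E : Matrix (Fin a) (Fin b) ℝ) (j : Fin r) (i : Fin a)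
    (l : Fin b) (k : Fin r) :
    (((1 : Matrix (Fin r) (Fin r) ℝ) ⊗ₖ E) * commM r b) (j, i) (l, k)
      = if j = k then E i l else 0 := by
  rw [Matrix.mul_apply, Fintype.sum_prod_type]
  simp [commM, Matrix.one_apply, ite_and, Finset.sum_ite_eq, Finset.sum_ite_eq',
    mul_ite, ite_mul, eq_comm]

lemma kcomm2 {a b r : ℕ} (E : Matrix (Fin a) (Fin b) ℝ) (l : Fin b) (k : Fin r)
    (j : Fin r) (i : Fin a) :
    (((E)ᵀ ⊗ₖ (1 : Matrix (Fin r) (Fin r) ℝ)) * commM a r) (l, k) (j, i)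
      = if k = j then E i l else 0 := by
  rw [Matrix.mul_apply, Fintype.sum_prod_type]
  simp [commM, Matrix.one_apply, ite_and, Finset.sum_ite_eq, Finset.sum_ite_eq',
    mul_ite, ite_mul, eq_comm]

lemma Happ1 {a b r : ℕ} (A : Matrix (Fin a) (Fin r) ℝ) (B : Matrix (Fin r) (Fin b) ℝ)
    (Z : Matrix (Fin a) (Fin b) ℝ) (v : (Fin r × Fin a) ⊕ (Fin b × Fin r) → ℝ)
    (j : Fin r) (i : Fin a) :
    ((Matrix.fromBlocks
        ((B * Bᵀ) ⊗ₖ (1 : Matrix (Fin a) (Fin a) ℝ)) (B ⊗ₖ A)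
        (Bᵀ ⊗ₖ Aᵀ) ((1 : Matrix (Fin b) (Fin b) ℝ) ⊗ₖ (Aᵀ * A))
      + Matrix.fromBlocks 0
          (((1 : Matrix (Fin r) (Fin r) ℝ) ⊗ₖ (A * B - Z)) * commM r b)
          (((A * B - Z)ᵀ ⊗ₖ (1 : Matrix (Fin r) (Fin r) ℝ)) * commM a r)
          0).mulVec v) (Sum.inl (j, i)) =
      (Xof v * (B * Bᵀ)) i j + ((A * Yof v * Bᵀ) i j + ((A * B - Z) * (Yof v)ᵀ) i j) := by
  simp only [Matrix.mulVec, dotProduct, Fintype.sum_sum_type, Fintype.sum_prod_type,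
    Matrix.add_apply, Matrix.fromBlocks_apply₁₁, Matrix.fromBlocks_apply₁₂, Matrix.zero_apply,
    Matrix.kroneckerMap_apply, Matrix.one_apply, kcomm1, add_zero, zero_add]
  have hsplit : ∀ (l : Fin b), ∑ k : Fin r,
      (B j l * A i k + if j = k then (A * B - Z) i l else 0) * v (Sum.inr (l, k))
      = (∑ k : Fin r, B j l * A i k * v (Sum.inr (l, k))) + (A * B - Z) i l * v (Sum.inr (l, j)) := by
    intro l
    rw [Finset.sum_congr rfl (fun k _ => add_mul _ _ _), Finset.sum_add_distrib]
    congr 1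
    simp [ite_mul, Finset.sum_ite_eq]
  rw [Finset.sum_congr rfl (fun l _ => hsplit l), Finset.sum_add_distrib]
  congr 1
  · have hBB : ∀ x y, (B * Bᵀ) x y = (B * Bᵀ) y x := fun x y => by
      simp only [Matrix.mul_apply, Matrix.transpose_apply]
      exact Finset.sum_congr rfl fun l _ => mul_comm _ _
    simp only [mul_ite, mul_one, mul_zero, ite_mul, zero_mul, Finset.sum_ite_eq]
    simp only [Finset.mem_univ, if_true, Matrix.mul_apply, Xof, Matrix.of_apply]
    refine Finset.sum_congr rfl fun j' _ => ?_
    rw [mul_comm]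
    congr 1
    exact Finset.sum_congr rfl fun x _ => by
      rw [Matrix.transpose_apply, Matrix.transpose_apply, mul_comm]
  congr 1
  · simp only [Matrix.mul_apply, Matrix.transpose_apply, Yof, Matrix.of_apply, Finset.sum_mul]
    exact Finset.sum_congr rfl fun l _ => Finset.sum_congr rfl fun k _ => by ring

lemma Happ2 {a b r : ℕ} (A : Matrix (Fin a) (Fin r) ℝ) (B : Matrix (Fin r) (Fin b) ℝ)
    (Z : Matrix (Fin a) (Fin b) ℝ) (v : (Fin r × Fin a) ⊕ (Fin b × Fin r) → ℝ)
    (l : Fin b) (k : Fin r) :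
    ((Matrix.fromBlocks
        ((B * Bᵀ) ⊗ₖ (1 : Matrix (Fin a) (Fin a) ℝ)) (B ⊗ₖ A)
        (Bᵀ ⊗ₖ Aᵀ) ((1 : Matrix (Fin b) (Fin b) ℝ) ⊗ₖ (Aᵀ * A))
      + Matrix.fromBlocks 0
          (((1 : Matrix (Fin r) (Fin r) ℝ) ⊗ₖ (A * B - Z)) * commM r b)
          (((A * B - Z)ᵀ ⊗ₖ (1 : Matrix (Fin r) (Fin r) ℝ)) * commM a r)
          0).mulVec v) (Sum.inr (l, k)) =
      ((Aᵀ * A) * Yof v) k l + ((Aᵀ * Xof v * B) k l + ((Xof v)ᵀ * (A * B - Z)) k l) := by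
  simp only [Matrix.mulVec, dotProduct, Fintype.sum_sum_type, Fintype.sum_prod_type,
    Matrix.add_apply, Matrix.fromBlocks_apply₂₁, Matrix.fromBlocks_apply₂₂, Matrix.zero_apply,
    Matrix.kroneckerMap_apply, Matrix.one_apply, kcomm2, add_zero, zero_add]
  have hsplit : ∀ (j : Fin r), ∑ i : Fin a,
      (Bᵀ l j * Aᵀ k i + if k = j then (A * B - Z) i l else 0) * v (Sum.inl (j, i))
      = (∑ i : Fin a, Bᵀ l j * Aᵀ k i * v (Sum.inl (j, i)))
        + (if k = j then ∑ i : Fin a, (A * B - Z) i l * v (Sum.inl (j, i)) else 0) := by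
    intro j
    rw [Finset.sum_congr rfl (fun i _ => add_mul _ _ _), Finset.sum_add_distrib]
    congr 1
    split
    · rfl
    · simp
  rw [Finset.sum_congr rfl (fun j _ => hsplit j), Finset.sum_add_distrib]
  rw [add_comm]
  congr 1
  · simp only [ite_mul, one_mul, zero_mul, Matrix.mul_apply, Yof, Matrix.of_apply,
      Finset.sum_mul, Finset.sum_ite_irrel, Finset.sum_const_zero, Finset.sum_ite_eq,
      Finset.mem_univ, if_true]
  · have hE : (∑ x : Fin r, if k = x then ∑ i : Fin a, (A * B - Z) i l * v (Sum.inl (x, i)) else 0)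
        = ((Xof v)ᵀ * (A * B - Z)) k l := by
      rw [Finset.sum_ite_eq]
      simp only [Finset.mem_univ, if_true, Matrix.mul_apply, Xof, Matrix.transpose_apply,
        Matrix.of_apply]
      exact Finset.sum_congr rfl fun i _ => mul_comm _ _
    rw [hE]
    congr 1
    simp only [Matrix.mul_apply, Matrix.transpose_apply, Xof, Matrix.of_apply, Finset.sum_mul]
    exact Finset.sum_congr rfl fun x _ => Finset.sum_congr rfl fun i _ => by ring

end Lora9

open Lora9

set_option maxHeartbeats 1600000 in
/-- At a global minimizer `(A,B)` of `f` with `rk Z ≥ r`, the largest eigenvalue of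
the Hessian of `f` at `(A,B)` equals `σ_1(A)² + σ_1(B)²`. -/
theorem stmt9 {a b r : ℕ} (hr : 0 < r) (hra : r ≤ a) (hrb : r ≤ b)
    (Z : Matrix (Fin a) (Fin b) ℝ) (hZ : r ≤ Z.rank)
    (A : Matrix (Fin a) (Fin r) ℝ) (B : Matrix (Fin r) (Fin b) ℝ)
    (hmin : ∀ (A' : Matrix (Fin a) (Fin r) ℝ) (B' : Matrix (Fin r) (Fin b) ℝ),
      floss Z A B ≤ floss Z A' B') :
    IsGreatest
      {c : ℝ | ∃ v : (Fin r × Fin a) ⊕ (Fin b × Fin r) → ℝ, v ≠ 0 ∧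
        (Matrix.fromBlocks
            ((B * Bᵀ) ⊗ₖ (1 : Matrix (Fin a) (Fin a) ℝ)) (B ⊗ₖ A)
            (Bᵀ ⊗ₖ Aᵀ) ((1 : Matrix (Fin b) (Fin b) ℝ) ⊗ₖ (Aᵀ * A))
          + Matrix.fromBlocks 0
              (((1 : Matrix (Fin r) (Fin r) ℝ) ⊗ₖ (A * B - Z)) * commM r b)
              (((A * B - Z)ᵀ ⊗ₖ (1 : Matrix (Fin r) (Fin r) ℝ)) * commM a r)
              0).mulVec v = c • v}
      (sv A ⟨0, hr⟩ ^ 2 + sv B ⟨0, lt_of_lt_of_le hr hrb⟩ ^ 2) := by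
  classical
  have hb : 0 < b := lt_of_lt_of_le hr hrb
  -- top eigenvalues
  have hAh : (Aᴴ * A).IsHermitian := Matrix.isHermitian_conjTranspose_mul_self A
  have hBh : (Bᴴ * B).IsHermitian := Matrix.isHermitian_conjTranspose_mul_self B
  set μA : ℝ := ((Matrix.isHermitian_conjTranspose_mul_self A).eigenvalues ∘
      ⇑(Tuple.sort (Matrix.isHermitian_conjTranspose_mul_self A).eigenvalues))
      ((⟨0, hr⟩ : Fin r).rev) with hμAdef
  set μB : ℝ := ((Matrix.isHermitian_conjTranspose_mul_self B).eigenvalues ∘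
      ⇑(Tuple.sort (Matrix.isHermitian_conjTranspose_mul_self B).eigenvalues))
      ((⟨0, lt_of_lt_of_le hr hrb⟩ : Fin b).rev) with hμBdef
  have hAc : Aᴴ = Aᵀ := Matrix.conjTranspose_eq_transpose_of_trivial A
  have hBc : Bᴴ = Bᵀ := Matrix.conjTranspose_eq_transpose_of_trivial B
  have hμAtop : ∀ jj, (Matrix.isHermitian_conjTranspose_mul_self A).eigenvalues jj ≤ μA :=
    fun jj => top_eig hr _ jj
  have hμBtop : ∀ jj, (Matrix.isHermitian_conjTranspose_mul_self B).eigenvalues jj ≤ μB :=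
    fun jj => top_eig hb _ jj
  have hμA0 : 0 ≤ μA :=
    (Matrix.posSemidef_conjTranspose_mul_self A).eigenvalues_nonneg _
  have hμB0 : 0 ≤ μB :=
    (Matrix.posSemidef_conjTranspose_mul_self B).eigenvalues_nonneg _
  have hsqA : sv A ⟨0, hr⟩ ^ 2 = μA := Real.sq_sqrt hμA0
  have hsqB : sv B ⟨0, lt_of_lt_of_le hr hrb⟩ ^ 2 = μB := Real.sq_sqrt hμB0
  -- Rayleigh bounds
  have rayA : ∀ x : Fin r → ℝ, x ⬝ᵥ ((Aᵀ * A) *ᵥ x) ≤ μA * (x ⬝ᵥ x) := by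
    intro x
    have h := rayleigh_le (Matrix.isHermitian_conjTranspose_mul_self A) hμAtop x
    rwa [hAc] at h
  have rayB : ∀ x : Fin b → ℝ, x ⬝ᵥ ((Bᵀ * B) *ᵥ x) ≤ μB * (x ⬝ᵥ x) := by
    intro x
    have h := rayleigh_le (Matrix.isHermitian_conjTranspose_mul_self B) hμBtop x
    rwa [hBc] at h
  have rayAv : ∀ u : Fin r → ℝ, (A *ᵥ u) ⬝ᵥ (A *ᵥ u) ≤ μA * (u ⬝ᵥ u) := by
    intro u
    rw [dot_mulVec_self]
    exact rayA u
  have rayBv : ∀ u : Fin b → ℝ, (B *ᵥ u) ⬝ᵥ (B *ᵥ u) ≤ μB * (u ⬝ᵥ u) := by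
    intro u
    rw [dot_mulVec_self]
    exact rayB u
  have rayBt : ∀ w : Fin r → ℝ, (Bᵀ *ᵥ w) ⬝ᵥ (Bᵀ *ᵥ w) ≤ μB * (w ⬝ᵥ w) :=
    ray_transpose B μB hμB0 rayBv
  have hF2A : ∀ Y' : Matrix (Fin r) (Fin b) ℝ, F2 (A * Y') ≤ μA * F2 Y' :=
    fun Y' => F2_mul_le_left A μA rayAv Y'
  have hF2B : ∀ X' : Matrix (Fin a) (Fin r) ℝ, F2 (X' * B) ≤ μB * F2 X' :=
    fun X' => F2_mul_le_right B μB rayBt X'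
  -- loss in F2 form
  have hfloss : ∀ (A' : Matrix (Fin a) (Fin r) ℝ) (B' : Matrix (Fin r) (Fin b) ℝ),
      floss Z A' B' = (1/2) * F2 (A' * B' - Z) := by
    intro A' B'
    rw [floss, F2_sum]
    congr 1
    refine Finset.sum_congr rfl fun i _ => Finset.sum_congr rfl fun j _ => ?_
    rw [Matrix.sub_apply]
    ring
  have hmin' : ∀ (A' : Matrix (Fin a) (Fin r) ℝ) (B' : Matrix (Fin r) (Fin b) ℝ),
      F2 (A * B - Z) ≤ F2 (A' * B' - Z) := by
    intro A' B'
    have h := hmin A' B'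
    rw [hfloss, hfloss] at h
    linarith
  -- first-order conditions
  have fo1 : ∀ X' : Matrix (Fin a) (Fin r) ℝ, IP (A * B - Z) (X' * B) = 0 := by
    intro X'
    have key : ∀ t : ℝ, 0 ≤ (2 * IP (A * B - Z) (X' * B)) * t + F2 (X' * B) * t ^ 2 := by
      intro t
      have h := hmin' (A + t • X') B
      have hexp : (A + t • X') * B - Z = (A * B - Z) + t • (X' * B) := by
        rw [Matrix.add_mul, Matrix.smul_mul]
        abel
      rw [hexp, F2_add, IP_smul_right, F2_smul] at h
      nlinarith [h]
    have h0 := linear_coeff_zero (F2_nonneg (X' * B)) key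
    linarith
  have fo2 : ∀ Y' : Matrix (Fin r) (Fin b) ℝ, IP (A * B - Z) (A * Y') = 0 := by
    intro Y'
    have key : ∀ t : ℝ, 0 ≤ (2 * IP (A * B - Z) (A * Y')) * t + F2 (A * Y') * t ^ 2 := by
      intro t
      have h := hmin' A (B + t • Y')
      have hexp : A * (B + t • Y') - Z = (A * B - Z) + t • (A * Y') := by
        rw [Matrix.mul_add, Matrix.mul_smul]
        abel
      rw [hexp, F2_add, IP_smul_right, F2_smul] at h
      nlinarith [h]
    have h0 := linear_coeff_zero (F2_nonneg (A * Y')) key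
    linarith
  have foB : (A * B - Z) * Bᵀ = 0 := by
    ext i j
    have h := fo1 (Matrix.single i j (1:ℝ))
    rw [IP_sum] at h
    simp only [Matrix.mul_apply, Matrix.single, Matrix.of_apply, ite_and, ite_mul,
      zero_mul, one_mul, Finset.sum_ite_irrel, Finset.sum_const_zero, Finset.sum_ite_eq,
      Finset.mem_univ, if_true, mul_ite, mul_zero] at h
    simp only [Matrix.mul_apply, Matrix.transpose_apply, Matrix.zero_apply]
    exact h
  have foA : Aᵀ * (A * B - Z) = 0 := by
    ext k l
    have h := fo2 (Matrix.single k l (1:ℝ))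
    rw [IP_sum] at h
    simp only [Matrix.mul_apply, Matrix.single, Matrix.of_apply, ite_and, ite_mul,
      zero_mul, one_mul, Finset.sum_ite_irrel, Finset.sum_const_zero, Finset.sum_ite_eq,
      Finset.mem_univ, if_true, mul_ite, mul_zero] at h
    simp only [Matrix.mul_apply, Matrix.transpose_apply, Matrix.zero_apply]
    rw [← h]
    exact Finset.sum_congr rfl fun i _ => by ring
  -- second-order condition: the Hessian quadratic form is PSD
  have psd : ∀ (X' : Matrix (Fin a) (Fin r) ℝ) (Y' : Matrix (Fin r) (Fin b) ℝ),
      0 ≤ F2 (A * Y' + X' * B) + 2 * IP (A * B - Z) (X' * Y') := by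
    intro X' Y'
    have key : ∀ t : ℝ, 0 ≤ (F2 (A * Y' + X' * B) + 2 * IP (A * B - Z) (X' * Y')) * t ^ 2
        + (2 * IP (A * Y' + X' * B) (X' * Y')) * t ^ 3 + F2 (X' * Y') * t ^ 4 := by
      intro t
      have h := hmin' (A + t • X') (B + t • Y')
      have hsm : (t • X') * (t • Y') = (t ^ 2) • (X' * Y') := by
        rw [Matrix.smul_mul, Matrix.mul_smul, smul_smul, sq]
      have hexp : (A + t • X') * (B + t • Y') - Z
          = ((A * B - Z) + t • (A * Y' + X' * B)) + (t ^ 2) • (X' * Y') := by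
        rw [Matrix.add_mul, Matrix.mul_add, Matrix.mul_add, hsm, Matrix.smul_mul,
          Matrix.mul_smul, smul_add]
        abel
      rw [hexp, F2_add, F2_add, IP_smul_right, F2_smul, IP_add_left, IP_smul_right,
        IP_smul_left, F2_smul, IP_smul_right] at h
      have h0 : IP (A * B - Z) (A * Y' + X' * B) = 0 := by
        rw [IP_add_right, fo2 Y', fo1 X']
        ring
      rw [h0] at h
      nlinarith [h]
    exact quad_coeff_nonneg (F2_nonneg _) key
  -- the key upper bound for the Hessian quadratic form
  have hUB : ∀ (X' : Matrix (Fin a) (Fin r) ℝ) (Y' : Matrix (Fin r) (Fin b) ℝ),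
      F2 (A * Y' + X' * B) + 2 * IP (A * B - Z) (X' * Y')
        ≤ (μA + μB) * (F2 X' + F2 Y') := by
    intro X' Y'
    have hS0 : 0 ≤ F2 X' + F2 Y' := add_nonneg (F2_nonneg _) (F2_nonneg _)
    have key : ∀ ε : ℝ, 0 < ε →
        F2 (A * Y' + X' * B) + 2 * IP (A * B - Z) (X' * Y')
          ≤ (μA + μB) * (F2 X' + F2 Y') + ε := by
      intro ε hε
      set δ : ℝ := ε / (F2 X' + F2 Y' + 1) with hδdef
      have hδ : 0 < δ := div_pos hε (by linarith)
      set τ : ℝ := (μA + δ) / (μB + δ) with hτdef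
      have hμBδ : 0 < μB + δ := by linarith
      have hμAδ : 0 < μA + δ := by linarith
      have hτ0 : 0 < τ := div_pos hμAδ hμBδ
      set t : ℝ := Real.sqrt τ with htdef
      have ht2 : t ^ 2 = τ := Real.sq_sqrt hτ0.le
      have ht0 : 0 < t := Real.sqrt_pos.mpr hτ0
      have hp := psd ((-t) • X') (t⁻¹ • Y')
      have e1 : A * (t⁻¹ • Y') = t⁻¹ • (A * Y') := Matrix.mul_smul _ _ _
      have e2 : ((-t) • X') * B = (-t) • (X' * B) := Matrix.smul_mul _ _ _
      have e3 : ((-t) • X') * (t⁻¹ • Y') = (-1 : ℝ) • (X' * Y') := by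
        rw [Matrix.smul_mul, Matrix.mul_smul, smul_smul]
        congr 1
        field_simp
      rw [e1, e2, e3, IP_smul_right] at hp
      have hf : F2 (t⁻¹ • (A * Y') + (-t) • (X' * B))
          = τ⁻¹ * F2 (A * Y') - 2 * IP (A * Y') (X' * B) + τ * F2 (X' * B) := by
        rw [F2_add, F2_smul, F2_smul, IP_smul_left, IP_smul_right]
        have hit1 : (t⁻¹) ^ 2 = τ⁻¹ := by rw [inv_pow, ht2]
        have hmt : ∀ z : ℝ, t⁻¹ * (-t * z) = -z := fun z => by
          field_simp
        have hnt : (-t) ^ 2 = τ := by rw [neg_sq, ht2]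
        rw [hit1, hnt, hmt]
        ring
      rw [hf] at hp
      have hexp2 : F2 (A * Y' + X' * B)
          = F2 (A * Y') + 2 * IP (A * Y') (X' * B) + F2 (X' * B) := F2_add _ _
      have hAY := hF2A Y'
      have hXB := hF2B X'
      have hτinv : τ⁻¹ = (μB + δ) / (μA + δ) := by rw [hτdef, inv_div]
      have c1 : (1 + τ⁻¹) * μA ≤ μA + μB + δ := by
        have hh : (μB + δ) / (μA + δ) * μA ≤ μB + δ := by
          rw [div_mul_eq_mul_div, div_le_iff₀ hμAδ]
          nlinarith
        have hexp : (1 + τ⁻¹) * μA = μA + (μB + δ) / (μA + δ) * μA := by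
          rw [hτinv]; ring
        linarith
      have c2 : (1 + τ) * μB ≤ μA + μB + δ := by
        have hh : (μA + δ) / (μB + δ) * μB ≤ μA + δ := by
          rw [div_mul_eq_mul_div, div_le_iff₀ hμBδ]
          nlinarith
        have hexp : (1 + τ) * μB = μB + (μA + δ) / (μB + δ) * μB := by
          rw [hτdef]; ring
        linarith
      have hτi0 : 0 < τ⁻¹ := inv_pos.mpr hτ0
      have step1 : F2 (A * Y' + X' * B) + 2 * IP (A * B - Z) (X' * Y')
          ≤ (1 + τ⁻¹) * F2 (A * Y') + (1 + τ) * F2 (X' * B) := by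
        rw [hexp2]
        linarith [hp]
      have step2 : (1 + τ⁻¹) * F2 (A * Y') + (1 + τ) * F2 (X' * B)
          ≤ (1 + τ⁻¹) * (μA * F2 Y') + (1 + τ) * (μB * F2 X') :=
        add_le_add (mul_le_mul_of_nonneg_left hAY (by linarith))
          (mul_le_mul_of_nonneg_left hXB (by linarith))
      have step3 : (1 + τ⁻¹) * (μA * F2 Y') + (1 + τ) * (μB * F2 X')
          ≤ (μA + μB + δ) * F2 Y' + (μA + μB + δ) * F2 X' := by
        have g1 : (1 + τ⁻¹) * (μA * F2 Y') = ((1 + τ⁻¹) * μA) * F2 Y' := by ring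
        have g2 : (1 + τ) * (μB * F2 X') = ((1 + τ) * μB) * F2 X' := by ring
        rw [g1, g2]
        exact add_le_add (mul_le_mul_of_nonneg_right c1 (F2_nonneg _))
          (mul_le_mul_of_nonneg_right c2 (F2_nonneg _))
      have step4 : (μA + μB + δ) * F2 Y' + (μA + μB + δ) * F2 X'
          ≤ (μA + μB) * (F2 X' + F2 Y') + ε := by
        have hδS : δ * (F2 X' + F2 Y' + 1) = ε := by
          rw [hδdef]
          field_simp
        nlinarith [hδ.le, F2_nonneg X', F2_nonneg Y']
      linarith
    by_contra hcon
    push_neg at hcon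
    have := key (((F2 (A * Y' + X' * B) + 2 * IP (A * B - Z) (X' * Y'))
        - (μA + μB) * (F2 X' + F2 Y')) / 2) (by linarith)
    linarith
  -- A * B ≠ 0 at the minimum
  have hABne : A * B ≠ 0 := by
    intro h0
    have hZne : Z ≠ 0 := by
      intro hZ0
      rw [hZ0, Matrix.rank_zero] at hZ
      omega
    obtain ⟨i0, j0, hz⟩ : ∃ i j, Z i j ≠ 0 := by
      by_contra hcon
      push_neg at hcon
      exact hZne (by ext i j; simpa using hcon i j)
    set A' : Matrix (Fin a) (Fin r) ℝ :=
      Matrix.of fun i k => if k = (⟨0, hr⟩ : Fin r) then Z i j0 else 0 with hA'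
    set B' : Matrix (Fin r) (Fin b) ℝ :=
      Matrix.of fun k l => if k = (⟨0, hr⟩ : Fin r) ∧ l = j0 then 1 else 0 with hB'
    have hA'B' : ∀ i l, (A' * B') i l = if l = j0 then Z i j0 else 0 := by
      intro i l
      simp only [Matrix.mul_apply, hA', hB', Matrix.of_apply, ite_and, ite_mul, zero_mul,
        mul_ite, mul_one, mul_zero, Finset.sum_ite_irrel, Finset.sum_const_zero,
        Finset.sum_ite_eq', Finset.mem_univ, if_true]
    have h := hmin' A' B'
    have hL : F2 (A * B - Z) = F2 Z := by
      rw [h0]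
      have : (0 : Matrix (Fin a) (Fin b) ℝ) - Z = (-1 : ℝ) • Z := by
        ext i j; simp
      rw [this, F2_smul]
      ring
    have hR : F2 (A' * B' - Z) = F2 Z - ∑ i, (Z i j0) ^ 2 := by
      rw [F2_sum, F2_sum, ← Finset.sum_sub_distrib]
      refine Finset.sum_congr rfl fun i _ => ?_
      have hrow : ∀ l, (A' * B' - Z) i l ^ 2 = (Z i l) ^ 2 - (if l = j0 then (Z i j0) ^ 2 else 0) := by
        intro l
        rw [Matrix.sub_apply, hA'B']
        by_cases hl : l = j0
        · subst hl; simp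
        · simp [hl]
      rw [Finset.sum_congr rfl fun l _ => hrow l, Finset.sum_sub_distrib,
        Finset.sum_ite_eq' Finset.univ j0 (fun _ => (Z i j0) ^ 2)]
      simp
    rw [hL, hR] at h
    have hpos : 0 < (Z i0 j0) ^ 2 := by positivity
    have hle : (Z i0 j0) ^ 2 ≤ ∑ i, (Z i j0) ^ 2 :=
      Finset.single_le_sum (f := fun i => Z i j0 ^ 2) (fun i _ => sq_nonneg _) (Finset.mem_univ i0)
    linarith
  have hAne : A ≠ 0 := fun h => hABne (by rw [h, Matrix.zero_mul])
  have hBne : B ≠ 0 := fun h => hABne (by rw [h, Matrix.mul_zero])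
  -- positivity of the top eigenvalues
  have hμApos : 0 < μA := by
    obtain ⟨i1, k1, hA1⟩ : ∃ i k, A i k ≠ 0 := by
      by_contra hcon
      push_neg at hcon
      exact hAne (by ext i k; simpa using hcon i k)
    have h1 := rayA (Pi.single k1 1)
    have hdot : (Pi.single k1 1 : Fin r → ℝ) ⬝ᵥ (Pi.single k1 1 : Fin r → ℝ) = 1 := by
      simp [dotProduct, Pi.single_apply]
    have hlhs : (Pi.single k1 1 : Fin r → ℝ) ⬝ᵥ ((Aᵀ * A) *ᵥ (Pi.single k1 1)) = ∑ i, (A i k1) ^ 2 := by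
      rw [← dot_mulVec_self]
      simp [Matrix.mulVec_single, dotProduct, sq]
    rw [hlhs, hdot, mul_one] at h1
    have : 0 < (A i1 k1) ^ 2 := by positivity
    have hle : (A i1 k1) ^ 2 ≤ ∑ i, (A i k1) ^ 2 :=
      Finset.single_le_sum (f := fun i => A i k1 ^ 2) (fun i _ => sq_nonneg _) (Finset.mem_univ i1)
    linarith
  have hμBpos : 0 < μB := by
    obtain ⟨k1, l1, hB1⟩ : ∃ k l, B k l ≠ 0 := by
      by_contra hcon
      push_neg at hcon
      exact hBne (by ext k l; simpa using hcon k l)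
    have h1 := rayB (Pi.single l1 1)
    have hdot : (Pi.single l1 1 : Fin b → ℝ) ⬝ᵥ (Pi.single l1 1 : Fin b → ℝ) = 1 := by
      simp [dotProduct, Pi.single_apply]
    have hlhs : (Pi.single l1 1 : Fin b → ℝ) ⬝ᵥ ((Bᵀ * B) *ᵥ (Pi.single l1 1)) = ∑ k, (B k l1) ^ 2 := by
      rw [← dot_mulVec_self]
      simp [Matrix.mulVec_single, dotProduct, sq]
    rw [hlhs, hdot, mul_one] at h1
    have : 0 < (B k1 l1) ^ 2 := by positivity
    have hle : (B k1 l1) ^ 2 ≤ ∑ k, (B k l1) ^ 2 :=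
      Finset.single_le_sum (f := fun k => B k l1 ^ 2) (fun k _ => sq_nonneg _) (Finset.mem_univ k1)
    linarith
  -- eigenvectors for the top eigenvalues
  set jA : Fin r := (Tuple.sort (Matrix.isHermitian_conjTranspose_mul_self A).eigenvalues)
      ((⟨0, hr⟩ : Fin r).rev) with hjA
  set jB : Fin b := (Tuple.sort (Matrix.isHermitian_conjTranspose_mul_self B).eigenvalues)
      ((⟨0, lt_of_lt_of_le hr hrb⟩ : Fin b).rev) with hjB
  set vA : Fin r → ℝ := ⇑((Matrix.isHermitian_conjTranspose_mul_self A).eigenvectorBasis jA) with hvA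
  set vB : Fin b → ℝ := ⇑((Matrix.isHermitian_conjTranspose_mul_self B).eigenvectorBasis jB) with hvB
  have hvAeq : (Aᵀ * A) *ᵥ vA = μA • vA := by
    have h := (Matrix.isHermitian_conjTranspose_mul_self A).mulVec_eigenvectorBasis jA
    rw [← hAc]
    exact h
  have hvBeq : (Bᵀ * B) *ᵥ vB = μB • vB := by
    have h := (Matrix.isHermitian_conjTranspose_mul_self B).mulVec_eigenvectorBasis jB
    rw [← hBc]
    exact h
  have hvAne : ∃ kk, vA kk ≠ 0 := by
    by_contra hcon
    push_neg at hcon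
    refine (Matrix.isHermitian_conjTranspose_mul_self A).eigenvectorBasis.orthonormal.ne_zero jA ?_
    ext kk
    exact hcon kk
  have hvBne : ∃ ll, vB ll ≠ 0 := by
    by_contra hcon
    push_neg at hcon
    refine (Matrix.isHermitian_conjTranspose_mul_self B).eigenvectorBasis.orthonormal.ne_zero jB ?_
    ext ll
    exact hcon ll
  set uA : Fin a → ℝ := A *ᵥ vA with huA
  set uB : Fin r → ℝ := B *ᵥ vB with huB
  have hAtuA : Aᵀ *ᵥ uA = μA • vA := by
    rw [huA, Matrix.mulVec_mulVec, hvAeq]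
  have hBtuB : Bᵀ *ᵥ uB = μB • vB := by
    rw [huB, Matrix.mulVec_mulVec, hvBeq]
  have hBBuB : (B * Bᵀ) *ᵥ uB = μB • uB := by
    rw [← Matrix.mulVec_mulVec, hBtuB, Matrix.mulVec_smul, huB]
  have hEvB : (A * B - Z) *ᵥ vB = 0 := by
    have hvB' : vB = μB⁻¹ • (Bᵀ *ᵥ uB) := by
      rw [hBtuB, smul_smul, inv_mul_cancel₀ hμBpos.ne', one_smul]
    rw [hvB', Matrix.mulVec_smul, Matrix.mulVec_mulVec, foB, Matrix.zero_mulVec, smul_zero]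
  have hEtuA : (A * B - Z)ᵀ *ᵥ uA = 0 := by
    have hEtA : (A * B - Z)ᵀ * A = 0 := by
      have h := congrArg Matrix.transpose foA
      rwa [Matrix.transpose_mul, Matrix.transpose_transpose, Matrix.transpose_zero] at h
    rw [huA, Matrix.mulVec_mulVec, hEtA, Matrix.zero_mulVec]
  -- the eigenvector achieving the top eigenvalue
  set v₀ : (Fin r × Fin a) ⊕ (Fin b × Fin r) → ℝ :=
    Sum.elim (fun p => uA p.2 * uB p.1) (fun q => μA * (vA q.2 * vB q.1)) with hv₀
  rw [show sv A ⟨0, hr⟩ ^ 2 + sv B ⟨0, lt_of_lt_of_le hr hrb⟩ ^ 2 = μA + μB by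
    rw [hsqA, hsqB]]
  constructor
  · -- membership
    refine ⟨v₀, ?_, ?_⟩
    · -- v₀ ≠ 0
      intro h0
      obtain ⟨kA, hkA⟩ := hvAne
      obtain ⟨lB, hlB⟩ := hvBne
      have h := congrFun h0 (Sum.inr (lB, kA))
      simp only [hv₀, Sum.elim_inr, Pi.zero_apply] at h
      exact (mul_ne_zero hμApos.ne' (mul_ne_zero hkA hlB)) h
    · -- eigenvector equation
      funext p
      rcases p with ⟨j, i⟩ | ⟨l, k⟩
      · rw [Happ1 A B Z v₀ j i]
        have hX0 : Xof v₀ = Matrix.of fun i j => uA i * uB j := rfl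
        have hY0 : Yof v₀ = Matrix.of fun k l => μA * (vA k * vB l) := rfl
        have hBB : ∀ x y, (B * Bᵀ) x y = (B * Bᵀ) y x := fun x y => by
          simp only [Matrix.mul_apply, Matrix.transpose_apply]
          exact Finset.sum_congr rfl fun ll _ => mul_comm _ _
        have t1 : (Xof v₀ * (B * Bᵀ)) i j = uA i * (((B * Bᵀ) *ᵥ uB) j) := by
          simp only [hX0, Matrix.mul_apply, Matrix.of_apply, Matrix.mulVec,
            dotProduct, Finset.mul_sum]
          refine Finset.sum_congr rfl fun j' _ => ?_
          rw [← Finset.mul_sum]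
          have hswap : ∑ i1, B j' i1 * Bᵀ i1 j = ∑ j1, B j j1 * Bᵀ j1 j' :=
            Finset.sum_congr rfl fun x _ => by
              rw [Matrix.transpose_apply, Matrix.transpose_apply]; ring
          rw [hswap]
          ring
        have t2 : (A * Yof v₀ * Bᵀ) i j = μA * (uA i * uB j) := by
          have hAY : ∀ l, (A * Yof v₀) i l = μA * (uA i * vB l) := by
            intro l
            have huAi : uA i = ∑ kk, A i kk * vA kk := rfl
            simp only [hY0, Matrix.mul_apply, Matrix.of_apply]
            rw [huAi, Finset.sum_mul, Finset.mul_sum]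
            exact Finset.sum_congr rfl fun kk _ => by ring
          rw [Matrix.mul_apply]
          simp only [hAY, Matrix.transpose_apply]
          have huBj : uB j = ∑ ll, B j ll * vB ll := rfl
          rw [huBj, Finset.mul_sum, Finset.mul_sum]
          exact Finset.sum_congr rfl fun ll _ => by ring
        have t3 : ((A * B - Z) * (Yof v₀)ᵀ) i j = μA * vA j * (((A * B - Z) *ᵥ vB) i) := by
          simp only [hY0, Matrix.mul_apply, Matrix.of_apply, Matrix.transpose_apply,
            Matrix.mulVec, dotProduct, Finset.mul_sum]
          exact Finset.sum_congr rfl fun ll _ => by ring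
        rw [t1, t2, t3, hBBuB, hEvB]
        simp only [Pi.smul_apply, Pi.zero_apply, smul_eq_mul, hv₀, Sum.elim_inl]
        ring
      · rw [Happ2 A B Z v₀ l k]
        have hX0 : Xof v₀ = Matrix.of fun i j => uA i * uB j := rfl
        have hY0 : Yof v₀ = Matrix.of fun k l => μA * (vA k * vB l) := rfl
        have s1 : ((Aᵀ * A) * Yof v₀) k l = μA * ((((Aᵀ * A)) *ᵥ vA) k * vB l) := by
          simp only [hY0, Matrix.mul_apply, Matrix.of_apply, Matrix.mulVec,
            dotProduct, Finset.mul_sum, Finset.sum_mul]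
          refine Finset.sum_congr rfl fun kk _ => Finset.sum_congr rfl fun x _ => ?_
          ring
        have s2 : (Aᵀ * Xof v₀ * B) k l = ((Aᵀ *ᵥ uA) k) * ((Bᵀ *ᵥ uB) l) := by
          simp only [hX0, Matrix.mul_apply, Matrix.of_apply, Matrix.transpose_apply,
            Matrix.mulVec, dotProduct, Finset.sum_mul, Finset.mul_sum]
          refine Finset.sum_congr rfl fun jj _ => Finset.sum_congr rfl fun ii _ => ?_
          ring
        have s3 : ((Xof v₀)ᵀ * (A * B - Z)) k l = uB k * (((A * B - Z)ᵀ *ᵥ uA) l) := by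
          simp only [hX0, Matrix.mul_apply, Matrix.of_apply, Matrix.transpose_apply,
            Matrix.mulVec, dotProduct, Finset.mul_sum]
          exact Finset.sum_congr rfl fun ii _ => by ring
        rw [s1, s2, s3, hvAeq, hAtuA, hBtuB, hEtuA]
        simp only [Pi.smul_apply, Pi.zero_apply, smul_eq_mul, hv₀, Sum.elim_inr]
        ring
  · -- upper bound
    rintro c ⟨v, hvne, hev⟩
    have hM1 : Xof v * (B * Bᵀ) + (A * Yof v * Bᵀ + (A * B - Z) * (Yof v)ᵀ) = c • Xof v := by
      ext i j
      have h := congrFun hev (Sum.inl (j, i))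
      rw [Happ1 A B Z v j i] at h
      simpa [Matrix.add_apply, Xof] using h
    have hM2 : (Aᵀ * A) * Yof v + (Aᵀ * Xof v * B + (Xof v)ᵀ * (A * B - Z)) = c • Yof v := by
      ext k l
      have h := congrFun hev (Sum.inr (l, k))
      rw [Happ2 A B Z v l k] at h
      simpa [Matrix.add_apply, Yof] using h
    have hc1 : c * F2 (Xof v) = F2 (Xof v * B) + IP (A * Yof v) (Xof v * B)
        + IP (A * B - Z) (Xof v * Yof v) := by
      have h := congrArg (IP (Xof v)) hM1
      rw [IP_add_right, IP_add_right, IP_smul_right, I1, I2, I3] at h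
      rw [show F2 (Xof v) = IP (Xof v) (Xof v) from rfl, ← h]
      ring
    have hc2 : c * F2 (Yof v) = F2 (A * Yof v) + IP (A * Yof v) (Xof v * B)
        + IP (A * B - Z) (Xof v * Yof v) := by
      have h := congrArg (IP (Yof v)) hM2
      rw [IP_add_right, IP_add_right, IP_smul_right, I4, I5, I6] at h
      rw [show F2 (Yof v) = IP (Yof v) (Yof v) from rfl, ← h]
      ring
    have hQ : c * (F2 (Xof v) + F2 (Yof v))
        = F2 (A * Yof v + Xof v * B) + 2 * IP (A * B - Z) (Xof v * Yof v) := by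
      rw [F2_add]
      linarith
    have hub := hUB (Xof v) (Yof v)
    have hSpos : 0 < F2 (Xof v) + F2 (Yof v) := by
      obtain ⟨p, hp⟩ := Function.ne_iff.mp hvne
      have hsum : F2 (Xof v) + F2 (Yof v)
          = ∑ p : (Fin r × Fin a) ⊕ (Fin b × Fin r), (v p) ^ 2 := by
        rw [Fintype.sum_sum_type, F2_sum, F2_sum]
        congr 1
        · rw [Fintype.sum_prod_type, Finset.sum_comm]
          rfl
        · rw [Fintype.sum_prod_type, Finset.sum_comm]
          rfl
      rw [hsum]
      have h1 : 0 < (v p) ^ 2 := lt_of_le_of_ne (sq_nonneg _) (Ne.symm (pow_ne_zero 2 hp))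
      exact lt_of_lt_of_le h1 (Finset.single_le_sum (f := fun q => v q ^ 2)
        (fun q _ => sq_nonneg _) (Finset.mem_univ p))
    have hfin : c * (F2 (Xof v) + F2 (Yof v)) ≤ (μA + μB) * (F2 (Xof v) + F2 (Yof v)) := by
      rw [hQ]
      exact hub
    exact le_of_mul_le_mul_right (by linarith [hfin]) hSpos
end

section
/- Let g : ℝ^{a×b} → ℝ be differentiable, f(A,B) = g(AB), and consider one step of gradient descent on (A,B) with step size τ starting from a hyperbalanced point (A,B) with X = AB. Then the product of the updated factors equals X − τ·((XXᵀ)^{1/2} G + G (XᵀX)^{1/2}) + τ² G Xᵀ G, where G = ∇g(X). -/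
open Matrix

attribute [local instance] Matrix.frobeniusNormedAddCommGroup Matrix.frobeniusNormedSpace

open scoped ComplexOrder in
/-- The positive semidefinite square root of a positive semidefinite matrix
(the definition `Matrix.PosSemidef.sqrt` of the older Mathlib, since removed). -/
noncomputable def Matrix.PosSemidef.sqrt {n : Type*} [Fintype n] [DecidableEq n] {𝕜 : Type*}
    [RCLike 𝕜] {A : Matrix n n 𝕜} (hA : A.PosSemidef) : Matrix n n 𝕜 :=
  hA.1.eigenvectorUnitary.1 * diagonal ((↑) ∘ (√·) ∘ hA.1.eigenvalues) *
    (star hA.1.eigenvectorUnitary : Matrix n n 𝕜)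

open scoped MatrixOrder in
theorem Matrix.PosSemidef.eq_sqrt_of_sq_eq {n : Type*} [Fintype n] [DecidableEq n]
    {P M : Matrix n n ℝ} (hP : P.PosSemidef) (hM : M.PosSemidef) (h : P ^ 2 = M) :
    P = hM.sqrt := by
  have e : hM.sqrt = CFC.sqrt M := by
    rw [CFC.sqrt_eq_cfc, cfc_nnreal_eq_real _ M, hM.1.cfc_eq]
    simp [IsHermitian.cfc, Matrix.PosSemidef.sqrt, Function.comp_def]
    congr 3
    funext i
    rw [max_eq_left (hM.eigenvalues_nonneg i)]
  rw [e, eq_comm, CFC.sqrt_eq_iff M P hM.nonneg hP.nonneg, ← sq, h]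

/-- One gradient-descent step on the factors from a hyperbalanced point: with
`G = ∇g(X)` (Frobenius inner product), `Ã = A - τ G Bᵀ`, `B̃ = B - τ Aᵀ G`, one has
`Ã B̃ = X - τ((XXᵀ)^{1/2} G + G (XᵀX)^{1/2}) + τ² G Xᵀ G`. -/
theorem stmt17 {a b r : ℕ}
    (g : Matrix (Fin a) (Fin b) ℝ → ℝ) (hg : Differentiable ℝ g)
    (U : Matrix (Fin a) (Fin r) ℝ) (V : Matrix (Fin b) (Fin r) ℝ) (d : Fin r → ℝ)
    (hU : Uᵀ * U = 1) (hV : Vᵀ * V = 1)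
    (hd0 : ∀ i, 0 ≤ d i) (hdmono : Antitone d)
    (A : Matrix (Fin a) (Fin r) ℝ) (B : Matrix (Fin r) (Fin b) ℝ)
    (hA : A = U * Matrix.diagonal (fun i => Real.sqrt (d i)))
    (hB : B = Matrix.diagonal (fun i => Real.sqrt (d i)) * Vᵀ)
    (X : Matrix (Fin a) (Fin b) ℝ) (hX : X = A * B)
    (G : Matrix (Fin a) (Fin b) ℝ)
    (hG : ∀ Hd : Matrix (Fin a) (Fin b) ℝ,
      fderiv ℝ g X Hd = ∑ i, ∑ j, G i j * Hd i j)
    (τ : ℝ) :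
    ∀ (h1 : (X * Xᵀ).PosSemidef) (h2 : (Xᵀ * X).PosSemidef),
      (A - τ • (G * Bᵀ)) * (B - τ • (Aᵀ * G))
        = X - τ • (h1.sqrt * G + G * h2.sqrt) + (τ ^ 2) • (G * Xᵀ * G) := by
  intro h1 h2
  have hDD : (Matrix.diagonal (fun i => Real.sqrt (d i))) * (Matrix.diagonal (fun i => Real.sqrt (d i))) = Matrix.diagonal d := by
    have hfun : (fun i => Real.sqrt (d i) * Real.sqrt (d i)) = d :=
      funext fun i => Real.mul_self_sqrt (hd0 i)
    rw [Matrix.diagonal_mul_diagonal, hfun]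
  have hAtA : Aᵀ * A = Matrix.diagonal d := by
    rw [hA, Matrix.transpose_mul, Matrix.diagonal_transpose, Matrix.mul_assoc,
      ← Matrix.mul_assoc Uᵀ, hU, Matrix.one_mul, hDD]
  have hBBt : B * Bᵀ = Matrix.diagonal d := by
    rw [hB, Matrix.transpose_mul, Matrix.transpose_transpose, Matrix.diagonal_transpose,
      Matrix.mul_assoc, ← Matrix.mul_assoc Vᵀ, hV, Matrix.one_mul, hDD]
  have hAAt : (A * Aᵀ).PosSemidef := by
    have := Matrix.posSemidef_self_mul_conjTranspose A
    simpa using this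
  have hBtB : (Bᵀ * B).PosSemidef := by
    have := Matrix.posSemidef_conjTranspose_mul_self B
    simpa using this
  have hsq1 : (A * Aᵀ) ^ 2 = X * Xᵀ := by
    rw [pow_two, hX, Matrix.transpose_mul]
    simp only [Matrix.mul_assoc]
    rw [← Matrix.mul_assoc Aᵀ, hAtA, ← Matrix.mul_assoc B, hBBt]
  have hsq2 : (Bᵀ * B) ^ 2 = Xᵀ * X := by
    rw [pow_two, hX, Matrix.transpose_mul]
    simp only [Matrix.mul_assoc]
    rw [← Matrix.mul_assoc B, hBBt, ← Matrix.mul_assoc Aᵀ, hAtA]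
  have e1 : h1.sqrt = A * Aᵀ := (hAAt.eq_sqrt_of_sq_eq h1 hsq1).symm
  have e2 : h2.sqrt = Bᵀ * B := (hBtB.eq_sqrt_of_sq_eq h2 hsq2).symm
  rw [e1, e2, hX]
  simp only [Matrix.sub_mul, Matrix.mul_sub, Matrix.smul_mul, Matrix.mul_smul,
    smul_smul, smul_add, smul_sub, Matrix.transpose_mul, pow_two, Matrix.mul_assoc]
  abel
end

section
/- Let H ∈ ℝ^{D×D} be symmetric positive semidefinite with smallest nonzero eigenvalue μ and largest eigenvalue L > 0. Define L_∞ = sup_{u≠0} ⟨Hu,u⟩/‖u‖_∞² and μ_∞ = inf_{u ∈ ker(H)^⊥, u≠0} ‖Hu‖_1²/⟨Hu,u⟩. Then μ ≤ μ_∞ ≤ Dμ and L ≤ L_∞ ≤ DL; consequently κ/D ≤ κ_∞ ≤ Dκ where κ = L/μ and κ_∞ = L_∞/μ_∞. -/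
open Matrix

private lemma stmt18_diag {D : ℕ} {H : Matrix (Fin D) (Fin D) ℝ} (hA : H.IsHermitian)
    (u : Fin D → ℝ) :
    ∃ v : Fin D → ℝ,
      (H.mulVec u ⬝ᵥ u = ∑ i, hA.eigenvalues i * v i ^ 2) ∧
      (H.mulVec u ⬝ᵥ H.mulVec u = ∑ i, (hA.eigenvalues i)^2 * v i ^ 2) ∧
      (u ⬝ᵥ u = ∑ i, v i ^ 2) := by
  set U : Matrix (Fin D) (Fin D) ℝ := (hA.eigenvectorUnitary : Matrix (Fin D) (Fin D) ℝ) with hUdef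
  have hUU : star U * U = 1 := by
    rw [hUdef]; exact Matrix.mem_unitaryGroup_iff'.mp (hA.eigenvectorUnitary).2
  have hUU' : U * star U = 1 := by
    rw [hUdef]; exact Matrix.mem_unitaryGroup_iff.mp (hA.eigenvectorUnitary).2
  set v : Fin D → ℝ := star U *ᵥ u with hvdef
  have hdot : ∀ x y : Fin D → ℝ, (U *ᵥ x) ⬝ᵥ (U *ᵥ y) = x ⬝ᵥ y := by
    intro x y
    rw [dotProduct_mulVec, vecMul_mulVec, ← conjTranspose_eq_transpose_of_trivial,
      ← star_eq_conjTranspose, hUU, vecMul_one]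
  have hHu : H *ᵥ u = U *ᵥ (diagonal hA.eigenvalues *ᵥ v) := by
    conv_lhs => rw [hA.spectral_theorem]
    simp [← mulVec_mulVec]; rfl
  have huUv : u = U *ᵥ v := by
    rw [hvdef, mulVec_mulVec, hUU', one_mulVec]
  refine ⟨v, ?_, ?_, ?_⟩
  · conv_lhs => rw [hHu, huUv, hdot]
    simp only [dotProduct, mulVec_diagonal]
    exact Finset.sum_congr rfl fun i _ => by ring
  · conv_lhs => rw [hHu, hdot]
    simp only [dotProduct, mulVec_diagonal]
    exact Finset.sum_congr rfl fun i _ => by ring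
  · conv_lhs => rw [huUv, hdot]
    simp only [dotProduct]
    exact Finset.sum_congr rfl fun i _ => by ring

/-- For a symmetric PSD matrix `H` with smallest nonzero eigenvalue `μ` and largest
eigenvalue `L > 0`, setting `L_∞ = sup ⟨Hu,u⟩/‖u‖_∞²` and
`μ_∞ = inf_{u ∈ ker(H)ᗮ, u ≠ 0} ‖Hu‖₁²/⟨Hu,u⟩`, one has `μ ≤ μ_∞ ≤ Dμ`,
`L ≤ L_∞ ≤ DL`, and hence `κ/D ≤ κ_∞ ≤ Dκ` with `κ = L/μ`, `κ_∞ = L_∞/μ_∞`.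
(Here `‖u‖` is the sup norm on `Fin D → ℝ`.) -/
theorem stmt18 {D : ℕ} (H : Matrix (Fin D) (Fin D) ℝ) (hH : H.PosSemidef)
    (μ L : ℝ)
    (hL : IsGreatest {c : ℝ | ∃ w : Fin D → ℝ, w ≠ 0 ∧ H.mulVec w = c • w} L)
    (hμ : IsLeast {c : ℝ | c ≠ 0 ∧ ∃ w : Fin D → ℝ, w ≠ 0 ∧ H.mulVec w = c • w} μ)
    (hμpos : 0 < μ) (hLpos : 0 < L) :
    μ ≤ sInf {x : ℝ | ∃ u : Fin D → ℝ, u ≠ 0 ∧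
          (∀ v : Fin D → ℝ, H.mulVec v = 0 → u ⬝ᵥ v = 0) ∧
          x = (∑ i, |H.mulVec u i|) ^ 2 / (H.mulVec u ⬝ᵥ u)} ∧
    sInf {x : ℝ | ∃ u : Fin D → ℝ, u ≠ 0 ∧
          (∀ v : Fin D → ℝ, H.mulVec v = 0 → u ⬝ᵥ v = 0) ∧
          x = (∑ i, |H.mulVec u i|) ^ 2 / (H.mulVec u ⬝ᵥ u)} ≤ D * μ ∧
    L ≤ sSup {x : ℝ | ∃ u : Fin D → ℝ, u ≠ 0 ∧ x = (H.mulVec u ⬝ᵥ u) / ‖u‖ ^ 2} ∧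
    sSup {x : ℝ | ∃ u : Fin D → ℝ, u ≠ 0 ∧ x = (H.mulVec u ⬝ᵥ u) / ‖u‖ ^ 2} ≤ D * L ∧
    (L / μ) / D ≤
      sSup {x : ℝ | ∃ u : Fin D → ℝ, u ≠ 0 ∧ x = (H.mulVec u ⬝ᵥ u) / ‖u‖ ^ 2} /
        sInf {x : ℝ | ∃ u : Fin D → ℝ, u ≠ 0 ∧
          (∀ v : Fin D → ℝ, H.mulVec v = 0 → u ⬝ᵥ v = 0) ∧
          x = (∑ i, |H.mulVec u i|) ^ 2 / (H.mulVec u ⬝ᵥ u)} ∧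
    sSup {x : ℝ | ∃ u : Fin D → ℝ, u ≠ 0 ∧ x = (H.mulVec u ⬝ᵥ u) / ‖u‖ ^ 2} /
        sInf {x : ℝ | ∃ u : Fin D → ℝ, u ≠ 0 ∧
          (∀ v : Fin D → ℝ, H.mulVec v = 0 → u ⬝ᵥ v = 0) ∧
          x = (∑ i, |H.mulVec u i|) ^ 2 / (H.mulVec u ⬝ᵥ u)}
      ≤ D * (L / μ) := by
  have hsym := hH.1
  -- eigenvalue bounds
  have hlam_mem : ∀ i, hsym.eigenvalues i ∈ {c : ℝ | ∃ w : Fin D → ℝ, w ≠ 0 ∧ H.mulVec w = c • w} := by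
    intro i
    refine ⟨(hsym.eigenvectorBasis i : EuclideanSpace ℝ (Fin D)), ?_, hsym.mulVec_eigenvectorBasis i⟩
    intro h
    exact hsym.eigenvectorBasis.orthonormal.ne_zero i (by ext j; exact congrFun h j)
  have hlamL : ∀ i, hsym.eigenvalues i ≤ L := fun i => hL.2 (hlam_mem i)
  have hlam_mu : ∀ i, hsym.eigenvalues i = 0 ∨ μ ≤ hsym.eigenvalues i := by
    intro i
    rcases eq_or_ne (hsym.eigenvalues i) 0 with h | h
    · exact Or.inl h
    · exact Or.inr (hμ.2 ⟨h, hlam_mem i⟩)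
  have hlam0 : ∀ i, 0 ≤ hsym.eigenvalues i := by
    intro i; rcases hlam_mu i with h | h
    · rw [h]
    · linarith
  -- quadratic form facts
  have hA0 : ∀ u : Fin D → ℝ, 0 ≤ H.mulVec u ⬝ᵥ u := by
    intro u
    obtain ⟨v, h1, _, _⟩ := stmt18_diag hsym u
    rw [h1]
    exact Finset.sum_nonneg fun i _ => mul_nonneg (hlam0 i) (sq_nonneg _)
  have hA : ∀ u : Fin D → ℝ, H.mulVec u ⬝ᵥ u ≤ L * (u ⬝ᵥ u) := by
    intro u
    obtain ⟨v, h1, _, h3⟩ := stmt18_diag hsym u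
    rw [h1, h3, Finset.mul_sum]
    exact Finset.sum_le_sum fun i _ => mul_le_mul_of_nonneg_right (hlamL i) (sq_nonneg _)
  have hB : ∀ u : Fin D → ℝ, μ * (H.mulVec u ⬝ᵥ u) ≤ H.mulVec u ⬝ᵥ H.mulVec u := by
    intro u
    obtain ⟨v, h1, h2, _⟩ := stmt18_diag hsym u
    rw [h1, h2, Finset.mul_sum]
    refine Finset.sum_le_sum fun i _ => ?_
    rcases hlam_mu i with h | h
    · simp [h]
    · calc μ * (hsym.eigenvalues i * v i ^ 2)
          ≤ hsym.eigenvalues i * (hsym.eigenvalues i * v i ^ 2) :=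
            mul_le_mul_of_nonneg_right h (mul_nonneg (hlam0 i) (sq_nonneg _))
        _ = hsym.eigenvalues i ^ 2 * v i ^ 2 := by ring
  have hC : ∀ u : Fin D → ℝ, H.mulVec u ⬝ᵥ H.mulVec u ≤ L * (H.mulVec u ⬝ᵥ u) := by
    intro u
    obtain ⟨v, h1, h2, _⟩ := stmt18_diag hsym u
    rw [h1, h2, Finset.mul_sum]
    refine Finset.sum_le_sum fun i _ => ?_
    calc hsym.eigenvalues i ^ 2 * v i ^ 2
        = hsym.eigenvalues i * (hsym.eigenvalues i * v i ^ 2) := by ring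
      _ ≤ L * (hsym.eigenvalues i * v i ^ 2) :=
          mul_le_mul_of_nonneg_right (hlamL i) (mul_nonneg (hlam0 i) (sq_nonneg _))
  have hdotsq : ∀ w : Fin D → ℝ, w ⬝ᵥ w = ∑ i, w i ^ 2 := by
    intro w; simp [dotProduct, sq]
  have hdotnn : ∀ w : Fin D → ℝ, (0:ℝ) ≤ w ⬝ᵥ w := by
    intro w
    rw [hdotsq]
    exact Finset.sum_nonneg fun i _ => sq_nonneg _
  have hQpos : ∀ u : Fin D → ℝ, H.mulVec u ≠ 0 → 0 < H.mulVec u ⬝ᵥ u := by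
    intro u hu
    rcases lt_or_eq_of_le (hA0 u) with h | h
    · exact h
    · exfalso
      apply hu
      have hthis := hC u
      rw [← h, mul_zero] at hthis
      exact dotProduct_self_eq_zero.mp (le_antisymm hthis (hdotnn _))
  -- norm comparisons
  have n1 : ∀ w : Fin D → ℝ, (∑ i, w i ^ 2) ≤ (∑ i, |w i|) ^ 2 := by
    intro w
    have hS : ∀ i : Fin D, |w i| ≤ ∑ j, |w j| := fun i =>
      Finset.single_le_sum (fun j _ => abs_nonneg (w j)) (Finset.mem_univ i)
    calc (∑ i, w i ^ 2) = ∑ i, |w i| * |w i| := by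
          refine Finset.sum_congr rfl fun i _ => ?_
          rw [sq, ← abs_mul_abs_self]
      _ ≤ ∑ i, |w i| * (∑ j, |w j|) :=
          Finset.sum_le_sum fun i _ => mul_le_mul_of_nonneg_left (hS i) (abs_nonneg _)
      _ = (∑ i, |w i|) ^ 2 := by rw [← Finset.sum_mul, sq]
  have n2 : ∀ w : Fin D → ℝ, (∑ i, |w i|) ^ 2 ≤ D * ∑ i, w i ^ 2 := by
    intro w
    have := sq_sum_le_card_mul_sum_sq (s := (Finset.univ : Finset (Fin D))) (f := fun i => |w i|)
    simpa [sq_abs] using this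
  have n3 : ∀ w : Fin D → ℝ, ‖w‖ ^ 2 ≤ ∑ i, w i ^ 2 := by
    intro w
    have h : ‖w‖ ≤ Real.sqrt (∑ i, w i ^ 2) := by
      rw [pi_norm_le_iff_of_nonneg (Real.sqrt_nonneg _)]
      intro i
      rw [Real.norm_eq_abs, ← Real.sqrt_sq_eq_abs]
      exact Real.sqrt_le_sqrt (Finset.single_le_sum (fun j _ => sq_nonneg (w j))
        (Finset.mem_univ i))
    calc ‖w‖ ^ 2 ≤ Real.sqrt (∑ i, w i ^ 2) ^ 2 := by
          exact pow_le_pow_left₀ (norm_nonneg _) h 2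
      _ = ∑ i, w i ^ 2 := Real.sq_sqrt (Finset.sum_nonneg fun i _ => sq_nonneg _)
  have n4 : ∀ w : Fin D → ℝ, (∑ i, w i ^ 2) ≤ D * ‖w‖ ^ 2 := by
    intro w
    calc (∑ i, w i ^ 2) ≤ ∑ _i : Fin D, ‖w‖ ^ 2 := by
          refine Finset.sum_le_sum fun i _ => ?_
          have hni := norm_le_pi_norm w i
          rw [Real.norm_eq_abs] at hni
          calc w i ^ 2 = |w i| ^ 2 := (sq_abs _).symm
            _ ≤ ‖w‖ ^ 2 := pow_le_pow_left₀ (abs_nonneg _) hni 2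
      _ = D * ‖w‖ ^ 2 := by simp [mul_comm]
  -- eigenvectors
  obtain ⟨wL, hwL0, hwL⟩ := hL.1
  obtain ⟨hμne, wμ, hwμ0, hwμ⟩ := hμ.1
  have hwwL : 0 < wL ⬝ᵥ wL := by
    rcases lt_or_eq_of_le (hdotnn wL) with h | h
    · exact h
    · exact absurd (dotProduct_self_eq_zero.mp h.symm) hwL0
  have hwwμ : 0 < wμ ⬝ᵥ wμ := by
    rcases lt_or_eq_of_le (hdotnn wμ) with h | h
    · exact h
    · exact absurd (dotProduct_self_eq_zero.mp h.symm) hwμ0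
  have hDpos : 0 < (D : ℝ) := by
    rcases Nat.eq_zero_or_pos D with h | h
    · subst h
      exact absurd (funext fun i => i.elim0) hwL0
    · exact_mod_cast h
  -- symmetry fact
  have hsymdot : ∀ x y : Fin D → ℝ, (H *ᵥ x) ⬝ᵥ y = x ⬝ᵥ (H *ᵥ y) := by
    intro x y
    rw [dotProduct_mulVec, ← mulVec_transpose, ← conjTranspose_eq_transpose_of_trivial, hsym]
  -- μ∞ set
  set Sμ := {x : ℝ | ∃ u : Fin D → ℝ, u ≠ 0 ∧
      (∀ v : Fin D → ℝ, H.mulVec v = 0 → u ⬝ᵥ v = 0) ∧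
      x = (∑ i, |H.mulVec u i|) ^ 2 / (H.mulVec u ⬝ᵥ u)} with hSμ
  have horthμ : ∀ v : Fin D → ℝ, H.mulVec v = 0 → wμ ⬝ᵥ v = 0 := by
    intro v hv
    have h1 : (H *ᵥ wμ) ⬝ᵥ v = μ * (wμ ⬝ᵥ v) := by rw [hwμ, smul_dotProduct]; rfl
    have h2 : (H *ᵥ wμ) ⬝ᵥ v = 0 := by rw [hsymdot, hv, dotProduct_zero]
    have := h1.symm.trans h2
    exact (mul_eq_zero.mp this).resolve_left hμne
  have hxμ_mem : ((∑ i, |H.mulVec wμ i|) ^ 2 / (H.mulVec wμ ⬝ᵥ wμ)) ∈ Sμ :=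
    ⟨wμ, hwμ0, horthμ, rfl⟩
  have hSμ_lb : ∀ x ∈ Sμ, μ ≤ x := by
    rintro x ⟨u, hu0, horth, rfl⟩
    have hHune : H.mulVec u ≠ 0 := by
      intro h
      exact hu0 (dotProduct_self_eq_zero.mp (horth u h))
    have hQ := hQpos u hHune
    rw [le_div_iff₀ hQ]
    calc μ * (H.mulVec u ⬝ᵥ u) ≤ H.mulVec u ⬝ᵥ H.mulVec u := hB u
      _ = ∑ i, (H.mulVec u i) ^ 2 := hdotsq _
      _ ≤ (∑ i, |H.mulVec u i|) ^ 2 := n1 _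
  have hSμ_bdd : BddBelow Sμ := ⟨μ, hSμ_lb⟩
  have hμ_le : μ ≤ sInf Sμ := le_csInf ⟨_, hxμ_mem⟩ hSμ_lb
  have hxμ_le : (∑ i, |H.mulVec wμ i|) ^ 2 / (H.mulVec wμ ⬝ᵥ wμ) ≤ D * μ := by
    have hnum : (∑ i, |H.mulVec wμ i|) = μ * ∑ i, |wμ i| := by
      rw [hwμ, Finset.mul_sum]
      refine Finset.sum_congr rfl fun i _ => ?_
      show |μ * wμ i| = μ * |wμ i|
      rw [abs_mul, abs_of_pos hμpos]
    have hden : H.mulVec wμ ⬝ᵥ wμ = μ * (wμ ⬝ᵥ wμ) := by rw [hwμ, smul_dotProduct]; rfl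
    rw [hnum, hden, div_le_iff₀ (by positivity)]
    have hcs := n2 wμ
    rw [← hdotsq] at hcs
    nlinarith [mul_le_mul_of_nonneg_left hcs (mul_pos hμpos hμpos).le, hμpos, hwwμ]
  have hmuinf_le : sInf Sμ ≤ D * μ := le_trans (csInf_le hSμ_bdd hxμ_mem) hxμ_le
  -- L∞ set
  set TL := {x : ℝ | ∃ u : Fin D → ℝ, u ≠ 0 ∧ x = (H.mulVec u ⬝ᵥ u) / ‖u‖ ^ 2} with hTL
  have hTL_ub : ∀ x ∈ TL, x ≤ D * L := by
    rintro x ⟨u, hu0, rfl⟩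
    have hn : 0 < ‖u‖ ^ 2 := pow_pos (norm_pos_iff.mpr hu0) 2
    rw [div_le_iff₀ hn]
    calc H.mulVec u ⬝ᵥ u ≤ L * (u ⬝ᵥ u) := hA u
      _ = L * ∑ i, u i ^ 2 := by rw [hdotsq]
      _ ≤ L * (D * ‖u‖ ^ 2) := by
          exact mul_le_mul_of_nonneg_left (n4 u) (le_of_lt hLpos)
      _ = D * L * ‖u‖ ^ 2 := by ring
  have hTL_bdd : BddAbove TL := ⟨D * L, hTL_ub⟩
  have hxL_mem : ((H.mulVec wL ⬝ᵥ wL) / ‖wL‖ ^ 2) ∈ TL := ⟨wL, hwL0, rfl⟩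
  have hL_le : L ≤ sSup TL := by
    refine le_trans ?_ (le_csSup hTL_bdd hxL_mem)
    have hn : 0 < ‖wL‖ ^ 2 := pow_pos (norm_pos_iff.mpr hwL0) 2
    rw [le_div_iff₀ hn]
    have h1 : H.mulVec wL ⬝ᵥ wL = L * (wL ⬝ᵥ wL) := by rw [hwL, smul_dotProduct]; rfl
    rw [h1, hdotsq]
    exact mul_le_mul_of_nonneg_left (n3 wL) (le_of_lt hLpos)
  have hLinf_le : sSup TL ≤ D * L := csSup_le ⟨_, hxL_mem⟩ hTL_ub
  -- ratios
  have hmpos : 0 < sInf Sμ := lt_of_lt_of_le hμpos hμ_le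
  have hMpos : 0 < sSup TL := lt_of_lt_of_le hLpos hL_le
  refine ⟨hμ_le, hmuinf_le, hL_le, hLinf_le, ?_, ?_⟩
  · rw [div_div]
    exact div_le_div₀ (le_of_lt hMpos) hL_le hmpos (by linarith)
  · rw [← mul_div_assoc]
    exact div_le_div₀ (mul_nonneg hDpos.le hLpos.le) hLinf_le hμpos hμ_le
end
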